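/- arXiv:2307.03816 — 9 statements merged into one kernel-verified Lean document; each statement's English description precedes it below -/
import Mathlib

section
/- Fix γ > 0 and suppose SMdim_γ(H) = d < ∞. Then there exists a prediction strategy A, assigning to every round t ≥ 1, every history ((x_1,y_1,ε_1),…,(x_{t-1},y_{t-1},ε_{t-1})) ∈ (X×Y×[0,c])^{t-1}, and every instance x_t ∈ X a probability measure μ_t ∈ Π(Z), such that for every horizon T ∈ ℕ and every ε_t-realizable stream (x_1,(y_1,ε_1)),…,(x_T,(y_T,ε_T)) — i.e., there exists h* ∈ H with ℓ(y_t, h*(x_t)) ≤ ε_t for all t ∈ {1,…,T} — the number of rounds t ∈ {1,…,T} with E_{z∼μ_t}[ℓ(y_t, z)] ≥ ε_t + γ is at most d, where μ_t is the measure output by A on the history ((x_i,y_i,ε_i))_{i<t} and instance x_t. -/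
open MeasureTheory

/-- `H` γ-shatters an SMdim tree of depth `d` with respect to the loss `ℓ`. -/
def SMShatter {X Y Z : Type*} [MeasurableSpace Z] (H : Set (X → Z)) (ℓ : Y → Z → ℝ)
    (γ : ℝ) (d : ℕ) : Prop :=
  ∃ (Tt : (t : Fin d) → (Fin t.1 → ProbabilityMeasure Z) → X)
    (f : (t : Fin d) → (Fin (t.1 + 1) → ProbabilityMeasure Z) → Y),
    ∀ μ : Fin d → ProbabilityMeasure Z, ∃ h ∈ H, ∀ t : Fin d,
      ℓ (f t fun i => μ (Fin.castLE t.isLt i))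
          (h (Tt t fun i => μ (Fin.castLE t.isLt.le i))) + γ ≤
        ∫ z, ℓ (f t fun i => μ (Fin.castLE t.isLt i)) z ∂(μ t : Measure Z)

/-- The sequential Minimax dimension of `H` at scale `γ`, as an extended natural number. -/
noncomputable def SMdim {X Y Z : Type*} [MeasurableSpace Z] (H : Set (X → Z))
    (ℓ : Y → Z → ℝ) (γ : ℝ) : ℕ∞ :=
  sSup {n : ℕ∞ | ∃ d : ℕ, n = (d : ℕ∞) ∧ SMShatter H ℓ γ d}

section Aux
variable {X Y Z : Type*} [MeasurableSpace Z] {ℓ : Y → Z → ℝ} {γ : ℝ}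

lemma smshatter_mono {G H : Set (X → Z)} (hGH : G ⊆ H) {d : ℕ}
    (h : SMShatter G ℓ γ d) : SMShatter H ℓ γ d := by
  obtain ⟨Tt, f, hs⟩ := h
  exact ⟨Tt, f, fun μ => by obtain ⟨h, hG, hr⟩ := hs μ; exact ⟨h, hGH hG, hr⟩⟩

lemma smshatter_zero {G : Set (X → Z)} (hG : G.Nonempty) : SMShatter G ℓ γ 0 :=
  ⟨fun t => t.elim0, fun t => t.elim0, fun _ => ⟨hG.choose, hG.choose_spec, fun t => t.elim0⟩⟩

noncomputable def SMn (ℓ : Y → Z → ℝ) (γ : ℝ) (G : Set (X → Z)) : ℕ :=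
  sSup {k : ℕ | SMShatter G ℓ γ k}

variable {H : Set (X → Z)} {d : ℕ}

lemma shatter_le_d (hdim : SMdim H ℓ γ = (d : ℕ∞)) {k : ℕ} (hk : SMShatter H ℓ γ k) :
    k ≤ d := by
  have h1 : (k : ℕ∞) ∈ {n : ℕ∞ | ∃ d' : ℕ, n = (d' : ℕ∞) ∧ SMShatter H ℓ γ d'} :=
    ⟨k, rfl, hk⟩
  have h2 := le_sSup h1
  rw [show sSup {n : ℕ∞ | ∃ d' : ℕ, n = (d' : ℕ∞) ∧ SMShatter H ℓ γ d'} = SMdim H ℓ γ from rfl,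
    hdim] at h2
  exact_mod_cast h2

lemma bddAbove_shatter (hdim : SMdim H ℓ γ = (d : ℕ∞)) {G : Set (X → Z)} (hGH : G ⊆ H) :
    BddAbove {k : ℕ | SMShatter G ℓ γ k} :=
  ⟨d, fun k hk => shatter_le_d hdim (smshatter_mono hGH hk)⟩

lemma le_SMn (hdim : SMdim H ℓ γ = (d : ℕ∞)) {G : Set (X → Z)} (hGH : G ⊆ H) {k : ℕ}
    (hk : SMShatter G ℓ γ k) : k ≤ SMn ℓ γ G :=
  le_csSup (bddAbove_shatter hdim hGH) hk

lemma shatter_SMn (hdim : SMdim H ℓ γ = (d : ℕ∞)) {G : Set (X → Z)} (hGH : G ⊆ H)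
    (hG : G.Nonempty) : SMShatter G ℓ γ (SMn ℓ γ G) := by
  have h0 : (0 : ℕ) ∈ {k : ℕ | SMShatter G ℓ γ k} := smshatter_zero hG
  exact Nat.sSup_mem ⟨0, h0⟩ (bddAbove_shatter hdim hGH)

lemma SMn_mono (hdim : SMdim H ℓ γ = (d : ℕ∞)) {G G' : Set (X → Z)} (hGH : G ⊆ H)
    (hG'G : G' ⊆ G) (hG' : G'.Nonempty) : SMn ℓ γ G' ≤ SMn ℓ γ G :=
  le_SMn hdim hGH (smshatter_mono hG'G (shatter_SMn hdim (hG'G.trans hGH) hG'))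

lemma SMn_le_d (hdim : SMdim H ℓ γ = (d : ℕ∞)) {G : Set (X → Z)} (hGH : G ⊆ H)
    (hG : G.Nonempty) : SMn ℓ γ G ≤ d :=
  shatter_le_d hdim (smshatter_mono hGH (shatter_SMn hdim hGH hG))

lemma exists_good (hdim : SMdim H ℓ γ = (d : ℕ∞)) {G : Set (X → Z)} (hGH : G ⊆ H)
    (hG : G.Nonempty) (x : X) :
    ∃ μ : ProbabilityMeasure Z, ∀ (y : Y) (ε : ℝ),
      (∃ h ∈ G, ℓ y (h x) ≤ ε) → (ε + γ ≤ ∫ z, ℓ y z ∂(μ : Measure Z)) →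
      SMn ℓ γ (G ∩ {h | ℓ y (h x) ≤ ε}) < SMn ℓ γ G := by
  by_contra hcon
  push_neg at hcon
  choose y ε hreal hmis hge using hcon
  set k := SMn ℓ γ G with hk
  have hG' : ∀ μ : ProbabilityMeasure Z,
      (G ∩ {h | ℓ (y μ) (h x) ≤ ε μ}).Nonempty := by
    intro μ
    obtain ⟨h, hh, hle⟩ := hreal μ
    exact ⟨h, hh, hle⟩
  have hshat : ∀ μ : ProbabilityMeasure Z,
      SMShatter (G ∩ {h | ℓ (y μ) (h x) ≤ ε μ}) ℓ γ k := by
    intro μ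
    have h1 : SMn ℓ γ (G ∩ {h | ℓ (y μ) (h x) ≤ ε μ}) = k :=
      le_antisymm (SMn_mono hdim hGH Set.inter_subset_left (hG' μ)) (hge μ)
    rw [← h1]
    exact shatter_SMn hdim (Set.inter_subset_left.trans hGH) (hG' μ)
  choose Tt f hsub using hshat
  have hk1 : SMShatter G ℓ γ (k + 1) := by
    refine ⟨fun t => Fin.cases (motive := fun t : Fin (k+1) => (Fin t.1 → ProbabilityMeasure Z) → X)
        (fun _ => x) (fun j ν => Tt (ν ⟨0, by simp⟩) j (fun i => ν i.succ)) t,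
      fun t => Fin.cases (motive := fun t : Fin (k+1) => (Fin (t.1 + 1) → ProbabilityMeasure Z) → Y)
        (fun ν => y (ν 0)) (fun j ν => f (ν ⟨0, by simp⟩) j (fun i => ν i.succ)) t, ?_⟩
    intro μ
    obtain ⟨h, ⟨hhG, hhle⟩, hts⟩ := hsub (μ 0) (Fin.tail μ)
    refine ⟨h, hhG, ?_⟩
    intro t
    induction t using Fin.cases with
    | zero =>
      simp only [Fin.cases_zero]
      have e0 : Fin.castLE (Fin.isLt (0 : Fin (k+1))) (0 : Fin 1) = (0 : Fin (k+1)) := rfl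
      change ℓ (y (μ 0)) (h x) + γ ≤ ∫ z, ℓ (y (μ 0)) z ∂(μ 0 : Measure Z)
      have := hmis (μ 0)
      have hle : ℓ (y (μ 0)) (h x) ≤ ε (μ 0) := hhle
      linarith
    | succ j =>
      simp only [Fin.cases_succ]
      exact hts j
  have := le_SMn hdim hGH hk1
  omega


end Aux

/-- if `SMdim_γ(H) = d < ∞`, there is a prediction strategy that, on every
`ε_t`-realizable stream, has expected loss at least `ε_t + γ` on at most `d` rounds. -/
theorem statement0 {X Y Z : Type*} [MeasurableSpace Z] [Nonempty X] [Nonempty Y]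
    (ℓ : Y → Z → ℝ) (c : ℝ) (hc : 0 < c)
    (hℓ0 : ∀ y z, 0 ≤ ℓ y z) (hℓc : ∀ y z, ℓ y z ≤ c)
    (hmeas : ∀ y, Measurable (ℓ y))
    (H : Set (X → Z)) (hH : H.Nonempty)
    (γ : ℝ) (hγ : 0 < γ) (d : ℕ) (hdim : SMdim H ℓ γ = (d : ℕ∞)) :
    ∃ A : List (X × Y × ℝ) → X → ProbabilityMeasure Z,
      ∀ (T : ℕ) (x : Fin T → X) (y : Fin T → Y) (ε : Fin T → ℝ),
        (∀ t, ε t ∈ Set.Icc 0 c) →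
        (∃ hstar ∈ H, ∀ t, ℓ (y t) (hstar (x t)) ≤ ε t) →
        Nat.card {t : Fin T //
          ε t + γ ≤ ∫ z, ℓ (y t) z
            ∂(A ((List.ofFn fun i : Fin T => (x i, y i, ε i)).take t.1) (x t) : Measure Z)} ≤ d := by
  classical
  obtain ⟨h₀, hh₀⟩ := hH
  have hinh : Nonempty (ProbabilityMeasure Z) :=
    ⟨⟨MeasureTheory.Measure.dirac (h₀ (Classical.arbitrary X)), inferInstance⟩⟩
  set VS : List (X × Y × ℝ) → Set (X → Z) :=
    fun L => {h | h ∈ H ∧ ∀ p ∈ L, ℓ p.2.1 (h p.1) ≤ p.2.2} with hVS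
  set Good : Set (X → Z) → X → ProbabilityMeasure Z → Prop :=
    fun G x μ => ∀ (yy : Y) (εε : ℝ), (∃ h ∈ G, ℓ yy (h x) ≤ εε) →
      (εε + γ ≤ ∫ z, ℓ yy z ∂(μ : Measure Z)) →
      SMn ℓ γ (G ∩ {h | ℓ yy (h x) ≤ εε}) < SMn ℓ γ G with hGood
  set A : List (X × Y × ℝ) → X → ProbabilityMeasure Z :=
    fun L x => if hg : ∃ μ, Good (VS L) x μ then hg.choose else Classical.arbitrary _ with hA
  refine ⟨A, ?_⟩
  rintro T x y ε hεc ⟨hstar, hsH, hsreal⟩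
  set L : List (X × Y × ℝ) := List.ofFn fun i : Fin T => (x i, y i, ε i) with hL
  set G : ℕ → Set (X → Z) := fun t => VS (L.take t) with hG
  -- characterize membership in G t
  have hmemL : ∀ (t : ℕ) (p : X × Y × ℝ), p ∈ L.take t ↔
      ∃ i : Fin T, (i : ℕ) < t ∧ p = (x i, y i, ε i) := by
    intro t p
    rw [List.mem_take_iff_getElem]
    constructor
    · rintro ⟨i, hi, rfl⟩
      have hiT : i < T := by simp [hL] at hi; omega
      exact ⟨⟨i, hiT⟩, by simp [hL] at hi ⊢; omega, by simp [hL]⟩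
    · rintro ⟨i, hit, rfl⟩
      exact ⟨(i : ℕ), by simp [hL]; omega, by simp [hL]⟩
  have hGmem : ∀ (t : ℕ) (h : X → Z), h ∈ G t ↔
      h ∈ H ∧ ∀ i : Fin T, (i : ℕ) < t → ℓ (y i) (h (x i)) ≤ ε i := by
    intro t h
    simp only [hG, hVS, Set.mem_setOf_eq]
    constructor
    · rintro ⟨hh, hall⟩
      exact ⟨hh, fun i hi => hall _ ((hmemL t _).2 ⟨i, hi, rfl⟩)⟩
    · rintro ⟨hh, hall⟩
      refine ⟨hh, fun p hp => ?_⟩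
      obtain ⟨i, hi, rfl⟩ := (hmemL t p).1 hp
      exact hall i hi
  have hstarG : ∀ t : ℕ, hstar ∈ G t := fun t =>
    (hGmem t hstar).2 ⟨hsH, fun i _ => hsreal i⟩
  have hGne : ∀ t, (G t).Nonempty := fun t => ⟨hstar, hstarG t⟩
  have hGH : ∀ t, G t ⊆ H := fun t h hh => ((hGmem t h).1 hh).1
  have hGsub : ∀ t, G (t + 1) ⊆ G t := by
    intro t h hh
    rw [hGmem] at hh ⊢
    exact ⟨hh.1, fun i hi => hh.2 i (by omega)⟩
  -- the successor version space at a round t < T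
  have hGsucc : ∀ t : Fin T, G ((t : ℕ) + 1) =
      G t ∩ {h | ℓ (y t) (h (x t)) ≤ ε t} := by
    intro t
    ext h
    simp only [Set.mem_inter_iff, hGmem, Set.mem_setOf_eq]
    constructor
    · rintro ⟨hh, hall⟩
      exact ⟨⟨hh, fun i hi => hall i (by omega)⟩, hall t (by omega)⟩
    · rintro ⟨⟨hh, hall⟩, hlast⟩
      refine ⟨hh, fun i hi => ?_⟩
      rcases Nat.lt_or_ge (i : ℕ) (t : ℕ) with h' | h'
      · exact hall i h'
      · have : i = t := Fin.ext (by omega)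
        rw [this]; exact hlast
  -- mistake predicate
  set M : Fin T → Prop := fun t =>
    ε t + γ ≤ ∫ z, ℓ (y t) z ∂(A (L.take (t : ℕ)) (x t) : Measure Z) with hM
  -- the strategy is good at each round
  have hAgood : ∀ t : Fin T, Good (G (t : ℕ)) (x t) (A (L.take (t : ℕ)) (x t)) := by
    intro t
    have hex : ∃ μ, Good (VS (L.take (t : ℕ))) (x t) μ :=
      exists_good hdim (hGH t) (hGne t) (x t)
    have : A (L.take (t : ℕ)) (x t) = hex.choose := by
      simp only [hA]; rw [dif_pos hex]
    rw [this]
    exact hex.choose_spec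
  have hstep : ∀ t : Fin T, M t → SMn ℓ γ (G ((t : ℕ) + 1)) < SMn ℓ γ (G (t : ℕ)) := by
    intro t hm
    have := hAgood t (y t) (ε t) ⟨hstar, hstarG t, hsreal t⟩ hm
    rwa [hGsucc t]
  have hmono : ∀ t : ℕ, SMn ℓ γ (G (t + 1)) ≤ SMn ℓ γ (G t) := fun t =>
    SMn_mono hdim (hGH t) (hGsub t) (hGne (t + 1))
  -- counting
  have key : ∀ t : ℕ, t ≤ T →
      (Finset.univ.filter (fun i : Fin T => (i : ℕ) < t ∧ M i)).card + SMn ℓ γ (G t)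
        ≤ SMn ℓ γ (G 0) := by
    intro t
    induction t with
    | zero => simp
    | succ t ih =>
      intro ht
      have ht' : t < T := ht
      have hsplit : (Finset.univ.filter (fun i : Fin T => (i : ℕ) < t + 1 ∧ M i)) =
          (Finset.univ.filter (fun i : Fin T => (i : ℕ) < t ∧ M i)) ∪
            (Finset.univ.filter (fun i : Fin T => (i : ℕ) = t ∧ M i)) := by
        ext i
        simp only [Finset.mem_filter, Finset.mem_union, Finset.mem_univ, true_and]
        by_cases hmi : M i
        · simp only [hmi, and_true]; omega
        · simp [hmi]
      have hdisj : Disjoint (Finset.univ.filter (fun i : Fin T => (i : ℕ) < t ∧ M i))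
          (Finset.univ.filter (fun i : Fin T => (i : ℕ) = t ∧ M i)) := by
        rw [Finset.disjoint_filter]
        rintro i - ⟨hi, -⟩ ⟨hi', -⟩
        omega
      have h2 : (Finset.univ.filter (fun i : Fin T => (i : ℕ) = t ∧ M i)) =
          if M ⟨t, ht'⟩ then {(⟨t, ht'⟩ : Fin T)} else ∅ := by
        split_ifs with hm
        · ext i
          simp only [Finset.mem_filter, Finset.mem_univ, true_and, Finset.mem_singleton]
          constructor
          · rintro ⟨hit, -⟩; exact Fin.ext hit
          · rintro rfl; exact ⟨rfl, hm⟩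
        · ext i
          simp only [Finset.mem_filter, Finset.mem_univ, true_and,
            Finset.notMem_empty, iff_false, not_and]
          intro hit hmi
          exact hm (by have hit' : i = ⟨t, ht'⟩ := Fin.ext hit; rwa [hit'] at hmi)
      have hcard : (Finset.univ.filter (fun i : Fin T => (i : ℕ) < t + 1 ∧ M i)).card ≤
          (Finset.univ.filter (fun i : Fin T => (i : ℕ) < t ∧ M i)).card +
            (if M ⟨t, ht'⟩ then 1 else 0) := by
        rw [hsplit]
        refine le_trans (Finset.card_union_le _ _) ?_
        rw [h2]
        split_ifs <;> simp
      have iht := ih (by omega)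
      by_cases hm : M ⟨t, ht'⟩
      · have hs : SMn ℓ γ (G (t + 1)) < SMn ℓ γ (G t) := hstep ⟨t, ht'⟩ hm
        simp only [hm, if_true] at hcard
        omega
      · have hmn := hmono t
        simp only [hm, if_false] at hcard
        omega
  have hfin : Nat.card (Subtype M) = (Finset.univ.filter M).card := by
    simp [Nat.card_eq_fintype_card, Fintype.card_subtype]
  have hfilt : Finset.univ.filter (fun i : Fin T => (i : ℕ) < T ∧ M i) =
      Finset.univ.filter M := by
    ext i
    simp [i.isLt]
  have hkey := key T le_rfl
  rw [hfilt] at hkey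
  have hd0 : SMn ℓ γ (G 0) ≤ d := SMn_le_d hdim (hGH 0) (hGne 0)
  rw [hfin]
  omega
end

section
/- Fix γ > 0, suppose SMdim_γ(H) = d < ∞, assume c ≥ 1/2, and fix a horizon T ≥ 1. Then there exists an online learner A such that for every stream (x_1,y_1),…,(x_T,y_T) ∈ (X×Y)^T, the expected regret of A on the stream is at most c·d + γ·T + 1 + 2c·√(d·T·ln(2cT)). -/
open MeasureTheory

/-- The expected regret of the online learner `A` on the stream `s` of length `T`:
the sum of the expected losses of the measures output by `A` (on the corresponding
histories) minus the cumulative loss of the best hypothesis in `H`. -/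
noncomputable def expectedRegret {X Y Z : Type*} [MeasurableSpace Z] (H : Set (X → Z))
    (ℓ : Y → Z → ℝ) (A : List (X × Y) → X → ProbabilityMeasure Z)
    {T : ℕ} (s : Fin T → X × Y) : ℝ :=
  (∑ t : Fin T, ∫ z, ℓ (s t).2 z ∂(A ((List.ofFn s).take t.1) (s t).1 : Measure Z)) -
    ⨅ h : H, ∑ t : Fin T, ℓ (s t).2 ((h : X → Z) (s t).1)

namespace SM2

variable {X Y Z : Type*} [MeasurableSpace Z]

/-- A default probability measure. -/
noncomputable def nu0 (Z : Type*) [MeasurableSpace Z] [Nonempty Z] : ProbabilityMeasure Z :=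
  ⟨Measure.dirac (Classical.arbitrary Z), inferInstance⟩

/-- The subclass of hypotheses witnessing a γ-gap at `(x, μ, y)`. -/
def Gset (ℓ : Y → Z → ℝ) (γ : ℝ) (G : Set (X → Z)) (x : X) (μ : ProbabilityMeasure Z)
    (y : Y) : Set (X → Z) :=
  {h | h ∈ G ∧ ℓ y (h x) + γ ≤ ∫ z, ℓ y z ∂(μ : Measure Z)}

lemma nonempty_of_shatter [Nonempty Z] {H : Set (X → Z)} {ℓ : Y → Z → ℝ} {γ : ℝ} {n : ℕ}
    (h : SMShatter H ℓ γ n) : H.Nonempty := by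
  obtain ⟨Tt, f, hf⟩ := h
  obtain ⟨h, hh, -⟩ := hf (fun _ => nu0 Z)
  exact ⟨h, hh⟩

lemma not_shatter_empty [Nonempty Z] {ℓ : Y → Z → ℝ} {γ : ℝ} {n : ℕ} :
    ¬ SMShatter (∅ : Set (X → Z)) ℓ γ n := fun h => by
  simpa using nonempty_of_shatter h

/-- Gluing a root to subtrees. -/
lemma glue {ℓ : Y → Z → ℝ} {γ : ℝ} {G : Set (X → Z)} {k : ℕ} (x : X)
    (hy : ∀ μ₀ : ProbabilityMeasure Z, ∃ y, SMShatter (Gset ℓ γ G x μ₀ y) ℓ γ k) :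
    SMShatter G ℓ γ (k + 1) := by
  choose ylab hsh using hy
  choose Ts fs hTf using hsh
  refine ⟨fun t => match t with
      | ⟨0, _⟩ => fun _ => x
      | ⟨i+1, hi⟩ => fun ν => Ts (ν ⟨0, Nat.succ_pos _⟩) ⟨i, Nat.lt_of_succ_lt_succ hi⟩
          (fun j => ν j.succ),
    fun t => match t with
      | ⟨0, _⟩ => fun ν => ylab (ν ⟨0, Nat.one_pos⟩)
      | ⟨i+1, hi⟩ => fun ν => fs (ν ⟨0, Nat.succ_pos _⟩) ⟨i, Nat.lt_of_succ_lt_succ hi⟩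
          (fun j => ν j.succ),
    ?_⟩
  intro μ
  obtain ⟨h, hmem, hcond⟩ := hTf (μ ⟨0, Nat.succ_pos k⟩) (fun j => μ j.succ)
  refine ⟨h, hmem.1, ?_⟩
  rintro ⟨_ | i, hi⟩
  · exact hmem.2
  · exact hcond ⟨i, Nat.lt_of_succ_lt_succ hi⟩

lemma safe_total [Nonempty Z] (ℓ : Y → Z → ℝ) (γ : ℝ) (G : Set (X → Z)) (k : ℕ) (x : X) :
    ∃ μ : ProbabilityMeasure Z, ¬ SMShatter G ℓ γ (k + 1) →
      ∀ y, ¬ SMShatter (Gset ℓ γ G x μ y) ℓ γ k := by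
  by_contra hcon
  push_neg at hcon
  exact (hcon (nu0 Z)).1 (glue x fun μ₀ => (hcon μ₀).2)

/-- The "safe" measure selected for a class `G` with budget `k` at instance `x`. -/
noncomputable def musel [Nonempty Z] (ℓ : Y → Z → ℝ) (γ : ℝ) (G : Set (X → Z)) (k : ℕ)
    (x : X) : ProbabilityMeasure Z := (safe_total ℓ γ G k x).choose

lemma musel_spec [Nonempty Z] {ℓ : Y → Z → ℝ} {γ : ℝ} {G : Set (X → Z)} {k : ℕ} (x : X)
    (hG : ¬ SMShatter G ℓ γ (k + 1)) (y : Y) :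
    ¬ SMShatter (Gset ℓ γ G x (musel ℓ γ G k x) y) ℓ γ k :=
  (safe_total ℓ γ G k x).choose_spec hG y

section Experts

variable [Nonempty Z] (ℓ : Y → Z → ℝ) (γ : ℝ) (H : Set (X → Z)) (d : ℕ)

open Classical in
/-- One step of an expert's state evolution: state is ((version space, budget), round index). -/
noncomputable def estep (S : Set ℕ) (st : (Set (X → Z) × ℕ) × ℕ) (p : X × Y) :
    (Set (X → Z) × ℕ) × ℕ :=
  (if st.2 ∈ S then
      (Gset ℓ γ st.1.1 p.1 (musel ℓ γ st.1.1 st.1.2 p.1) p.2, st.1.2 - 1)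
    else st.1, st.2 + 1)

/-- The expert state after processing history `l`. -/
noncomputable def Est (S : Set ℕ) (l : List (X × Y)) : (Set (X → Z) × ℕ) × ℕ :=
  l.foldl (estep ℓ γ S) ((H, d), 0)

lemma Est_append (S : Set ℕ) (l : List (X × Y)) (p : X × Y) :
    Est ℓ γ H d S (l ++ [p]) = estep ℓ γ S (Est ℓ γ H d S l) p := by
  simp [Est, List.foldl_append]

/-- The prediction of expert `S` on history `l` and instance `x`. -/
noncomputable def epred (S : Set ℕ) (l : List (X × Y)) (x : X) : ProbabilityMeasure Z :=
  musel ℓ γ (Est ℓ γ H d S l).1.1 (Est ℓ γ H d S l).1.2 x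

/-- One step of cumulative-loss bookkeeping. -/
noncomputable def cstep (S : Set ℕ) (st : ℝ × List (X × Y)) (p : X × Y) : ℝ × List (X × Y) :=
  (st.1 + ∫ z, ℓ p.2 z ∂(epred ℓ γ H d S st.2 p.1 : Measure Z), st.2 ++ [p])

/-- The cumulative loss of expert `S` along history `l`. -/
noncomputable def cumLoss (S : Set ℕ) (l : List (X × Y)) : ℝ :=
  (l.foldl (cstep ℓ γ H d S) (0, [])).1

lemma cstep_snd (S : Set ℕ) (l : List (X × Y)) (r : ℝ) (m : List (X × Y)) :
    (l.foldl (cstep ℓ γ H d S) (r, m)).2 = m ++ l := by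
  induction l generalizing r m with
  | nil => simp
  | cons p l ih => simp [cstep, ih]

lemma cumLoss_append (S : Set ℕ) (l : List (X × Y)) (p : X × Y) :
    cumLoss ℓ γ H d S (l ++ [p]) =
      cumLoss ℓ γ H d S l + ∫ z, ℓ p.2 z ∂(epred ℓ γ H d S l p.1 : Measure Z) := by
  simp only [cumLoss, List.foldl_append]
  have h2 := cstep_snd ℓ γ H d S l 0 []
  simp only [List.nil_append] at h2
  simp [cstep, h2]

end Experts

/-- The index set membership of an expert code `u`. -/
def Su {d T : ℕ} (u : Fin d → Fin (T + 1)) : Set ℕ := {m | ∃ i, (u i).1 = m}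

section Mix

variable [Nonempty Z] (ℓ : Y → Z → ℝ) (γ : ℝ) (H : Set (X → Z)) (d T : ℕ) (η : ℝ)

/-- Exponential weight of expert `u` on history `l`. -/
noncomputable def wexp (u : Fin d → Fin (T + 1)) (l : List (X × Y)) : ℝ :=
  Real.exp (-η * cumLoss ℓ γ H d (Su u) l)

lemma wexp_pos (u : Fin d → Fin (T + 1)) (l : List (X × Y)) : 0 < wexp ℓ γ H d T η u l :=
  Real.exp_pos _

lemma wsum_pos (l : List (X × Y)) : 0 < ∑ v : Fin d → Fin (T + 1), wexp ℓ γ H d T η v l :=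
  Finset.sum_pos (fun v _ => wexp_pos ℓ γ H d T η v l) Finset.univ_nonempty

/-- The exponential-weights mixture learner. -/
noncomputable def Amix (l : List (X × Y)) (x : X) : ProbabilityMeasure Z := by
  refine ⟨∑ u : Fin d → Fin (T + 1),
    ENNReal.ofReal (wexp ℓ γ H d T η u l / ∑ v, wexp ℓ γ H d T η v l) •
      (epred ℓ γ H d (Su u) l x : Measure Z), ?_⟩
  constructor
  simp only [Measure.coe_finset_sum, Finset.sum_apply, Measure.smul_apply, smul_eq_mul,
    measure_univ, mul_one]
  rw [← ENNReal.ofReal_sum_of_nonneg (fun u _ => div_nonneg (wexp_pos ℓ γ H d T η u l).le (wsum_pos ℓ γ H d T η l).le), ← Finset.sum_div,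
    div_self (wsum_pos ℓ γ H d T η l).ne']
  simp

lemma integral_Amix (l : List (X × Y)) (x : X) (y : Y)
    (hmeas : Measurable (ℓ y)) (c : ℝ) (h0 : ∀ z, 0 ≤ ℓ y z) (h1 : ∀ z, ℓ y z ≤ c) :
    ∫ z, ℓ y z ∂(Amix ℓ γ H d T η l x : Measure Z) =
      ∑ u : Fin d → Fin (T + 1),
        (wexp ℓ γ H d T η u l / ∑ v, wexp ℓ γ H d T η v l) *
          ∫ z, ℓ y z ∂(epred ℓ γ H d (Su u) l x : Measure Z) := by
  have hint : ∀ μ : ProbabilityMeasure Z, Integrable (ℓ y) (μ : Measure Z) := fun μ =>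
    (integrable_const c).mono' (hmeas).aestronglyMeasurable
      (Filter.Eventually.of_forall fun z => by
        rw [Real.norm_eq_abs, abs_of_nonneg (h0 z)]; exact h1 z)
  have : (Amix ℓ γ H d T η l x : Measure Z) = ∑ u : Fin d → Fin (T + 1),
      ENNReal.ofReal (wexp ℓ γ H d T η u l / ∑ v, wexp ℓ γ H d T η v l) •
        (epred ℓ γ H d (Su u) l x : Measure Z) := rfl
  rw [this, integral_finset_sum_measure (fun u _ => ((hint _).smul_measure ENNReal.ofReal_ne_top))]
  refine Finset.sum_congr rfl fun u _ => ?_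
  rw [integral_smul_measure, ENNReal.toReal_ofReal
    (div_nonneg (wexp_pos ℓ γ H d T η u l).le (wsum_pos ℓ γ H d T η l).le), smul_eq_mul]

end Mix

/-- Quadratic upper bound for `exp(-x)`, `x ≥ 0`. -/
lemma exp_neg_le_quadratic {x : ℝ} (hx : 0 ≤ x) : Real.exp (-x) ≤ 1 - x + x ^ 2 / 2 := by
  have h1 : 1 + x + x ^ 2 / 2 ≤ Real.exp x := Real.quadratic_le_exp_of_nonneg hx
  have h2 : (0:ℝ) < 1 + x + x ^ 2 / 2 := by nlinarith
  rw [Real.exp_neg]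
  have h3 : (Real.exp x)⁻¹ ≤ (1 + x + x ^ 2 / 2)⁻¹ := inv_anti₀ h2 h1
  refine h3.trans ?_
  rw [inv_le_iff_one_le_mul₀' h2]
  nlinarith

/-- The Hedge (exponential weights) regret bound. -/
lemma hedge {ι : Type*} [Fintype ι] [Nonempty ι] (L : ℕ → ι → ℝ) (c η : ℝ)
    (hc : 0 ≤ c) (hη : 0 < η) (hL0 : ∀ t i, 0 ≤ L t i) (hLc : ∀ t i, L t i ≤ c)
    (T : ℕ) (istar : ι) :
    ∑ t ∈ Finset.range T, (∑ i, (Real.exp (-η * ∑ j ∈ Finset.range t, L j i) /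
        ∑ i', Real.exp (-η * ∑ j ∈ Finset.range t, L j i')) * L t i) ≤
      (∑ j ∈ Finset.range T, L j istar) + Real.log (Fintype.card ι) / η +
        η * c ^ 2 * T / 2 := by
  set C : ℕ → ι → ℝ := fun t i => ∑ j ∈ Finset.range t, L j i with hC
  set W : ℕ → ℝ := fun t => ∑ i, Real.exp (-η * C t i) with hW
  set q : ℕ → ℝ := fun t => ∑ i, (Real.exp (-η * C t i) / W t) * L t i with hq
  have hWpos : ∀ t, 0 < W t :=
    fun t => Finset.sum_pos (fun i _ => Real.exp_pos _) Finset.univ_nonempty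
  have hkey : ∀ t, W (t + 1) ≤ W t * Real.exp (-η * q t + η ^ 2 * c ^ 2 / 2) := by
    intro t
    have hsum : ∑ i, Real.exp (-η * C t i) * L t i = W t * q t := by
      rw [hq, Finset.mul_sum]
      refine Finset.sum_congr rfl fun i _ => ?_
      rw [div_mul_eq_mul_div, mul_comm (W t), div_mul_cancel₀ _ (hWpos t).ne']
    have h1 : W (t + 1) ≤ ∑ i, Real.exp (-η * C t i) * (1 - η * L t i + η ^ 2 * c ^ 2 / 2) := by
      refine Finset.sum_le_sum fun i _ => ?_
      have hCt : C (t + 1) i = C t i + L t i := Finset.sum_range_succ _ _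
      rw [hCt, mul_add, Real.exp_add]
      refine mul_le_mul_of_nonneg_left ?_ (Real.exp_pos _).le
      have h2 : Real.exp (-(η * L t i)) ≤ 1 - η * L t i + (η * L t i) ^ 2 / 2 :=
        exp_neg_le_quadratic (mul_nonneg hη.le (hL0 t i))
      have h3 : (η * L t i) ^ 2 ≤ η ^ 2 * c ^ 2 := by
        have h3a : L t i ^ 2 ≤ c ^ 2 := pow_le_pow_left₀ (hL0 t i) (hLc t i) 2
        nlinarith [sq_nonneg η]
      calc Real.exp (-η * L t i) = Real.exp (-(η * L t i)) := by ring_nf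
        _ ≤ 1 - η * L t i + (η * L t i) ^ 2 / 2 := h2
        _ ≤ 1 - η * L t i + η ^ 2 * c ^ 2 / 2 := by linarith
    have h4 : ∑ i, Real.exp (-η * C t i) * (1 - η * L t i + η ^ 2 * c ^ 2 / 2) =
        W t * (1 - η * q t + η ^ 2 * c ^ 2 / 2) := by
      have : ∀ i : ι, Real.exp (-η * C t i) * (1 - η * L t i + η ^ 2 * c ^ 2 / 2) =
          Real.exp (-η * C t i) * (1 + η ^ 2 * c ^ 2 / 2) -
            η * (Real.exp (-η * C t i) * L t i) := by intro i; ring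
      simp only [this, Finset.sum_sub_distrib, ← Finset.sum_mul, ← Finset.mul_sum, hsum]
      ring
    have h5 : 1 + (-η * q t + η ^ 2 * c ^ 2 / 2) ≤ Real.exp (-η * q t + η ^ 2 * c ^ 2 / 2) := by
      linarith [Real.add_one_le_exp (-η * q t + η ^ 2 * c ^ 2 / 2)]
    calc W (t + 1) ≤ W t * (1 - η * q t + η ^ 2 * c ^ 2 / 2) := h1.trans_eq h4
      _ ≤ W t * Real.exp (-η * q t + η ^ 2 * c ^ 2 / 2) := by
          refine mul_le_mul_of_nonneg_left ?_ (hWpos t).le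
          calc (1 : ℝ) - η * q t + η ^ 2 * c ^ 2 / 2
              = 1 + (-η * q t + η ^ 2 * c ^ 2 / 2) := by ring
            _ ≤ _ := h5
  have hWT : ∀ t, W t ≤ W 0 * Real.exp (∑ j ∈ Finset.range t,
      (-η * q j + η ^ 2 * c ^ 2 / 2)) := by
    intro t
    induction t with
    | zero => simp
    | succ t ih =>
        calc W (t + 1) ≤ W t * Real.exp (-η * q t + η ^ 2 * c ^ 2 / 2) := hkey t
          _ ≤ (W 0 * Real.exp (∑ j ∈ Finset.range t, (-η * q j + η ^ 2 * c ^ 2 / 2))) *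
              Real.exp (-η * q t + η ^ 2 * c ^ 2 / 2) :=
            mul_le_mul_of_nonneg_right ih (Real.exp_pos _).le
          _ = W 0 * Real.exp (∑ j ∈ Finset.range (t + 1),
              (-η * q j + η ^ 2 * c ^ 2 / 2)) := by
            rw [Finset.sum_range_succ,
              Real.exp_add (∑ j ∈ Finset.range t, (-η * q j + η ^ 2 * c ^ 2 / 2)), mul_assoc]
  have hsingle : Real.exp (-η * C T istar) ≤ W T :=
    Finset.single_le_sum (f := fun i => Real.exp (-η * C T i))
      (fun i _ => (Real.exp_pos _).le) (Finset.mem_univ istar)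
  have hW0 : W 0 = Fintype.card ι := by
    simp [hW, hC, Finset.card_univ]
  have hlog : -η * C T istar ≤ Real.log (Fintype.card ι) +
      (∑ j ∈ Finset.range T, (-η * q j + η ^ 2 * c ^ 2 / 2)) := by
    have h6 : Real.exp (-η * C T istar) ≤
        W 0 * Real.exp (∑ j ∈ Finset.range T, (-η * q j + η ^ 2 * c ^ 2 / 2)) :=
      hsingle.trans (hWT T)
    have h7 := Real.log_le_log (Real.exp_pos _) h6
    rw [Real.log_exp, Real.log_mul (hWpos 0).ne' (Real.exp_pos _).ne', Real.log_exp,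
      hW0] at h7
    exact h7
  have hsum2 : ∑ j ∈ Finset.range T, (-η * q j + η ^ 2 * c ^ 2 / 2) =
      -η * (∑ j ∈ Finset.range T, q j) + η ^ 2 * c ^ 2 / 2 * T := by
    rw [Finset.sum_add_distrib, ← Finset.mul_sum]
    simp [mul_comm]
  rw [hsum2] at hlog
  have hgoal : ∑ t ∈ Finset.range T, q t ≤
      C T istar + Real.log (Fintype.card ι) / η + η * c ^ 2 * T / 2 := by
    have h8 : η * (∑ t ∈ Finset.range T, q t) ≤
        η * C T istar + Real.log (Fintype.card ι) + η ^ 2 * c ^ 2 / 2 * T := by linarith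
    rw [← mul_le_mul_iff_right₀ hη]
    have heq : η * (C T istar + Real.log (Fintype.card ι) / η + η * c ^ 2 * T / 2) =
        η * C T istar + Real.log (Fintype.card ι) + η ^ 2 * c ^ 2 / 2 * T := by
      field_simp
    rw [heq]
    exact h8
  exact hgoal

lemma shatter_zero {G : Set (X → Z)} {ℓ : Y → Z → ℝ} {γ : ℝ} (hG : G.Nonempty) :
    SMShatter G ℓ γ 0 :=
  ⟨fun t => t.elim0, fun t => t.elim0, fun _ => ⟨hG.choose, hG.choose_spec, fun t => t.elim0⟩⟩

lemma not_shatter_of_not_zero [Nonempty Z] {G : Set (X → Z)} {ℓ : Y → Z → ℝ} {γ : ℝ}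
    (hG : ¬ SMShatter G ℓ γ 0) (n : ℕ) : ¬ SMShatter G ℓ γ n := fun h =>
  hG (shatter_zero (nonempty_of_shatter h))

lemma integrable_loss {Z : Type*} [MeasurableSpace Z] {f : Z → ℝ} {c : ℝ} (μ : Measure Z)
    [IsFiniteMeasure μ] (hm : Measurable f) (h0 : ∀ z, 0 ≤ f z) (h1 : ∀ z, f z ≤ c) :
    Integrable f μ :=
  (integrable_const c).mono' hm.aestronglyMeasurable
    (Filter.Eventually.of_forall fun z => by
      rw [Real.norm_eq_abs, abs_of_nonneg (h0 z)]; exact h1 z)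

lemma integral_loss_le {Z : Type*} [MeasurableSpace Z] {f : Z → ℝ} {c : ℝ} (μ : Measure Z)
    [IsProbabilityMeasure μ] (hm : Measurable f) (h0 : ∀ z, 0 ≤ f z) (h1 : ∀ z, f z ≤ c) :
    ∫ z, f z ∂μ ≤ c := by
  calc ∫ z, f z ∂μ ≤ ∫ _z, c ∂μ :=
        integral_mono (integrable_loss μ hm h0 h1) (integrable_const c) h1
    _ = c := by simp

lemma regret_le_of_forall {X Y Z : Type*} [MeasurableSpace Z] {H : Set (X → Z)}
    (hH : H.Nonempty) (ℓ : Y → Z → ℝ) (A : List (X × Y) → X → ProbabilityMeasure Z)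
    {T : ℕ} (s : Fin T → X × Y) (B : ℝ)
    (hb : ∀ h ∈ H, (∑ t : Fin T,
        ∫ z, ℓ (s t).2 z ∂(A ((List.ofFn s).take t.1) (s t).1 : Measure Z)) ≤
          (∑ t : Fin T, ℓ (s t).2 (h (s t).1)) + B) :
    expectedRegret H ℓ A s ≤ B := by
  have : Nonempty H := hH.to_subtype
  have h2 : (∑ t : Fin T,
      ∫ z, ℓ (s t).2 z ∂(A ((List.ofFn s).take t.1) (s t).1 : Measure Z)) - B ≤
        ⨅ h : H, ∑ t : Fin T, ℓ (s t).2 ((h : X → Z) (s t).1) :=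
    le_ciInf fun h => by linarith [hb h h.2]
  unfold expectedRegret
  linarith

end SM2

set_option maxHeartbeats 2000000 in
/-- agnostic upper bound. If `SMdim_γ(H) = d < ∞`, `c ≥ 1/2`, and `T ≥ 1`,
there is an online learner whose expected regret on every stream of length `T` is at most
`c·d + γ·T + 1 + 2c·√(d·T·ln(2cT))`. -/
theorem statement2 {X Y Z : Type*} [MeasurableSpace Z] [Nonempty X] [Nonempty Y]
    (ℓ : Y → Z → ℝ) (c : ℝ) (hc : 0 < c) (hc' : (1 : ℝ) / 2 ≤ c)
    (hℓ0 : ∀ y z, 0 ≤ ℓ y z) (hℓc : ∀ y z, ℓ y z ≤ c)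
    (hmeas : ∀ y, Measurable (ℓ y))
    (H : Set (X → Z)) (hH : H.Nonempty)
    (γ : ℝ) (hγ : 0 < γ) (d : ℕ) (hdim : SMdim H ℓ γ = (d : ℕ∞))
    (T : ℕ) (hT : 1 ≤ T) :
    ∃ A : List (X × Y) → X → ProbabilityMeasure Z,
      ∀ s : Fin T → X × Y,
        expectedRegret H ℓ A s ≤
          c * d + γ * T + 1 + 2 * c * Real.sqrt (d * T * Real.log (2 * c * T)) := by
  classical
  obtain ⟨h₀, hh₀⟩ := hH
  have hZ : Nonempty Z := ⟨h₀ (Classical.arbitrary X)⟩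
  set B : ℝ := c * d + γ * T + 1 + 2 * c * Real.sqrt (d * T * Real.log (2 * c * T)) with hB
  have hsqrt0 : 0 ≤ Real.sqrt (d * T * Real.log (2 * c * T)) := Real.sqrt_nonneg _
  have hPd1 : ¬ SMShatter H ℓ γ (d + 1) := by
    intro hsh
    have hmem : ((d + 1 : ℕ) : ℕ∞) ∈ {n : ℕ∞ | ∃ d' : ℕ, n = (d' : ℕ∞) ∧ SMShatter H ℓ γ d'} :=
      ⟨d + 1, rfl, hsh⟩
    have hle : ((d + 1 : ℕ) : ℕ∞) ≤ SMdim H ℓ γ := le_sSup hmem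
    rw [hdim] at hle
    have : d + 1 ≤ d := by exact_mod_cast hle
    omega
  have hIle : ∀ (y : Y) (μ : ProbabilityMeasure Z), ∫ z, ℓ y z ∂(μ : Measure Z) ≤ c :=
    fun y μ => SM2.integral_loss_le _ (hmeas y) (hℓ0 y) (hℓc y)
  have hI0 : ∀ (y : Y) (μ : ProbabilityMeasure Z), 0 ≤ ∫ z, ℓ y z ∂(μ : Measure Z) :=
    fun y μ => integral_nonneg (hℓ0 y)
  by_cases hTd : T ≤ d
  · -- trivial case: play a fixed measure
    refine ⟨fun _ _ => SM2.nu0 Z, fun s => ?_⟩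
    refine SM2.regret_le_of_forall ⟨h₀, hh₀⟩ ℓ _ s B fun h hh => ?_
    have h1 : (∑ t : Fin T, ∫ z, ℓ (s t).2 z ∂((SM2.nu0 Z : ProbabilityMeasure Z) : Measure Z))
        ≤ c * T := by
      calc (∑ t : Fin T, ∫ z, ℓ (s t).2 z ∂((SM2.nu0 Z : ProbabilityMeasure Z) : Measure Z))
          ≤ ∑ _t : Fin T, c := Finset.sum_le_sum fun t _ => hIle _ _
        _ = c * T := by simp [mul_comm]
    have h2 : (0:ℝ) ≤ ∑ t : Fin T, ℓ (s t).2 (h (s t).1) :=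
      Finset.sum_nonneg fun t _ => hℓ0 _ _
    have h3 : c * T ≤ c * d := by
      have : (T : ℝ) ≤ d := by exact_mod_cast hTd
      nlinarith
    have h4 : 0 < γ * T := by positivity
    simp only [hB]
    nlinarith
  · by_cases hd0 : d = 0
    · -- depth-zero case: always play the safe measure
      subst hd0
      refine ⟨fun _ x => SM2.musel ℓ γ H 0 x, fun s => ?_⟩
      refine SM2.regret_le_of_forall ⟨h₀, hh₀⟩ ℓ _ s B fun h hh => ?_
      have hpt : ∀ t : Fin T, ∫ z, ℓ (s t).2 z ∂(SM2.musel ℓ γ H 0 (s t).1 : Measure Z) ≤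
          ℓ (s t).2 (h (s t).1) + γ := by
        intro t
        by_contra hcon
        push_neg at hcon
        have hw : ℓ (s t).2 (h (s t).1) + γ ≤
            ∫ z, ℓ (s t).2 z ∂(SM2.musel ℓ γ H 0 (s t).1 : Measure Z) := hcon.le
        have hns := SM2.musel_spec (ℓ := ℓ) (γ := γ) (G := H) (k := 0) (s t).1 hPd1 (s t).2
        exact hns (SM2.shatter_zero ⟨h, hh, hw⟩)
      have h1 : (∑ t : Fin T, ∫ z, ℓ (s t).2 z ∂(SM2.musel ℓ γ H 0 (s t).1 : Measure Z)) ≤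
          (∑ t : Fin T, ℓ (s t).2 (h (s t).1)) + γ * T := by
        calc (∑ t : Fin T, ∫ z, ℓ (s t).2 z ∂(SM2.musel ℓ γ H 0 (s t).1 : Measure Z))
            ≤ ∑ t : Fin T, (ℓ (s t).2 (h (s t).1) + γ) := Finset.sum_le_sum fun t _ => hpt t
          _ = (∑ t : Fin T, ℓ (s t).2 (h (s t).1)) + γ * T := by
              rw [Finset.sum_add_distrib]; simp [mul_comm]
        
      simp only [hB]
      push_cast
      have h5 : (0:ℝ) ≤ 2 * c * Real.sqrt ((0:ℝ) * (T:ℝ) * Real.log (2 * c * T)) := by positivity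
      linarith
    · -- main case: 1 ≤ d < T
      have hd1 : 1 ≤ d := Nat.one_le_iff_ne_zero.mpr hd0
      have hdT : d < T := lt_of_not_ge hTd
      have hT2 : 2 ≤ T := by omega
      have hTR : (2:ℝ) ≤ T := by exact_mod_cast hT2
      have hdR : (1:ℝ) ≤ d := by exact_mod_cast hd1
      set a : ℝ := (d : ℝ) * Real.log (T + 1) with ha_def
      set b : ℝ := c ^ 2 * T with hb_def
      have hlogT1 : 0 < Real.log ((T:ℝ) + 1) := Real.log_pos (by linarith)
      have hapos : 0 < a := by rw [ha_def]; positivity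
      have hbpos : 0 < b := by rw [hb_def]; positivity
      set s2 : ℝ := Real.sqrt (2 * a * b) with hs2_def
      have hs2pos : 0 < s2 := Real.sqrt_pos.mpr (by positivity)
      have hs2sq : s2 ^ 2 = 2 * a * b := Real.sq_sqrt (by positivity)
      set η : ℝ := s2 / b with hη_def
      have hηpos : 0 < η := by rw [hη_def]; positivity
      refine ⟨SM2.Amix ℓ γ H d T η, fun s => ?_⟩
      refine SM2.regret_le_of_forall ⟨h₀, hh₀⟩ ℓ _ s B fun h hh => ?_
      -- stream prefix recurrence
      have hlsucc : ∀ (n : ℕ) (hn : n < T),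
          (List.ofFn s).take (n + 1) = (List.ofFn s).take n ++ [s ⟨n, hn⟩] := by
        intro n hn
        have hn' : n < (List.ofFn s).length := by simpa using hn
        rw [← List.take_concat_get' (List.ofFn s) n hn']
        congr 1
        simp [List.getElem_ofFn]
      set sf : ℕ → X × Y := fun n => if hn : n < T then s ⟨n, hn⟩ else s ⟨0, by omega⟩
        with hsf_def
      set wit : (Set (X → Z) × ℕ) → X × Y → Prop := fun G p =>
        ℓ p.2 (h p.1) + γ ≤ ∫ z, ℓ p.2 z ∂(SM2.musel ℓ γ G.1 G.2 p.1 : Measure Z) with hwit_def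
      set upd : (Set (X → Z) × ℕ) → X × Y → Set (X → Z) × ℕ := fun G p =>
        (SM2.Gset ℓ γ G.1 p.1 (SM2.musel ℓ γ G.1 G.2 p.1) p.2, G.2 - 1) with hupd_def
      set st : ℕ → Set (X → Z) × ℕ := fun n =>
        Nat.rec (H, d) (fun m ih => if wit ih (sf m) then upd ih (sf m) else ih) n with hst_def
      have hst0 : st 0 = (H, d) := rfl
      have hstsucc : ∀ n, st (n + 1) = if wit (st n) (sf n) then upd (st n) (sf n) else st n :=
        fun n => rfl
      have I1 : ∀ n, h ∈ (st n).1 := by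
        intro n
        induction n with
        | zero => rw [hst0]; exact hh
        | succ n ih =>
            rw [hstsucc n]
            by_cases hw : wit (st n) (sf n)
            · rw [if_pos hw, hupd_def]
              exact ⟨ih, hw⟩
            · rw [if_neg hw]; exact ih
      have I2 : ∀ n, ¬ SMShatter (st n).1 ℓ γ ((st n).2 + 1) := by
        intro n
        induction n with
        | zero => rw [hst0]; exact hPd1
        | succ n ih =>
            rw [hstsucc n]
            by_cases hw : wit (st n) (sf n)
            · rw [if_pos hw, hupd_def]
              have hspec := SM2.musel_spec (ℓ := ℓ) (γ := γ) (sf n).1 ih (sf n).2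
              rcases Nat.eq_zero_or_pos (st n).2 with hk | hk
              · simp only [hk] at hspec ⊢
                exact SM2.not_shatter_of_not_zero hspec _
              · have heq : (st n).2 - 1 + 1 = (st n).2 := Nat.succ_pred_eq_of_pos hk
                rw [heq]
                exact hspec
            · rw [if_neg hw]; exact ih
      have I3 : ∀ n, wit (st n) (sf n) → 1 ≤ (st n).2 := by
        intro n hw
        by_contra hk
        push_neg at hk
        have hk0 : (st n).2 = 0 := by omega
        have hI2' : ¬ SMShatter (st n).1 ℓ γ (0 + 1) := by rw [← hk0]; exact I2 n
        have hspec := SM2.musel_spec (ℓ := ℓ) (γ := γ) (sf n).1 hI2' (sf n).2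
        apply hspec
        apply SM2.shatter_zero
        refine ⟨h, I1 n, ?_⟩
        rw [hwit_def] at hw
        rw [← hk0]
        exact hw
      have I4 : ∀ n, (st n).2 + ((Finset.range n).filter (fun m => wit (st m) (sf m))).card
          = d := by
        intro n
        induction n with
        | zero => rw [hst0]; simp
        | succ n ih =>
            have hrange : (Finset.range (n+1)).filter (fun m => wit (st m) (sf m)) =
                if wit (st n) (sf n)
                then insert n ((Finset.range n).filter fun m => wit (st m) (sf m))
                else (Finset.range n).filter fun m => wit (st m) (sf m) := by
              rw [Finset.range_add_one, Finset.filter_insert]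
            by_cases hw : wit (st n) (sf n)
            · have h1 := I3 n hw
              have hc1 : ((Finset.range (n+1)).filter (fun m => wit (st m) (sf m))).card =
                  ((Finset.range n).filter (fun m => wit (st m) (sf m))).card + 1 := by
                rw [hrange, if_pos hw]
                rw [Finset.card_insert_of_notMem (by simp)]
              rw [hstsucc n, if_pos hw, hc1, hupd_def]
              simp only []
              omega
            · have hc1 : ((Finset.range (n+1)).filter (fun m => wit (st m) (sf m))).card =
                  ((Finset.range n).filter (fun m => wit (st m) (sf m))).card := by
                rw [hrange, if_neg hw]
              rw [hstsucc n, if_neg hw, hc1]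
              exact ih
      set Wf : Finset ℕ := (Finset.range T).filter (fun m => wit (st m) (sf m)) with hWf_def
      have hWfcard : Wf.card ≤ d := by
        have h9 := I4 T
        rw [hWf_def]
        omega
      set Lw : List ℕ := Wf.toList with hLw_def
      have hLwlen : Lw.length ≤ d := by rw [hLw_def, Finset.length_toList]; exact hWfcard
      have hLwmem : ∀ m ∈ Lw, m < T := by
        intro m hm
        rw [hLw_def, Finset.mem_toList, hWf_def, Finset.mem_filter, Finset.mem_range] at hm
        exact hm.1
      set u : Fin d → Fin (T + 1) := fun i =>
        if hi : i.1 < Lw.length then ⟨Lw[i.1]'hi, by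
          have := hLwmem _ (List.getElem_mem hi); omega⟩
        else ⟨T, Nat.lt_succ_self T⟩ with hu_def
      have hu : ∀ n, n < T → (n ∈ SM2.Su u ↔ wit (st n) (sf n)) := by
        intro n hn
        constructor
        · rintro ⟨i, hi⟩
          rw [hu_def] at hi
          simp only [] at hi
          by_cases hir : i.1 < Lw.length
          · rw [dif_pos hir] at hi
            have hmem : Lw[i.1]'hir ∈ Lw := List.getElem_mem hir
            dsimp only at hi
            rw [hi] at hmem
            rw [hLw_def, Finset.mem_toList, hWf_def, Finset.mem_filter] at hmem
            exact hmem.2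
          · rw [dif_neg hir] at hi
            dsimp only at hi
            omega
        · intro hw
          have hmem : n ∈ Lw := by
            rw [hLw_def, Finset.mem_toList, hWf_def, Finset.mem_filter, Finset.mem_range]
            exact ⟨hn, hw⟩
          obtain ⟨idx, hidxlt, hidx⟩ := List.mem_iff_getElem.mp hmem
          refine ⟨⟨idx, lt_of_lt_of_le hidxlt hLwlen⟩, ?_⟩
          rw [hu_def]
          dsimp only
          rw [dif_pos hidxlt]
          exact hidx
      have AL : ∀ n, n ≤ T →
          SM2.Est ℓ γ H d (SM2.Su u) ((List.ofFn s).take n) = (st n, n) := by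
        intro n
        induction n with
        | zero =>
            intro _
            rw [hst0]
            simp [SM2.Est]
        | succ n ih =>
            intro hn1
            have hn : n < T := hn1
            have hsfn : sf n = s ⟨n, hn⟩ := by rw [hsf_def]; simp [hn]
            rw [hlsucc n hn, SM2.Est_append, ih (le_of_lt hn), ← hsfn]
            rw [SM2.estep]
            simp only []
            by_cases hw : wit (st n) (sf n)
            · rw [if_pos ((hu n hn).mpr hw), hstsucc n, if_pos hw, hupd_def]
            · rw [if_neg (fun hc2 => hw ((hu n hn).mp hc2)), hstsucc n, if_neg hw]
      set Lf : ℕ → (Fin d → Fin (T + 1)) → ℝ := fun t v =>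
        if ht : t < T then
          ∫ z, ℓ (s ⟨t, ht⟩).2 z ∂(SM2.epred ℓ γ H d (SM2.Su v) ((List.ofFn s).take t)
            (s ⟨t, ht⟩).1 : Measure Z)
        else 0 with hLf_def
      have hLf0 : ∀ t v, 0 ≤ Lf t v := by
        intro t v
        rw [hLf_def]
        dsimp only
        by_cases ht : t < T
        · rw [dif_pos ht]; exact hI0 _ _
        · rw [dif_neg ht]
      have hLfc : ∀ t v, Lf t v ≤ c := by
        intro t v
        rw [hLf_def]
        dsimp only
        by_cases ht : t < T
        · rw [dif_pos ht]; exact hIle _ _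
        · rw [dif_neg ht]; exact hc.le
      have CL : ∀ (v : Fin d → Fin (T+1)) (n : ℕ), n ≤ T →
          SM2.cumLoss ℓ γ H d (SM2.Su v) ((List.ofFn s).take n) =
            ∑ j ∈ Finset.range n, Lf j v := by
        intro v n
        induction n with
        | zero =>
            intro _
            simp [SM2.cumLoss]
        | succ n ih =>
            intro hn1
            have hn : n < T := hn1
            rw [hlsucc n hn, SM2.cumLoss_append, ih (le_of_lt hn), Finset.sum_range_succ]
            congr 1
            rw [hLf_def]
            dsimp only
            rw [dif_pos hn]
      have hlearn : ∀ t : Fin T,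
          ∫ z, ℓ (s t).2 z ∂(SM2.Amix ℓ γ H d T η ((List.ofFn s).take t.1) (s t).1 : Measure Z) =
            ∑ v : Fin d → Fin (T + 1), (Real.exp (-η * ∑ j ∈ Finset.range t.1, Lf j v) /
              ∑ v' : Fin d → Fin (T + 1), Real.exp (-η * ∑ j ∈ Finset.range t.1, Lf j v')) *
                Lf t.1 v := by
        intro t
        rw [SM2.integral_Amix ℓ γ H d T η _ (s t).1 (s t).2 (hmeas _) c (hℓ0 _) (hℓc _)]
        have h1 : ∀ v' : Fin d → Fin (T+1), SM2.wexp ℓ γ H d T η v' ((List.ofFn s).take t.1) =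
            Real.exp (-η * ∑ j ∈ Finset.range t.1, Lf j v') := by
          intro v'
          rw [SM2.wexp, CL v' t.1 t.2.le]
        refine Finset.sum_congr rfl fun v _ => ?_
        rw [h1 v]
        congr 1
        · congr 1
          exact Finset.sum_congr rfl fun v' _ => h1 v'
        · rw [hLf_def]
          dsimp only
          rw [dif_pos t.2]
      have hsum_learn : (∑ t : Fin T, ∫ z, ℓ (s t).2 z
            ∂(SM2.Amix ℓ γ H d T η ((List.ofFn s).take t.1) (s t).1 : Measure Z)) =
          ∑ t ∈ Finset.range T, ∑ v : Fin d → Fin (T + 1),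
            (Real.exp (-η * ∑ j ∈ Finset.range t, Lf j v) /
              ∑ v' : Fin d → Fin (T + 1), Real.exp (-η * ∑ j ∈ Finset.range t, Lf j v')) *
                Lf t v := by
        rw [← Fin.sum_univ_eq_sum_range]
        exact Finset.sum_congr rfl fun t _ => hlearn t
      have hhedge := SM2.hedge Lf c η hc.le hηpos hLf0 hLfc T u
      -- per-round expert bound
      set g : ℕ → ℝ := fun j => if hj : j < T then ℓ (s ⟨j, hj⟩).2 (h (s ⟨j, hj⟩).1) else 0
        with hg_def
      have hptw : ∀ j, j < T → Lf j u ≤ g j + γ + (if wit (st j) (sf j) then c else 0) := by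
        intro j hj
        have hsfj : sf j = s ⟨j, hj⟩ := by rw [hsf_def]; simp [hj]
        have hLfj : Lf j u =
            ∫ z, ℓ (sf j).2 z ∂(SM2.musel ℓ γ (st j).1 (st j).2 (sf j).1 : Measure Z) := by
          rw [hLf_def]
          dsimp only
          rw [dif_pos hj, SM2.epred, AL j (le_of_lt hj), hsfj]
        have hgj : g j = ℓ (sf j).2 (h (sf j).1) := by
          rw [hg_def]; dsimp only; rw [dif_pos hj, hsfj]
        by_cases hw : wit (st j) (sf j)
        · rw [if_pos hw, hLfj, hgj]
          have h5 := hIle (sf j).2 (SM2.musel ℓ γ (st j).1 (st j).2 (sf j).1)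
          have h6 := hℓ0 (sf j).2 (h (sf j).1)
          linarith
        · rw [if_neg hw, hLfj, hgj]
          rw [hwit_def] at hw
          push_neg at hw
          linarith [hw]
      have hexp : ∑ j ∈ Finset.range T, Lf j u ≤
          (∑ t : Fin T, ℓ (s t).2 (h (s t).1)) + γ * T + c * d := by
        have hsum1 : ∑ j ∈ Finset.range T, Lf j u ≤
            ∑ j ∈ Finset.range T, (g j + γ + (if wit (st j) (sf j) then c else 0)) :=
          Finset.sum_le_sum fun j hj => hptw j (Finset.mem_range.mp hj)
        have hsum2 : ∑ j ∈ Finset.range T, (g j + γ + (if wit (st j) (sf j) then c else 0)) =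
            (∑ j ∈ Finset.range T, g j) + γ * T +
              ∑ j ∈ Finset.range T, (if wit (st j) (sf j) then c else 0) := by
          rw [Finset.sum_add_distrib, Finset.sum_add_distrib]
          simp [mul_comm]
        have hsum3 : ∑ j ∈ Finset.range T, (if wit (st j) (sf j) then c else 0) = Wf.card * c := by
          rw [hWf_def, ← Finset.sum_filter, Finset.sum_const, nsmul_eq_mul]
        have hsum4 : (Wf.card : ℝ) * c ≤ c * d := by
          have : (Wf.card : ℝ) ≤ d := by exact_mod_cast hWfcard
          nlinarith
        have hsum5 : ∑ j ∈ Finset.range T, g j = ∑ t : Fin T, ℓ (s t).2 (h (s t).1) := by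
          rw [← Fin.sum_univ_eq_sum_range]
          refine Finset.sum_congr rfl fun t _ => ?_
          rw [hg_def]
          dsimp only
          rw [dif_pos t.2]
        linarith [hsum1, hsum2.le, hsum3.le]
      -- arithmetic for the Hedge overhead
      have hN : (Fintype.card (Fin d → Fin (T + 1)) : ℝ) = ((T : ℝ) + 1) ^ d := by
        rw [Fintype.card_fun]
        push_cast
        simp
      have hlogN : Real.log (Fintype.card (Fin d → Fin (T + 1))) = a := by
        rw [hN, Real.log_pow, ha_def]
      have hMW : Real.log (Fintype.card (Fin d → Fin (T + 1))) / η + η * c ^ 2 * T / 2 = s2 := by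
        rw [hlogN, hη_def, hb_def]
        have hab : a * (c ^ 2 * (T:ℝ)) = s2 ^ 2 / 2 := by rw [← hb_def]; linarith [hs2sq]
        rw [div_div_eq_mul_div, hab]
        have hs2ne : s2 ≠ 0 := hs2pos.ne'
        have hcne : c ≠ 0 := hc.ne'
        have hTne : (T:ℝ) ≠ 0 := by positivity
        field_simp
        ring
      have hfin : s2 ≤ 2 * c * Real.sqrt (d * T * Real.log (2 * c * T)) := by
        have h1 : (T:ℝ) + 1 ≤ (2 * c * T) ^ 2 := by
          have h4c : (1:ℝ) ≤ 4 * c ^ 2 := by nlinarith [hc']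
          nlinarith [hTR, sq_nonneg ((T:ℝ) - 2), sq_nonneg ((T:ℝ))]
        have hlog2 : Real.log ((T:ℝ) + 1) ≤ 2 * Real.log (2 * c * T) := by
          have h2 := Real.log_le_log (by positivity) h1
          rw [Real.log_pow] at h2
          push_cast at h2
          linarith
        have hinner : 2 * a * b ≤ (2 * c) ^ 2 * ((d : ℝ) * T * Real.log (2 * c * T)) := by
          rw [ha_def, hb_def]
          nlinarith [mul_le_mul_of_nonneg_left hlog2
            (show (0:ℝ) ≤ 2 * c ^ 2 * (d:ℝ) * T by positivity)]
        calc s2 ≤ Real.sqrt ((2 * c) ^ 2 * ((d:ℝ) * T * Real.log (2 * c * T))) := by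
              rw [hs2_def]; exact Real.sqrt_le_sqrt hinner
          _ = 2 * c * Real.sqrt ((d:ℝ) * T * Real.log (2 * c * T)) := by
              rw [Real.sqrt_mul (by positivity), Real.sqrt_sq (by positivity)]
      rw [hsum_learn]
      rw [hB]
      linarith [hhedge, hexp, hfin, hMW]
end

section
/- Suppose there exist two hypotheses h_{-1}, h_{+1} ∈ H, an instance x ∈ X, and labels y_{-1}, y_{+1} ∈ Y such that (i) η := min_{σ∈{±1}} ( ℓ(y_{-σ}, h_σ(x)) − ℓ(y_σ, h_σ(x)) ) > 0 and (ii) inf_{z∈Z} ( ℓ(y_{-1}, z) + ℓ(y_{+1}, z) ) ≥ (1/2) Σ_{σ_1∈{±1}} Σ_{σ_2∈{±1}} ℓ(y_{σ_1}, h_{σ_2}(x)). Then for every online learner A and every T ≥ 1, the average over all sign sequences σ = (σ_1,…,σ_T) ∈ {±1}^T (each with weight 2^{-T}) of the quantity Σ_{t=1}^T E_{z∼μ_t^σ}[ℓ(y_{σ_t}, z)] − inf_{h∈H} Σ_{t=1}^T ℓ(y_{σ_t}, h(x)) is at least η·√(T/8), where μ_t^σ is the measure A outputs at round t given the history ((x,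 y_{σ_1}),…,(x, y_{σ_{t-1}})) and instance x. In particular, there exists a stream of length T on which the expected regret of A is at least η·√(T/8). -/
open MeasureTheory

open Finset

namespace St4Aux

/-- signed sum of a boolean vector -/
def Dz {T : ℕ} (σ : Fin T → Bool) : ℤ := ∑ t, (if σ t then 1 else -1)

lemma Dz_cons {T : ℕ} (b : Bool) (τ : Fin T → Bool) :
    Dz (Fin.cons b τ) = (if b then 1 else -1) + Dz τ := by
  unfold Dz
  rw [Fin.sum_univ_succ]
  simp

lemma sum_ite_card {T : ℕ} (σ : Fin T → Bool) (p q : ℝ) :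
    ∑ t, (if σ t then p else q) =
      ((univ.filter fun t => σ t).card : ℝ) * p
        + ((T : ℝ) - (univ.filter fun t => σ t).card) * q := by
  rw [Finset.sum_ite]
  simp only [Finset.sum_const, nsmul_eq_mul]
  have h := Finset.card_filter_add_card_filter_not (s := (univ : Finset (Fin T)))
    (p := fun t => σ t = true)
  have hcard : ((univ.filter fun t => ¬ σ t = true).card : ℝ)
      = (T : ℝ) - (univ.filter fun t => σ t = true).card := by
    have : (univ.filter fun t => σ t = true).card
        + (univ.filter fun t => ¬ σ t = true).card = T := by
      simpa using h
    push_cast [← this]; ring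
  rw [hcard]

lemma Dz_eq {T : ℕ} (σ : Fin T → Bool) :
    (Dz σ : ℝ) = 2 * ((univ.filter fun t => σ t).card : ℝ) - T := by
  have : (Dz σ : ℝ) = ∑ t, (if σ t then (1:ℝ) else -1) := by
    simp [Dz]
  rw [this, sum_ite_card]; ring



lemma abs_add_one_add_abs_sub_one (d : ℤ) :
    |d + 1| + |d - 1| = 2 * |d| + (if d = 0 then 2 else 0) := by
  rcases lt_trichotomy d 0 with h | h | h
  · rw [abs_of_nonpos (by omega), abs_of_neg (by omega), abs_of_neg h, if_neg (by omega)]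
    ring
  · subst h; norm_num
  · rw [abs_of_pos (by omega), abs_of_nonneg (by omega), abs_of_pos h, if_neg (by omega)]
    ring

noncomputable def Ksum (T : ℕ) : ℤ := ∑ σ : Fin T → Bool, |Dz σ|

def Zn (T : ℕ) : ℕ := (univ.filter fun σ : Fin T → Bool => Dz σ = 0).card

lemma Ksum_succ (T : ℕ) : Ksum (T + 1) = 2 * Ksum T + 2 * Zn T := by
  unfold Ksum
  have h1 : ∑ σ : Fin (T+1) → Bool, |Dz σ|
      = ∑ p : Bool × (Fin T → Bool), |Dz (Fin.cons p.1 p.2)| :=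
    (Fintype.sum_equiv (Fin.consEquiv fun _ => Bool)
      (fun p => |Dz (Fin.cons p.1 p.2)|) (fun σ => |Dz σ|) (fun p => rfl)).symm
  rw [h1, Fintype.sum_prod_type, Fintype.sum_bool]
  have hT : ∀ τ : Fin T → Bool, |Dz (Fin.cons true τ)| = |Dz τ + 1| := by
    intro τ; rw [Dz_cons]; congr 1; simp [add_comm]
  have hF : ∀ τ : Fin T → Bool, |Dz (Fin.cons false τ)| = |Dz τ - 1| := by
    intro τ; rw [Dz_cons]; congr 1; simp [sub_eq_add_neg, add_comm]
  simp only [hT, hF]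
  rw [← Finset.sum_add_distrib]
  simp only [abs_add_one_add_abs_sub_one]
  rw [Finset.sum_add_distrib, ← Finset.mul_sum]
  have h4 : (∑ τ : Fin T → Bool, if Dz τ = 0 then (2:ℤ) else 0) = 2 * Zn T := by
    rw [Finset.sum_ite, Finset.sum_const, Finset.sum_const]
    unfold Zn
    simp [mul_comm]
  rw [h4]


lemma card_filter_count (n m : ℕ) :
    ((univ : Finset (Fin n → Bool)).filter
      fun σ => (univ.filter fun t => σ t).card = m).card = n.choose m := by
  have hpc : n.choose m = (Finset.powersetCard m (univ : Finset (Fin n))).card := by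
    simp [Finset.card_powersetCard]
  rw [hpc]
  apply Finset.card_bij (fun σ _ => univ.filter fun t => σ t)
  · intro σ hσ
    rw [Finset.mem_powersetCard]
    exact ⟨Finset.filter_subset _ _, (Finset.mem_filter.mp hσ).2⟩
  · intro σ hσ σ' hσ' h
    funext t
    have := Finset.ext_iff.mp h t
    simpa using this
  · intro s hs
    rw [Finset.mem_powersetCard] at hs
    refine ⟨fun t => t ∈ s, ?_, ?_⟩
    · rw [Finset.mem_filter]
      refine ⟨Finset.mem_univ _, ?_⟩
      rw [← hs.2]
      congr 1
      ext t
      simp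
    · ext t; simp

lemma Zn_odd (m : ℕ) : Zn (2 * m + 1) = 0 := by
  unfold Zn
  rw [Finset.card_eq_zero, Finset.filter_eq_empty_iff]
  intro σ _
  intro h0
  have := Dz_eq σ
  rw [h0] at this
  have h2 : 2 * ((univ.filter fun t => σ t).card : ℝ) = ((2 * m + 1 : ℕ) : ℝ) := by
    push_cast at this ⊢; linarith
  have h3 : 2 * (univ.filter fun t => σ t).card = 2 * m + 1 := by
    exact_mod_cast h2
  omega

lemma Zn_even (m : ℕ) : Zn (2 * m) = Nat.centralBinom m := by
  unfold Zn
  rw [Nat.centralBinom_eq_two_mul_choose, ← card_filter_count (2 * m) m]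
  congr 1
  apply Finset.filter_congr
  intro σ _
  constructor
  · intro h0
    have := Dz_eq σ
    rw [h0] at this
    have h2 : 2 * ((univ.filter fun t => σ t).card : ℝ) = 2 * (m:ℝ) := by
      push_cast at this ⊢; linarith
    have h3 : ((univ.filter fun t => σ t).card : ℝ) = (m:ℝ) := by linarith
    exact_mod_cast h3
  · intro h
    have h' : ((univ.filter fun t => σ t).card : ℝ) = (m:ℝ) := by exact_mod_cast h
    have h0 : (Dz σ : ℝ) = 0 := by
      rw [Dz_eq, h']; push_cast; ring
    exact_mod_cast h0

lemma four_pow_sq_le (m : ℕ) (hm : 1 ≤ m) :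
    4 ^ (2 * m) ≤ 4 * m * (Nat.centralBinom m) ^ 2 := by
  induction m with
  | zero => omega
  | succ n ih =>
    rcases Nat.eq_or_lt_of_le hm with h1 | h1
    · have : n = 0 := by omega
      subst this
      decide
    · have hn : 1 ≤ n := by omega
      have ihn := ih hn
      have key : (n + 1) * Nat.centralBinom (n + 1)
          = 2 * (2 * n + 1) * Nat.centralBinom n := Nat.succ_mul_centralBinom_succ n
      have hpos : 0 < (n + 1) ^ 2 := by positivity
      refine Nat.le_of_mul_le_mul_left ?_ hpos
      have e1 : (n + 1) ^ 2 * (4 * (n + 1) * Nat.centralBinom (n + 1) ^ 2)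
          = 4 * (n + 1) * ((n + 1) * Nat.centralBinom (n + 1)) ^ 2 := by ring
      rw [e1, key]
      calc (n + 1) ^ 2 * 4 ^ (2 * (n + 1))
          = 16 * (n + 1) ^ 2 * 4 ^ (2 * n) := by ring
        _ ≤ 16 * (n + 1) ^ 2 * (4 * n * Nat.centralBinom n ^ 2) := by
            exact Nat.mul_le_mul_left _ ihn
        _ ≤ 4 * (n + 1) * (2 * (2 * n + 1) * Nat.centralBinom n) ^ 2 := by
            have h2 : 4 * n * (n + 1) ≤ (2 * n + 1) ^ 2 := by nlinarith
            calc 16 * (n + 1) ^ 2 * (4 * n * Nat.centralBinom n ^ 2)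
                = (4 * n * (n + 1)) * (16 * (n + 1) * Nat.centralBinom n ^ 2) := by ring
              _ ≤ ((2 * n + 1) ^ 2) * (16 * (n + 1) * Nat.centralBinom n ^ 2) :=
                  Nat.mul_le_mul_right _ h2
              _ = 4 * (n + 1) * (2 * (2 * n + 1) * Nat.centralBinom n) ^ 2 := by ring

lemma sqrt_step (m : ℕ) :
    Real.sqrt (m + 1) ≤ Real.sqrt m + (Nat.centralBinom m : ℝ) / 4 ^ m := by
  rcases Nat.eq_zero_or_pos m with h | h
  · subst h
    simp [Nat.centralBinom_zero]
  · have hm1 : (1:ℝ) ≤ m := by exact_mod_cast h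
    have hsq : Real.sqrt m ^ 2 = m := Real.sq_sqrt (by positivity)
    have hs0 : 0 < Real.sqrt m := Real.sqrt_pos.mpr (by linarith)
    have hcb : (0:ℝ) < Nat.centralBinom m := by exact_mod_cast Nat.centralBinom_pos m
    have hnat := four_pow_sq_le m h
    have hr : ((4:ℝ) ^ m) ^ 2 ≤ (2 * Real.sqrt m * Nat.centralBinom m) ^ 2 := by
      have : ((4:ℝ) ^ (2 * m)) ≤ 4 * m * (Nat.centralBinom m : ℝ) ^ 2 := by
        exact_mod_cast hnat
      calc ((4:ℝ) ^ m) ^ 2 = (4:ℝ) ^ (2 * m) := by rw [← pow_mul]; ring_nf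
        _ ≤ 4 * m * (Nat.centralBinom m : ℝ) ^ 2 := this
        _ = (2 * Real.sqrt m * Nat.centralBinom m) ^ 2 := by
            rw [mul_pow, mul_pow, hsq]; ring
    have h4 : (4:ℝ) ^ m ≤ 2 * Real.sqrt m * Nat.centralBinom m := by
      have h40 : (0:ℝ) ≤ (4:ℝ) ^ m := by positivity
      have h50 : (0:ℝ) ≤ 2 * Real.sqrt m * Nat.centralBinom m := by positivity
      nlinarith
    have hb : (1:ℝ) / (2 * Real.sqrt m) ≤ (Nat.centralBinom m : ℝ) / 4 ^ m := by
      rw [div_le_div_iff₀ (by positivity) (by positivity)]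
      linarith
    have hs : Real.sqrt (m + 1) ≤ Real.sqrt m + 1 / (2 * Real.sqrt m) := by
      have hy : (0:ℝ) ≤ Real.sqrt m + 1 / (2 * Real.sqrt m) := by positivity
      have h2 : ((m:ℝ) + 1) ≤ (Real.sqrt m + 1 / (2 * Real.sqrt m)) ^ 2 := by
        have e : (Real.sqrt m + 1 / (2 * Real.sqrt m)) ^ 2
            = m + 1 + (1 / (2 * Real.sqrt m)) ^ 2 := by
          field_simp
          nlinarith [hsq]
        rw [e]
        have : (0:ℝ) ≤ (1 / (2 * Real.sqrt m)) ^ 2 := by positivity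
        linarith
      calc Real.sqrt (m + 1) ≤ Real.sqrt ((Real.sqrt m + 1 / (2 * Real.sqrt m)) ^ 2) :=
            Real.sqrt_le_sqrt h2
        _ = Real.sqrt m + 1 / (2 * Real.sqrt m) := Real.sqrt_sq hy
    linarith

lemma Keven (m : ℕ) : (4:ℝ) ^ m * Real.sqrt m ≤ (Ksum (2 * m) : ℝ) := by
  induction m with
  | zero =>
    simp only [Nat.cast_zero, Real.sqrt_zero, mul_zero, Nat.mul_zero]
    have : (0:ℤ) ≤ Ksum 0 := Finset.sum_nonneg fun σ _ => abs_nonneg _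
    exact_mod_cast this
  | succ n ih =>
    have e1 : 2 * (n + 1) = (2 * n + 1) + 1 := by ring
    have hrec : Ksum (2 * (n + 1)) = 4 * Ksum (2 * n) + 4 * Nat.centralBinom n := by
      rw [e1, Ksum_succ, Zn_odd, Ksum_succ, Zn_even]
      push_cast
      ring
    have hstep := sqrt_step n
    have h4 : (0:ℝ) < (4:ℝ) ^ (n + 1) := by positivity
    have hmul : (4:ℝ) ^ (n + 1) * Real.sqrt (n + 1)
        ≤ (4:ℝ) ^ (n + 1) * Real.sqrt n + 4 * Nat.centralBinom n := by
      have := mul_le_mul_of_nonneg_left hstep (le_of_lt h4)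
      have e2 : (4:ℝ) ^ (n + 1) * ((Nat.centralBinom n : ℝ) / 4 ^ n)
          = 4 * Nat.centralBinom n := by
        field_simp
        ring
      rw [mul_add, e2] at this
      linarith
    have hcast : (Ksum (2 * (n + 1)) : ℝ) = 4 * (Ksum (2 * n) : ℝ) + 4 * Nat.centralBinom n := by
      exact_mod_cast hrec
    have : (4:ℝ) * ((4:ℝ) ^ n * Real.sqrt n) ≤ 4 * (Ksum (2 * n) : ℝ) := by linarith
    rw [hcast]
    push_cast
    ring_nf
    ring_nf at hmul this ⊢
    nlinarith [this, hmul]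

lemma khintchine (T : ℕ) : (2:ℝ) ^ T * Real.sqrt (T / 2) ≤ (Ksum T : ℝ) := by
  rcases Nat.even_or_odd T with ⟨m, hm⟩ | ⟨m, hm⟩
  · subst hm
    have e : (2:ℝ) ^ (m + m) = (4:ℝ) ^ m := by
      rw [pow_add, ← mul_pow]
      norm_num
    have e2 : ((m + m : ℕ) : ℝ) / 2 = m := by push_cast; ring
    have := Keven m
    rw [e2, e]
    have e3 : 2 * m = m + m := by ring
    rw [← e3]
    rw [e3] at this ⊢
    exact this
  · subst hm
    have hrec : Ksum (2 * m + 2) = 2 * Ksum (2 * m + 1) := by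
      have : 2 * m + 2 = (2 * m + 1) + 1 := by ring
      rw [this, Ksum_succ, Zn_odd]
      ring
    have h2 : (4:ℝ) ^ (m + 1) * Real.sqrt (m + 1) ≤ (Ksum (2 * m + 2) : ℝ) := by
      have := Keven (m + 1)
      have e : 2 * (m + 1) = 2 * m + 2 := by ring
      rw [e] at this
      push_cast at this ⊢
      exact this
    have hK : (Ksum (2 * m + 1) : ℝ) = (Ksum (2 * m + 2) : ℝ) / 2 := by
      rw [hrec]; push_cast; ring
    rw [hK]
    have hsle : Real.sqrt (((2 * m + 1 : ℕ) : ℝ) / 2) ≤ Real.sqrt (m + 1) := by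
      apply Real.sqrt_le_sqrt
      push_cast
      linarith
    have e4 : (2:ℝ) ^ (2 * m + 1) = (4:ℝ) ^ (m + 1) / 2 := by
      have h44 : (4:ℝ) ^ (m + 1) = 2 ^ (2 * m + 1) * 2 := by
        have e : 2 * (m + 1) = (2 * m + 1) + 1 := by ring
        calc (4:ℝ) ^ (m + 1) = ((2:ℝ) ^ 2) ^ (m + 1) := by norm_num
          _ = 2 ^ (2 * (m + 1)) := by rw [← pow_mul]
          _ = 2 ^ ((2 * m + 1) + 1) := by rw [e]
          _ = 2 ^ (2 * m + 1) * 2 := pow_succ 2 _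
      rw [h44]
      ring
    rw [e4]
    have h5 : (0:ℝ) < (4:ℝ) ^ (m + 1) := by positivity
    have h6 := mul_le_mul_of_nonneg_left hsle (le_of_lt h5)
    calc (4:ℝ) ^ (m + 1) / 2 * Real.sqrt (((2 * m + 1 : ℕ) : ℝ) / 2)
        ≤ (4:ℝ) ^ (m + 1) / 2 * Real.sqrt ((m:ℝ) + 1) := by nlinarith
      _ ≤ (Ksum (2 * m + 2) : ℝ) / 2 := by linarith


lemma pairBound (K Tr a b cc d eta : ℝ) (hab : eta ≤ b - a) (hcd : eta ≤ cc - d)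
    (h2 : 2 * K ≤ Tr) :
    K * b + (Tr - K) * a + ((Tr - K) * d + K * cc)
      ≤ Tr * (a + cc + b + d) / 2 - (Tr - 2 * K) * eta := by
  nlinarith [mul_nonneg (by linarith : (0:ℝ) ≤ Tr - 2 * K)
    (by linarith : (0:ℝ) ≤ b + cc - a - d - 2 * eta)]

end St4Aux


open St4Aux

/-- sufficient condition for an `Ω(√T)` lower bound. Under conditions (i)
and (ii) on the hypotheses `h₋₁, h₊₁`, the instance `x` and the labels `y₋₁, y₊₁`,
for every online learner and every horizon `T ≥ 1` the average regret, over the `2^T`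
uniformly weighted sign sequences (`false` standing for `−1` and `true` for `+1`),
is at least `η·√(T/8)`; in particular some stream of length `T` forces regret at least
`η·√(T/8)`. -/
theorem statement4 {X Y Z : Type*} [MeasurableSpace Z] [Nonempty X] [Nonempty Y]
    (ℓ : Y → Z → ℝ) (c : ℝ) (hc : 0 < c)
    (hℓ0 : ∀ y z, 0 ≤ ℓ y z) (hℓc : ∀ y z, ℓ y z ≤ c)
    (hmeas : ∀ y, Measurable (ℓ y))
    (H : Set (X → Z)) (hH : H.Nonempty)
    (hm hp : X → Z) (hmH : hm ∈ H) (hpH : hp ∈ H)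
    (x : X) (ym yp : Y) (η : ℝ)
    (hη : η = min (ℓ ym (hp x) - ℓ yp (hp x)) (ℓ yp (hm x) - ℓ ym (hm x)))
    (hηpos : 0 < η)
    (hinf : ∀ z : Z,
      (ℓ ym (hm x) + ℓ ym (hp x) + ℓ yp (hm x) + ℓ yp (hp x)) / 2 ≤ ℓ ym z + ℓ yp z) :
    ∀ A : List (X × Y) → X → ProbabilityMeasure Z, ∀ T : ℕ, 1 ≤ T →
      (η * Real.sqrt (T / 8) ≤
        (∑ σ : Fin T → Bool,
            expectedRegret H ℓ A (fun t => (x, if σ t then yp else ym))) / 2 ^ T) ∧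
      ∃ σ : Fin T → Bool,
        η * Real.sqrt (T / 8) ≤
          expectedRegret H ℓ A (fun t => (x, if σ t then yp else ym)) := by

  intro A T hT
  -- abbreviations
  set a := ℓ ym (hm x) with ha
  set b := ℓ yp (hm x) with hb
  set cc := ℓ ym (hp x) with hcc
  set d := ℓ yp (hp x) with hd
  set S := a + cc + b + d with hS
  have hab : η ≤ b - a := by rw [hη]; exact min_le_right _ _
  have hcd : η ≤ cc - d := by rw [hη]; exact min_le_left _ _
  -- the stream associated to a sign vector
  set str : (Fin T → Bool) → Fin T → X × Y :=
    (fun σ => fun t => (x, if σ t then yp else ym)) with hstr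
  set μf : (Fin T → Bool) → Fin T → Measure Z :=
    (fun σ t => ((A ((List.ofFn (str σ)).take t.1) x : ProbabilityMeasure Z) : Measure Z))
    with hμf
  have hprob : ∀ σ t, IsProbabilityMeasure (μf σ t) := by
    intro σ t
    exact (A ((List.ofFn (str σ)).take t.1) x).2
  -- integrability
  have hint : ∀ (y : Y) (μ : Measure Z), IsProbabilityMeasure μ → Integrable (ℓ y) μ := by
    intro y μ hμ
    refine ⟨(hmeas y).aestronglyMeasurable, ?_⟩
    apply MeasureTheory.HasFiniteIntegral.of_bounded (C := c)
    filter_upwards with z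
    rw [Real.norm_eq_abs, abs_of_nonneg (hℓ0 y z)]
    exact hℓc y z
  -- the two components of the regret
  set P : (Fin T → Bool) → ℝ :=
    (fun σ => ∑ t : Fin T, ∫ z, ℓ (if σ t then yp else ym) z ∂(μf σ t)) with hP
  set Q : (Fin T → Bool) → ℝ :=
    (fun σ => ⨅ h : H, ∑ t : Fin T, ℓ (if σ t then yp else ym) ((h : X → Z) x)) with hQ
  have hreg : ∀ σ : Fin T → Bool,
      expectedRegret H ℓ A (fun t => (x, if σ t then yp else ym)) = P σ - Q σ := by
    intro σ
    rfl
  -- prefix stability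
  have hpre : ∀ (σ σ' : Fin T → Bool) (t : Fin T),
      (∀ u : Fin T, (u : ℕ) < (t : ℕ) → σ u = σ' u) →
      (List.ofFn (str σ)).take t.1 = (List.ofFn (str σ')).take t.1 := by
    intro σ σ' t h
    apply List.ext_getElem
    · simp
    · intro n h1 h2
      have hn : n < T := by
        simp only [List.length_take, List.length_ofFn] at h1
        omega
      have hnt : n < t.1 := by
        simp only [List.length_take, List.length_ofFn] at h1
        omega
      rw [List.getElem_take, List.getElem_take, List.getElem_ofFn, List.getElem_ofFn]
      have := h ⟨n, hn⟩ hnt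
      simp only [hstr]
      rw [this]
  -- Step A: lower bound on the learner's cumulative loss
  have hPsum : (2:ℝ) ^ T * ((T:ℝ) * S / 4) ≤ ∑ σ : Fin T → Bool, P σ := by
    have hswap : ∑ σ : Fin T → Bool, P σ
        = ∑ t : Fin T, ∑ σ : Fin T → Bool, ∫ z, ℓ (if σ t then yp else ym) z ∂(μf σ t) := by
      rw [hP, Finset.sum_comm]
    rw [hswap]
    have hcard : (Finset.univ : Finset (Fin T → Bool)).card = 2 ^ T := by
      simp [Finset.card_univ]
    have key : ∀ t : Fin T,
        (2:ℝ) ^ T * (S / 4) ≤ ∑ σ : Fin T → Bool, ∫ z, ℓ (if σ t then yp else ym) z ∂(μf σ t) := by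
      intro t
      set F : (Fin T → Bool) → ℝ :=
        (fun σ => ∫ z, ℓ (if σ t then yp else ym) z ∂(μf σ t)) with hF
      have hinv : Function.Involutive (fun σ : Fin T → Bool => Function.update σ t (!σ t)) := by
        intro σ
        funext u
        by_cases h : u = t
        · subst h; simp
        · simp [Function.update, h]
      set e : Equiv.Perm (Fin T → Bool) := hinv.toPerm _ with he
      have hμsame : ∀ σ : Fin T → Bool, μf (e σ) t = μf σ t := by
        intro σ
        have : (List.ofFn (str (e σ))).take t.1 = (List.ofFn (str σ)).take t.1 := by
          apply hpre
          intro u hu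
          have : u ≠ t := by
            intro hut
            rw [hut] at hu
            omega
          simp [he, Function.Involutive.toPerm, Function.update, this]
        rw [hμf]
        simp only
        rw [this]
      have hpair : ∀ σ : Fin T → Bool, F σ + F (e σ) = ∫ z, (ℓ ym z + ℓ yp z) ∂(μf σ t) := by
        intro σ
        have hflipt : (e σ) t = !σ t := by
          simp [he, Function.Involutive.toPerm]
        rw [hF]
        simp only
        rw [hμsame σ, hflipt]
        rw [MeasureTheory.integral_add (hint ym _ (hprob σ t)) (hint yp _ (hprob σ t))]
        cases h : σ t
        · norm_num
        · norm_num
          ring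
      have hsum2 : 2 * ∑ σ : Fin T → Bool, F σ
          = ∑ σ : Fin T → Bool, ∫ z, (ℓ ym z + ℓ yp z) ∂(μf σ t) := by
        have hcomp : ∑ σ : Fin T → Bool, F (e σ) = ∑ σ : Fin T → Bool, F σ :=
          Equiv.sum_comp e F
        calc 2 * ∑ σ : Fin T → Bool, F σ
            = ∑ σ : Fin T → Bool, F σ + ∑ σ : Fin T → Bool, F (e σ) := by rw [hcomp]; ring
          _ = ∑ σ : Fin T → Bool, (F σ + F (e σ)) := by rw [← Finset.sum_add_distrib]
          _ = ∑ σ : Fin T → Bool, ∫ z, (ℓ ym z + ℓ yp z) ∂(μf σ t) := by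
              exact Finset.sum_congr rfl fun σ _ => hpair σ
      have hlow : ∀ σ : Fin T → Bool, S / 2 ≤ ∫ z, (ℓ ym z + ℓ yp z) ∂(μf σ t) := by
        intro σ
        have hSint : ∫ _ : Z, S / 2 ∂(μf σ t) = S / 2 := by
          haveI := hprob σ t
          simp [MeasureTheory.integral_const]
        rw [← hSint]
        apply MeasureTheory.integral_mono (MeasureTheory.integrable_const _)
          ((hint ym _ (hprob σ t)).add (hint yp _ (hprob σ t)))
        intro z
        exact hinf z
      have : (2:ℝ) ^ T * (S / 2) ≤ ∑ σ : Fin T → Bool, ∫ z, (ℓ ym z + ℓ yp z) ∂(μf σ t) := by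
        calc (2:ℝ) ^ T * (S / 2) = ∑ _σ : Fin T → Bool, S / 2 := by
              rw [Finset.sum_const, hcard]; push_cast; ring
          _ ≤ _ := Finset.sum_le_sum fun σ _ => hlow σ
      rw [← hsum2] at this
      linarith
    calc (2:ℝ) ^ T * ((T:ℝ) * S / 4) = ∑ _t : Fin T, (2:ℝ) ^ T * (S / 4) := by
          rw [Finset.sum_const, Finset.card_univ, Fintype.card_fin]
          push_cast; ring
      _ ≤ _ := Finset.sum_le_sum fun t _ => key t
  -- Step B: upper bound on the comparator term
  have hcard2 : (Finset.univ : Finset (Fin T → Bool)).card = 2 ^ T := by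
    simp [Finset.card_univ]
  have hsum_eval : ∀ (σ : Fin T → Bool) (w : X → Z),
      ∑ t : Fin T, ℓ (if σ t then yp else ym) (w x)
        = ((Finset.univ.filter fun t => σ t).card : ℝ) * ℓ yp (w x)
          + ((T:ℝ) - ((Finset.univ.filter fun t => σ t).card : ℝ)) * ℓ ym (w x) := by
    intro σ w
    have h1 : ∀ t : Fin T, ℓ (if σ t then yp else ym) (w x)
        = (if σ t then ℓ yp (w x) else ℓ ym (w x)) := by
      intro t
      by_cases h : σ t = true <;> simp [h]
    simp only [h1]
    exact sum_ite_card σ _ _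
  have hbdd : ∀ σ : Fin T → Bool, BddBelow (Set.range
      fun h : H => ∑ t : Fin T, ℓ (if σ t then yp else ym) ((h : X → Z) x)) := by
    intro σ
    refine ⟨0, ?_⟩
    rintro r ⟨h, rfl⟩
    exact Finset.sum_nonneg fun t _ => hℓ0 _ _
  have hQm : ∀ σ : Fin T → Bool, Q σ ≤ ∑ t : Fin T, ℓ (if σ t then yp else ym) (hm x) :=
    fun σ => ciInf_le (hbdd σ) ⟨hm, hmH⟩
  have hQp : ∀ σ : Fin T → Bool, Q σ ≤ ∑ t : Fin T, ℓ (if σ t then yp else ym) (hp x) :=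
    fun σ => ciInf_le (hbdd σ) ⟨hp, hpH⟩
  have hninv : Function.Involutive (fun σ : Fin T → Bool => fun u => !σ u) := by
    intro σ; funext u; simp
  set en : Equiv.Perm (Fin T → Bool) := hninv.toPerm _ with hen
  have hkneg : ∀ σ : Fin T → Bool,
      (((Finset.univ.filter fun t => (en σ) t).card : ℝ))
        = (T:ℝ) - ((Finset.univ.filter fun t => σ t).card : ℝ) := by
    intro σ
    have h1 : (Finset.univ.filter fun t => (en σ) t)
        = Finset.univ.filter fun t : Fin T => ¬(σ t = true) := by
      apply Finset.filter_congr
      intro t _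
      simp [hen, Function.Involutive.toPerm]
    have h2 := Finset.card_filter_add_card_filter_not
      (s := (Finset.univ : Finset (Fin T))) (p := fun t : Fin T => σ t = true)
    have h3 : (Finset.univ : Finset (Fin T)).card = T := by simp
    rw [h3] at h2
    rw [h1]
    have h2' : ((Finset.univ.filter fun t : Fin T => σ t = true).card : ℝ)
        + ((Finset.univ.filter fun t : Fin T => ¬(σ t = true)).card : ℝ) = (T:ℝ) := by
      exact_mod_cast h2
    linarith
  have hQpair : ∀ σ : Fin T → Bool,
      Q σ + Q (en σ) ≤ (T:ℝ) * S / 2 - |(Dz σ : ℝ)| * η := by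
    intro σ
    set K := ((Finset.univ.filter fun t => σ t).card : ℝ) with hK
    have hK0 : 0 ≤ K := by positivity
    have hKT : K ≤ (T:ℝ) := by
      rw [hK]
      have := Finset.card_filter_le (Finset.univ : Finset (Fin T)) (fun t => σ t = true)
      have h3 : (Finset.univ : Finset (Fin T)).card = T := by simp
      rw [h3] at this
      exact_mod_cast this
    have hDz : (Dz σ : ℝ) = 2 * K - T := Dz_eq σ
    have hum : Q σ ≤ K * b + ((T:ℝ) - K) * a := by
      have h5 := hQm σ
      rw [hsum_eval σ hm] at h5
      exact h5
    have hvm : Q σ ≤ K * d + ((T:ℝ) - K) * cc := by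
      have h5 := hQp σ
      rw [hsum_eval σ hp] at h5
      exact h5
    have hun : Q (en σ) ≤ ((T:ℝ) - K) * b + K * a := by
      have h5 := hQm (en σ)
      rw [hsum_eval (en σ) hm, hkneg σ] at h5
      calc Q (en σ) ≤ _ := h5
        _ = ((T:ℝ) - K) * b + K * a := by rw [← hK]; ring
    have hvn : Q (en σ) ≤ ((T:ℝ) - K) * d + K * cc := by
      have h5 := hQp (en σ)
      rw [hsum_eval (en σ) hp, hkneg σ] at h5
      calc Q (en σ) ≤ _ := h5
        _ = ((T:ℝ) - K) * d + K * cc := by rw [← hK]; ring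
    rcases le_total (2 * K) (T:ℝ) with h2 | h2
    · have habs : |(Dz σ : ℝ)| = (T:ℝ) - 2 * K := by
        rw [hDz, abs_of_nonpos (by linarith)]
        ring
      rw [habs]
      have hmain := pairBound K (T:ℝ) a b cc d η hab hcd h2
      rw [hS]
      linarith [hum, hvn, hmain]
    · have habs : |(Dz σ : ℝ)| = 2 * K - (T:ℝ) := by
        rw [hDz, abs_of_nonneg (by linarith)]
      rw [habs]
      have hmain := pairBound ((T:ℝ) - K) (T:ℝ) a b cc d η hab hcd (by linarith)
      rw [hS]
      have he1 : ((T:ℝ) - ((T:ℝ) - K)) = K := by ring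
      rw [he1] at hmain
      have he2 : ((T:ℝ) - 2 * ((T:ℝ) - K)) = 2 * K - (T:ℝ) := by ring
      rw [he2] at hmain
      linarith [hvm, hun, hmain]
  have hDzsum : ∑ σ : Fin T → Bool, |(Dz σ : ℝ)| = (Ksum T : ℝ) := by
    unfold St4Aux.Ksum
    push_cast
    rfl
  have hQsum : ∑ σ : Fin T → Bool, Q σ
      ≤ (2:ℝ) ^ T * ((T:ℝ) * S / 4) - η / 2 * (Ksum T : ℝ) := by
    have hcomp : ∑ σ : Fin T → Bool, Q (en σ) = ∑ σ : Fin T → Bool, Q σ :=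
      Equiv.sum_comp en Q
    have h2 : 2 * ∑ σ : Fin T → Bool, Q σ = ∑ σ : Fin T → Bool, (Q σ + Q (en σ)) := by
      rw [Finset.sum_add_distrib, hcomp]
      ring
    have h3 : ∑ σ : Fin T → Bool, (Q σ + Q (en σ))
        ≤ ∑ σ : Fin T → Bool, ((T:ℝ) * S / 2 - |(Dz σ : ℝ)| * η) :=
      Finset.sum_le_sum fun σ _ => hQpair σ
    have h4 : ∑ σ : Fin T → Bool, ((T:ℝ) * S / 2 - |(Dz σ : ℝ)| * η)
        = (2:ℝ) ^ T * ((T:ℝ) * S / 2) - η * (Ksum T : ℝ) := by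
      rw [Finset.sum_sub_distrib, Finset.sum_const, hcard2, ← Finset.sum_mul, hDzsum]
      push_cast
      ring
    rw [h4] at h3
    linarith
  -- conclusion
  have hKh := khintchine T
  have hsqrt8 : Real.sqrt ((T:ℝ) / 8) = Real.sqrt ((T:ℝ) / 2) / 2 := by
    rw [show (T:ℝ) / 8 = ((T:ℝ) / 2) / 4 by ring,
      Real.sqrt_div (by positivity) 4,
      show (4:ℝ) = 2 ^ 2 by norm_num, Real.sqrt_sq (by norm_num)]
  have htotal : (2:ℝ) ^ T * (η * Real.sqrt ((T:ℝ) / 8))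
      ≤ ∑ σ : Fin T → Bool, (P σ - Q σ) := by
    rw [Finset.sum_sub_distrib]
    have h5 : η / 2 * ((2:ℝ) ^ T * Real.sqrt ((T:ℝ) / 2)) ≤ η / 2 * (Ksum T : ℝ) :=
      mul_le_mul_of_nonneg_left hKh (by linarith)
    have h6 : (2:ℝ) ^ T * (η * Real.sqrt ((T:ℝ) / 8))
        = η / 2 * ((2:ℝ) ^ T * Real.sqrt ((T:ℝ) / 2)) := by
      rw [hsqrt8]
      ring
    linarith
  have hregsum : ∑ σ : Fin T → Bool,
      expectedRegret H ℓ A (fun t => (x, if σ t then yp else ym))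
        = ∑ σ : Fin T → Bool, (P σ - Q σ) :=
    Finset.sum_congr rfl fun σ _ => hreg σ
  constructor
  · rw [le_div_iff₀ (by positivity), hregsum]
    calc η * Real.sqrt ((T:ℝ) / 8) * 2 ^ T
        = (2:ℝ) ^ T * (η * Real.sqrt ((T:ℝ) / 8)) := by ring
      _ ≤ _ := htotal
  · have hconst : ∑ _σ : Fin T → Bool, η * Real.sqrt ((T:ℝ) / 8)
        = (2:ℝ) ^ T * (η * Real.sqrt ((T:ℝ) / 8)) := by
      rw [Finset.sum_const, hcard2]
      push_cast
      ring
    have hle : ∑ _σ : Fin T → Bool, η * Real.sqrt ((T:ℝ) / 8)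
        ≤ ∑ σ : Fin T → Bool,
          expectedRegret H ℓ A (fun t => (x, if σ t then yp else ym)) := by
      rw [hconst, hregsum]
      exact htotal
    obtain ⟨σ, _, hσ⟩ := Finset.exists_le_of_sum_le Finset.univ_nonempty hle
    exact ⟨σ, hσ⟩
end

section
/- Let Y = Z where Z is a measurable space in which every singleton is measurable, let ℓ(y,z) = 1 if y ≠ z and 0 if y = z, let H ⊆ Z^X, and fix γ ∈ (0, 1/2]. Then for every d ≥ 1: H γ-shatters an SMdim tree of depth d (with respect to ℓ) if and only if H shatters a Littlestone tree of depth d. Consequently SMdim_γ(H) = Ldim(H) for all γ ∈ (0, 1/2]. -/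
open MeasureTheory

/-- `H` shatters a Littlestone tree of depth `d` (`false` stands for `−1`, `true` for `+1`). -/
def LShatter {X Z : Type*} (H : Set (X → Z)) (d : ℕ) : Prop :=
  ∃ (Tt : (t : Fin d) → (Fin t.1 → Bool) → X)
    (f : (t : Fin d) → (Fin (t.1 + 1) → Bool) → Z),
    (∀ σ : Fin d → Bool, ∃ h ∈ H, ∀ t : Fin d,
      h (Tt t fun i => σ (Fin.castLE t.isLt.le i)) = f t fun i => σ (Fin.castLE t.isLt i)) ∧
    (∀ (t : Fin d) (σ : Fin t.1 → Bool), f t (Fin.snoc σ false) ≠ f t (Fin.snoc σ true))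

/-- The Littlestone dimension of `H`, as an extended natural number. -/
noncomputable def Ldim {X Z : Type*} (H : Set (X → Z)) : ℕ∞ :=
  sSup {n : ℕ∞ | ∃ d : ℕ, n = (d : ℕ∞) ∧ LShatter H d}

noncomputable def seqRec {A B : Type*} (G : (t : ℕ) → (Fin (t+1) → A) → (Fin t → B) → B) :
    (t : ℕ) → (Fin t → A) → Fin t → B :=
  Nat.rec (fun _ => Fin.elim0) (fun t prev τ =>
    Fin.snoc (prev (fun i => τ i.castSucc)) (G t τ (prev (fun i => τ i.castSucc))))

lemma seqRec_succ {A B : Type*} (G : (t : ℕ) → (Fin (t+1) → A) → (Fin t → B) → B)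
    (t : ℕ) (τ : Fin (t+1) → A) :
    seqRec G (t+1) τ =
      Fin.snoc (seqRec G t (fun i => τ i.castSucc)) (G t τ (seqRec G t (fun i => τ i.castSucc))) :=
  rfl

lemma seqRec_castLE {A B : Type*} (G : (t : ℕ) → (Fin (t+1) → A) → (Fin t → B) → B) :
    ∀ (t s : ℕ) (h : s ≤ t) (τ : Fin t → A) (i : Fin s),
      seqRec G t τ (Fin.castLE h i) = seqRec G s (fun j => τ (Fin.castLE h j)) i := by
  intro t
  induction t with
  | zero => intro s h τ i; interval_cases s; exact i.elim0
  | succ t ih =>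
    intro s h τ i
    rcases Nat.lt_succ_iff_lt_or_eq.mp (Nat.lt_succ_of_le h) with hs | hs
    · have hs' : s ≤ t := Nat.lt_succ_iff.mp hs
      have e1 : Fin.castLE h i = Fin.castSucc (Fin.castLE hs' i) := rfl
      rw [e1, seqRec_succ, Fin.snoc_castSucc, ih s hs']
      rfl
    · subst hs
      have e1 : Fin.castLE h i = i := rfl
      have e2 : (fun j => τ (Fin.castLE h j)) = τ := rfl
      rw [e1, e2]

lemma integral_loss {Z : Type*} [MeasurableSpace Z] [MeasurableSingletonClass Z] [DecidableEq Z]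
    (μ : ProbabilityMeasure Z) (y : Z) :
    ∫ z, (if y = z then (0:ℝ) else 1) ∂(μ : Measure Z)
      = 1 - ((μ : Measure Z) {y}).toReal := by
  have h1 : (fun z => if y = z then (0:ℝ) else 1) = Set.indicator {y}ᶜ (fun _ => (1:ℝ)) := by
    funext z
    by_cases h : y = z <;> simp [h, Set.indicator, eq_comm]
  rw [h1, MeasureTheory.integral_indicator_const _ (measurableSet_singleton y).compl]
  rw [measureReal_def]
  rw [prob_compl_eq_one_sub (measurableSet_singleton y)]
  rw [ENNReal.toReal_sub_of_le prob_le_one ENNReal.one_ne_top]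
  simp

noncomputable def diracPM {Z : Type*} [MeasurableSpace Z] (z : Z) : ProbabilityMeasure Z :=
  ⟨MeasureTheory.Measure.dirac z, inferInstance⟩

lemma key {X Z : Type*} [MeasurableSpace Z] [MeasurableSingletonClass Z]
    [DecidableEq Z] [Nonempty X]
    (H : Set (X → Z)) (hH : H.Nonempty)
    (γ : ℝ) (hγ0 : 0 < γ) (hγ : γ ≤ 1 / 2) (d : ℕ) :
    SMShatter H (fun y z => if y = z then (0 : ℝ) else 1) γ d ↔ LShatter H d := by
  simp only [SMShatter, LShatter]
  constructor
  · rintro ⟨Tt, f, hSM⟩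
    obtain ⟨h0, hh0⟩ := hH
    obtain ⟨x0⟩ := ‹Nonempty X›
    set ν0 : ProbabilityMeasure Z := diracPM (h0 x0) with hν0
    set G : (t : ℕ) → (Fin (t+1) → Bool) → (Fin t → ProbabilityMeasure Z) → ProbabilityMeasure Z :=
      fun t τ P => if h : t < d then
        (if τ (Fin.last t) then diracPM (f ⟨t, h⟩ (Fin.snoc P ν0)) else ν0)
      else ν0 with hG
    set M := seqRec G with hM
    refine ⟨fun t τ => Tt t (M t.1 τ), fun t τ => f t (M (t.1+1) τ), ?_, ?_⟩
    · intro σ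
      obtain ⟨h, hhH, hc⟩ := hSM (M d σ)
      refine ⟨h, hhH, fun t => ?_⟩
      have hc' := hc t
      have e1 : (fun i : Fin (t.1+1) => M d σ (Fin.castLE t.isLt i))
          = M (t.1+1) (fun i => σ (Fin.castLE t.isLt i)) := by
        funext i; exact seqRec_castLE G d (t.1+1) t.isLt σ i
      have e2 : (fun i : Fin t.1 => M d σ (Fin.castLE t.isLt.le i))
          = M t.1 (fun i => σ (Fin.castLE t.isLt.le i)) := by
        funext i; exact seqRec_castLE G d t.1 t.isLt.le σ i
      rw [e1, e2, integral_loss] at hc'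
      by_cases heq : f t (M (t.1+1) fun i => σ (Fin.castLE t.isLt i))
          = h (Tt t (M t.1 fun i => σ (Fin.castLE t.isLt.le i)))
      · exact heq.symm
      · exfalso
        rw [if_neg heq] at hc'
        have h2 : (0:ℝ) ≤ ((M d σ t : Measure Z)
            {f t (M (t.1+1) fun i => σ (Fin.castLE t.isLt i))}).toReal := ENNReal.toReal_nonneg
        linarith
    · intro t σ'
      beta_reduce
      have hlt : t.1 < d := t.isLt
      set P := M t.1 σ' with hP
      have hcs : ∀ b : Bool, (fun i : Fin t.1 => (Fin.snoc σ' b : Fin (t.1+1) → Bool) i.castSucc) = σ' := by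
        intro b; funext i; simp
      have hfalse : M (t.1+1) (Fin.snoc σ' false) = Fin.snoc P ν0 := by
        rw [hM, seqRec_succ, hcs false]
        simp [hG, hlt]
        rfl
      set z0 := f t (Fin.snoc P ν0) with hz0
      have htrue : M (t.1+1) (Fin.snoc σ' true) = Fin.snoc P (diracPM z0) := by
        rw [hM, seqRec_succ, hcs true]
        simp only [hG, dif_pos hlt, Fin.snoc_last, if_pos]
        rfl
      rw [hfalse, htrue]
      intro heq
      set Q : Fin (t.1+1) → ProbabilityMeasure Z := Fin.snoc P (diracPM z0) with hQ
      obtain ⟨h, hhH, hc⟩ := hSM (fun s : Fin d => if hs : s.1 < t.1+1 then Q ⟨s.1, hs⟩ else ν0)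
      have hc' := hc t
      have e1 : (fun i : Fin (t.1+1) =>
          if hs : (Fin.castLE t.isLt i).1 < t.1+1 then Q ⟨(Fin.castLE t.isLt i).1, hs⟩ else ν0)
          = Q := by
        funext i
        rw [dif_pos (show (Fin.castLE t.isLt i).1 < t.1+1 from i.isLt)]
        rfl
      have e2 : (if hs : t.1 < t.1+1 then Q ⟨t.1, hs⟩ else ν0) = diracPM z0 := by
        rw [dif_pos (Nat.lt_succ_self t.1)]
        exact Fin.snoc_last _ _
      rw [e1] at hc'
      rw [e2] at hc'
      rw [show ((diracPM z0 : ProbabilityMeasure Z) : Measure Z) = Measure.dirac z0 from rfl,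
        integral_dirac] at hc'
      rw [if_pos heq.symm] at hc'
      have h3 : (0:ℝ) ≤ if f t Q = h (Tt t fun i =>
          if hs : (Fin.castLE t.isLt.le i).1 < t.1+1 then Q ⟨(Fin.castLE t.isLt.le i).1, hs⟩ else ν0)
          then (0:ℝ) else 1 := by
        split <;> norm_num
      linarith
  · rintro ⟨Tt, f, hL, hne⟩
    set G' : (t : ℕ) → (Fin (t+1) → ProbabilityMeasure Z) → (Fin t → Bool) → Bool :=
      fun t μ σp => if h : t < d then
        (if ((μ (Fin.last t) : Measure Z) {f ⟨t, h⟩ (Fin.snoc σp false)}).toReal ≤ 1/2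
          then false else true)
      else false with hG
    set B := seqRec G' with hB
    refine ⟨fun t μp => Tt t (B t.1 μp), fun t μs => f t (B (t.1+1) μs), fun μ => ?_⟩
    obtain ⟨h, hhH, hval⟩ := hL (B d μ)
    refine ⟨h, hhH, fun t => ?_⟩
    beta_reduce
    have e1 : B (t.1+1) (fun i => μ (Fin.castLE t.isLt i))
        = fun i => B d μ (Fin.castLE t.isLt i) := by
      funext i; exact (seqRec_castLE G' d (t.1+1) t.isLt μ i).symm
    have e2 : B t.1 (fun i => μ (Fin.castLE t.isLt.le i))
        = fun i => B d μ (Fin.castLE t.isLt.le i) := by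
      funext i; exact (seqRec_castLE G' d t.1 t.isLt.le μ i).symm
    rw [e1, e2, hval t, if_pos rfl, integral_loss]
    -- main bound
    set σp : Fin t.1 → Bool := fun i => B d μ (Fin.castLE t.isLt.le i) with hσp
    have hA : (fun i : Fin (t.1+1) => B d μ (Fin.castLE t.isLt i)) = Fin.snoc σp (B d μ t) := by
      funext i
      refine Fin.lastCases ?_ (fun j => ?_) i
      · rw [Fin.snoc_last]
        congr 1
      · rw [Fin.snoc_castSucc]
        rfl
    have hBt : B d μ t = G' t.1 (fun j => μ (Fin.castLE t.isLt j)) σp := by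
      have h1 : t = Fin.castLE t.isLt (Fin.last t.1) := Fin.ext rfl
      rw [hB]
      conv_lhs => rw [h1]
      rw [seqRec_castLE G' d (t.1+1) t.isLt μ (Fin.last t.1), seqRec_succ, Fin.snoc_last]
      have e3 : (seqRec G' t.1 fun i => μ (Fin.castLE t.isLt i.castSucc)) = σp := by
        funext i
        exact (seqRec_castLE G' d t.1 t.isLt.le μ i).symm
      rw [e3]
    have hG'val : G' t.1 (fun j => μ (Fin.castLE t.isLt j)) σp
        = (if ((μ t : Measure Z) {f t (Fin.snoc σp false)}).toReal ≤ 1/2 then false else true) := by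
      show (if h : t.1 < d then
          (if ((μ (Fin.castLE t.isLt (Fin.last t.1)) : Measure Z)
              {f ⟨t.1, h⟩ (Fin.snoc σp false)}).toReal ≤ 1/2 then false else true)
        else false) = _
      rw [dif_pos t.isLt]
      rfl
    have hbound : ((μ t : Measure Z) {f t (Fin.snoc σp (B d μ t))}).toReal ≤ 1/2 := by
      by_cases hle : ((μ t : Measure Z) {f t (Fin.snoc σp false)}).toReal ≤ 1/2
      · have : B d μ t = false := by rw [hBt, hG'val, if_pos hle]
        rw [this]; exact hle
      · have hBtrue : B d μ t = true := by rw [hBt, hG'val, if_neg hle]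
        rw [hBtrue]
        have hneq : f t (Fin.snoc σp false) ≠ f t (Fin.snoc σp true) := hne t σp
        have hsub : ({f t (Fin.snoc σp true)} : Set Z) ⊆ ({f t (Fin.snoc σp false)}ᶜ : Set Z) := by
          intro z hz
          simp only [Set.mem_singleton_iff] at hz
          simp [hz]
          exact fun e => hneq e.symm
        have hmono : (μ t : Measure Z) {f t (Fin.snoc σp true)}
            ≤ (μ t : Measure Z) {f t (Fin.snoc σp false)}ᶜ := measure_mono hsub
        have hcompl : ((μ t : Measure Z) {f t (Fin.snoc σp false)}ᶜ).toReal
            = 1 - ((μ t : Measure Z) {f t (Fin.snoc σp false)}).toReal := by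
          rw [prob_compl_eq_one_sub (measurableSet_singleton _),
            ENNReal.toReal_sub_of_le prob_le_one ENNReal.one_ne_top]
          simp
        have := ENNReal.toReal_mono (measure_ne_top _ _) hmono
        rw [hcompl] at this
        push_neg at hle
        linarith
    rw [hA]
    linarith

/-- for the 0-1 loss (with `Y = Z`), for every `γ ∈ (0, 1/2]` and every
`d ≥ 1`, `H` γ-shatters an SMdim tree of depth `d` iff `H` shatters a Littlestone tree of
depth `d`; consequently `SMdim_γ(H) = Ldim(H)`. -/
theorem statement5 {X Z : Type*} [MeasurableSpace Z] [MeasurableSingletonClass Z]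
    [DecidableEq Z] [Nonempty X]
    (H : Set (X → Z)) (hH : H.Nonempty)
    (γ : ℝ) (hγ0 : 0 < γ) (hγ : γ ≤ 1 / 2) :
    (∀ d : ℕ, 1 ≤ d →
      (SMShatter H (fun y z => if y = z then (0 : ℝ) else 1) γ d ↔ LShatter H d)) ∧
    SMdim H (fun y z => if y = z then (0 : ℝ) else 1) γ = Ldim H := by
  have k : ∀ d : ℕ, SMShatter H (fun y z => if y = z then (0 : ℝ) else 1) γ d ↔ LShatter H d :=
    key H hH γ hγ0 hγ
  refine ⟨fun d _ => k d, ?_⟩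
  unfold SMdim Ldim
  congr 1
  ext n
  simp only [Set.mem_setOf_eq]
  constructor <;> rintro ⟨d, rfl, hd⟩
  · exact ⟨d, rfl, (k d).mp hd⟩
  · exact ⟨d, rfl, (k d).mpr hd⟩
end

section
/- Let Y = Z = [−1,1] with the Borel σ-algebra, let ℓ(y,z) = |y − z|, let H ⊆ [−1,1]^X, and fix γ ∈ (0,1]. If H γ-shatters a sequential fat-shattering tree of depth d, then H γ-shatters an SMdim tree of depth d (with respect to ℓ). Consequently seq-fat_γ(H) ≤ SMdim_γ(H). -/
open MeasureTheory

/-- `H ⊆ [−1,1]^X` γ-shatters a sequential fat-shattering tree of depth `d`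
(`false` stands for `−1`, `true` for `+1`; the two outgoing edges of a node carry the
same witness `f t`). -/
def FatShatter {X : Type*} (H : Set (X → Set.Icc (-1 : ℝ) 1)) (γ : ℝ) (d : ℕ) : Prop :=
  ∃ (Tt : (t : Fin d) → (Fin t.1 → Bool) → X)
    (f : (t : Fin d) → (Fin (t.1 + 1) → Bool) → Set.Icc (-1 : ℝ) 1),
    (∀ (t : Fin d) (σ : Fin t.1 → Bool), f t (Fin.snoc σ false) = f t (Fin.snoc σ true)) ∧
    (∀ σ : Fin d → Bool, ∃ h ∈ H, ∀ t : Fin d,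
      γ ≤ (if σ t then (1 : ℝ) else -1) *
        ((h (Tt t fun i => σ (Fin.castLE t.isLt.le i)) : ℝ) -
          (f t fun i => σ (Fin.castLE t.isLt i) : ℝ)))

/-- The sequential fat-shattering dimension of `H` at scale `γ`. -/
noncomputable def seqFatDim {X : Type*} (H : Set (X → Set.Icc (-1 : ℝ) 1)) (γ : ℝ) : ℕ∞ :=
  sSup {n : ℕ∞ | ∃ d : ℕ, n = (d : ℕ∞) ∧ FatShatter H γ d}


namespace Stmt6Aux

abbrev Zc := Set.Icc (-1:ℝ) 1

lemma integrable_coeZ (μ : ProbabilityMeasure Zc) :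
    Integrable (fun z : Zc => (z : ℝ)) (μ : Measure Zc) := by
  refine (integrable_const (1:ℝ)).mono' continuous_subtype_val.aestronglyMeasurable ?_
  refine Filter.Eventually.of_forall fun z => ?_
  have h := z.2
  rw [Set.mem_Icc] at h
  rw [Real.norm_eq_abs]
  exact abs_le.mpr ⟨h.1, h.2⟩

noncomputable def meanZ (μ : ProbabilityMeasure Zc) : ℝ :=
  ∫ z, (z : ℝ) ∂(μ : Measure Zc)

lemma int_abs_one_sub (μ : ProbabilityMeasure Zc) :
    ∫ z, |(1:ℝ) - (z:ℝ)| ∂(μ : Measure Zc) = 1 - meanZ μ := by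
  have h : ∀ z : Zc, |(1:ℝ) - (z:ℝ)| = 1 - (z:ℝ) := fun z => abs_of_nonneg (by linarith [z.2.2])
  rw [show (fun z : Zc => |(1:ℝ) - (z:ℝ)|) = (fun z : Zc => 1 - (z:ℝ)) from funext h]
  rw [integral_sub (integrable_const 1) (integrable_coeZ μ), integral_const]
  simp [meanZ]

lemma int_abs_neg_one_sub (μ : ProbabilityMeasure Zc) :
    ∫ z, |(-1:ℝ) - (z:ℝ)| ∂(μ : Measure Zc) = meanZ μ + 1 := by
  have h : ∀ z : Zc, |(-1:ℝ) - (z:ℝ)| = (z:ℝ) + 1 := fun z => by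
    rw [show (-1:ℝ) - (z:ℝ) = -((z:ℝ) + 1) from by ring, abs_neg]
    exact abs_of_nonneg (by linarith [z.2.1])
  rw [show (fun z : Zc => |(-1:ℝ) - (z:ℝ)|) = (fun z : Zc => (z:ℝ) + 1) from funext h]
  rw [integral_add (integrable_coeZ μ) (integrable_const 1), integral_const]
  simp [meanZ]

/-- The bit sequence determined by a sequence of measures and the fat-shattering tree `f`. -/
noncomputable def mkbits {d : ℕ}
    (f : (t : Fin d) → (Fin (t.1 + 1) → Bool) → Zc)
    (μ : Fin d → ProbabilityMeasure Zc) :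
    (n : ℕ) → n ≤ d → (Fin n → Bool)
  | 0, _ => fun i => i.elim0
  | n+1, h => Fin.snoc (mkbits f μ n (Nat.le_of_succ_le h))
      (decide (meanZ (μ ⟨n, h⟩) ≤
        (f ⟨n, h⟩ (Fin.snoc (mkbits f μ n (Nat.le_of_succ_le h)) false) : ℝ)))

lemma mkbits_congr {d : ℕ}
    (f : (t : Fin d) → (Fin (t.1 + 1) → Bool) → Zc)
    (μ ν : Fin d → ProbabilityMeasure Zc) :
    ∀ (n : ℕ) (hn : n ≤ d), (∀ i : Fin d, i.1 < n → μ i = ν i) →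
      mkbits f μ n hn = mkbits f ν n hn := by
  intro n
  induction n with
  | zero => intro hn _; funext i; exact i.elim0
  | succ n ih =>
    intro hn hagree
    have hprev : mkbits f μ n (Nat.le_of_succ_le hn) = mkbits f ν n (Nat.le_of_succ_le hn) :=
      ih _ fun i hi => hagree i (Nat.lt_succ_of_lt hi)
    show Fin.snoc _ _ = Fin.snoc _ _
    rw [hprev, hagree ⟨n, hn⟩ (Nat.lt_succ_self n)]

lemma mkbits_succ_apply {d : ℕ}
    (f : (t : Fin d) → (Fin (t.1 + 1) → Bool) → Zc)
    (μ : Fin d → ProbabilityMeasure Zc)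
    (n : ℕ) (hn : n + 1 ≤ d) (j : ℕ) (hj : j < n) :
    mkbits f μ (n+1) hn ⟨j, Nat.lt_succ_of_lt hj⟩
      = mkbits f μ n (Nat.le_of_succ_le hn) ⟨j, hj⟩ := by
  show Fin.snoc _ _ _ = _
  have : (⟨j, Nat.lt_succ_of_lt hj⟩ : Fin (n+1)) = Fin.castSucc ⟨j, hj⟩ := rfl
  rw [this, Fin.snoc_castSucc]

lemma mkbits_agree {d : ℕ}
    (f : (t : Fin d) → (Fin (t.1 + 1) → Bool) → Zc)
    (μ : Fin d → ProbabilityMeasure Zc) :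
    ∀ (n : ℕ) (hn : n ≤ d) (m : ℕ) (hm : m ≤ n) (j : ℕ) (hjm : j < m),
      mkbits f μ n hn ⟨j, lt_of_lt_of_le hjm hm⟩ = mkbits f μ m (hm.trans hn) ⟨j, hjm⟩ := by
  intro n
  induction n with
  | zero => intro hn m hm j hjm; omega
  | succ n ih =>
    intro hn m hm j hjm
    rcases Nat.lt_or_ge m (n+1) with hlt | hge
    · have hm' : m ≤ n := Nat.lt_succ_iff.mp hlt
      have hjn : j < n := lt_of_lt_of_le hjm hm'
      rw [mkbits_succ_apply f μ n hn j hjn]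
      exact ih (Nat.le_of_succ_le hn) m hm' j hjm
    · have : m = n + 1 := le_antisymm hm hge
      subst this
      rfl

end Stmt6Aux

namespace Stmt6Aux
open MeasureTheory

def oneZ : Zc := ⟨1, Set.mem_Icc.mpr (by norm_num)⟩
def negOneZ : Zc := ⟨-1, Set.mem_Icc.mpr (by norm_num)⟩
noncomputable def zeroP : ProbabilityMeasure Zc :=
  ⟨Measure.dirac ⟨0, Set.mem_Icc.mpr (by norm_num)⟩, inferInstance⟩

lemma int_oneZ (μ : ProbabilityMeasure Zc) :
    ∫ z, |(oneZ:ℝ) - (z:ℝ)| ∂(μ : Measure Zc) = 1 - meanZ μ := int_abs_one_sub μ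

lemma int_negOneZ (μ : ProbabilityMeasure Zc) :
    ∫ z, |(negOneZ:ℝ) - (z:ℝ)| ∂(μ : Measure Zc) = meanZ μ + 1 := int_abs_neg_one_sub μ

lemma fat_to_SM {X : Type*} (H : Set (X → Zc)) (γ : ℝ) (d : ℕ)
    (hfat : FatShatter H γ d) :
    SMShatter H (fun (y z : Zc) => |(y : ℝ) - (z : ℝ)|) γ d := by
  obtain ⟨Tt, f, hf, hsh⟩ := hfat
  refine ⟨fun t ms => Tt t (mkbits f
      (fun i : Fin d => if h : i.1 < t.1 then ms ⟨i.1, h⟩ else zeroP) t.1 t.isLt.le),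
    fun t ms => if (mkbits f
      (fun i : Fin d => if h : i.1 < t.1 + 1 then ms ⟨i.1, h⟩ else zeroP)
      (t.1 + 1) t.isLt) (Fin.last t.1) then oneZ else negOneZ, ?_⟩
  intro μ
  set B : Fin d → Bool := mkbits f μ d le_rfl with hB
  obtain ⟨h, hHh, hcond⟩ := hsh B
  refine ⟨h, hHh, ?_⟩
  intro t
  dsimp only
  have h1 : mkbits f (fun i : Fin d =>
      if hi : i.1 < t.1 then μ (Fin.castLE t.isLt.le ⟨i.1, hi⟩) else zeroP) t.1 t.isLt.le
      = mkbits f μ t.1 t.isLt.le := by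
    refine mkbits_congr f _ μ t.1 t.isLt.le fun i hi => ?_
    rw [dif_pos hi]
    exact congrArg μ (Fin.ext rfl)
  have h2 : mkbits f (fun i : Fin d =>
      if hi : i.1 < t.1 + 1 then μ (Fin.castLE t.isLt ⟨i.1, hi⟩) else zeroP) (t.1+1) t.isLt
      = mkbits f μ (t.1+1) t.isLt := by
    refine mkbits_congr f _ μ (t.1+1) t.isLt fun i hi => ?_
    rw [dif_pos hi]
    exact congrArg μ (Fin.ext rfl)
  rw [h1, h2]
  set prev : Fin t.1 → Bool := mkbits f μ t.1 t.isLt.le with hprev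
  have h3 : mkbits f μ t.1 t.isLt.le = fun i : Fin t.1 => B (Fin.castLE t.isLt.le i) := by
    funext i
    exact (mkbits_agree f μ d le_rfl t.1 t.isLt.le i.1 i.isLt).symm
  have h4 : mkbits f μ (t.1+1) t.isLt (Fin.last t.1) = B t :=
    (mkbits_agree f μ d le_rfl (t.1+1) t.isLt t.1 (Nat.lt_succ_self _)).symm
  have hunfold : mkbits f μ (t.1+1) t.isLt
      = Fin.snoc prev (decide (meanZ (μ t) ≤ (f t (Fin.snoc prev false) : ℝ))) := rfl
  have hb' : B t = decide (meanZ (μ t) ≤ (f t (Fin.snoc prev false) : ℝ)) := by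
    rw [← h4, hunfold, Fin.snoc_last]
  have h5 : (fun i : Fin (t.1+1) => B (Fin.castLE t.isLt i)) = Fin.snoc prev (B t) := by
    funext i
    rcases Nat.lt_or_ge i.1 t.1 with hi | hi
    · have hieq : i = Fin.castSucc ⟨i.1, hi⟩ := Fin.ext rfl
      rw [hieq, Fin.snoc_castSucc]
      exact mkbits_agree f μ d le_rfl t.1 t.isLt.le i.1 hi
    · have hieq : i = Fin.last t.1 := Fin.ext (le_antisymm (Nat.lt_succ_iff.mp i.isLt) hi)
      rw [hieq, Fin.snoc_last]
      exact congrArg B (Fin.ext rfl)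
  have hc := hcond t
  have h3' : (fun i : Fin t.1 => B (Fin.castLE t.isLt.le i)) = prev := (hprev.trans h3).symm
  rw [h3'] at hc
  rw [h4]
  have hxmem := Set.mem_Icc.mp (h (Tt t prev)).2
  cases hbt : B t with
  | true =>
    rw [show (if (true : Bool) = true then oneZ else negOneZ) = oneZ from rfl]
    rw [int_oneZ]
    have hmean : meanZ (μ t) ≤ (f t (Fin.snoc prev false) : ℝ) :=
      of_decide_eq_true (hb'.symm.trans hbt)
    have hFv : (f t fun i => B (Fin.castLE t.isLt i) : ℝ) = (f t (Fin.snoc prev false) : ℝ) := by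
      rw [h5, hbt, ← hf t prev]
    rw [hbt, show (if (true : Bool) = true then (1:ℝ) else -1) = 1 from rfl, one_mul] at hc
    rw [hFv] at hc
    have hone : (oneZ : ℝ) = 1 := rfl
    rw [hone, abs_of_nonneg (by linarith [hxmem.2])]
    linarith
  | false =>
    rw [show (if (false : Bool) = true then oneZ else negOneZ) = negOneZ from rfl]
    rw [int_negOneZ]
    have hmean : ¬ (meanZ (μ t) ≤ (f t (Fin.snoc prev false) : ℝ)) :=
      of_decide_eq_false (hb'.symm.trans hbt)
    have hFv : (f t fun i => B (Fin.castLE t.isLt i) : ℝ) = (f t (Fin.snoc prev false) : ℝ) := by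
      rw [h5, hbt]
    rw [hbt, show (if (false : Bool) = true then (1:ℝ) else -1) = -1 from rfl, neg_one_mul] at hc
    rw [hFv] at hc
    have hone : (negOneZ : ℝ) = -1 := rfl
    rw [hone, abs_of_nonpos (by linarith [hxmem.1])]
    push_neg at hmean
    linarith

end Stmt6Aux

/-- for `Y = Z = [−1,1]` with the absolute value loss and `γ ∈ (0,1]`, if
`H` γ-shatters a sequential fat-shattering tree of depth `d` then it γ-shatters an SMdim
tree of depth `d`; consequently `seq-fat_γ(H) ≤ SMdim_γ(H)`. -/
theorem statement6 {X : Type*} [Nonempty X]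
    (H : Set (X → Set.Icc (-1 : ℝ) 1)) (hH : H.Nonempty)
    (γ : ℝ) (hγ0 : 0 < γ) (hγ : γ ≤ 1)
    (d : ℕ) (hfat : FatShatter H γ d) :
    SMShatter H (fun (y z : Set.Icc (-1 : ℝ) 1) => |(y : ℝ) - (z : ℝ)|) γ d ∧
      seqFatDim H γ ≤ SMdim H (fun (y z : Set.Icc (-1 : ℝ) 1) => |(y : ℝ) - (z : ℝ)|) γ := by
  constructor
  · exact Stmt6Aux.fat_to_SM H γ d hfat
  · refine sSup_le_sSup ?_
    rintro n ⟨d', hnd, hfd⟩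
    exact ⟨d', hnd, Stmt6Aux.fat_to_SM H γ d' hfd⟩
end

section
/- Let Y = Z = [−1,1] with the Borel σ-algebra, let ℓ(y,z) = |y − z|, let H ⊆ [−1,1]^X, and fix 0 < γ' < γ ≤ 1. If H γ-shatters an SMdim tree of depth d (with respect to ℓ), then H γ'-shatters a sequential fat-shattering tree of depth d. Consequently SMdim_γ(H) ≤ seq-fat_{γ'}(H) for all γ' < γ. -/
open MeasureTheory

abbrev II := Set.Icc (-1 : ℝ) 1

noncomputable def Dm (s : II) : ProbabilityMeasure II := ⟨Measure.dirac s, inferInstance⟩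

lemma integral_Dm (y s : II) :
    ∫ z, |(y : ℝ) - (z : ℝ)| ∂((Dm s : Measure II)) = |(y : ℝ) - (s : ℝ)| := by
  show ∫ z, |(y:ℝ) - (z:ℝ)| ∂(Measure.dirac s) = _
  rw [integral_dirac]

def Aset (F : II → ℝ) : Set ℝ :=
  {s : ℝ | ∃ hm : s ∈ Set.Icc (-1 : ℝ) 1, s < F ⟨s, hm⟩}

lemma Aset_bddAbove (F : II → ℝ) : BddAbove (Aset F) :=
  BddAbove.mono (fun s hs => hs.choose) (bddAbove_Icc)

lemma Aset_mem_Icc (F : II → ℝ) {s : ℝ} (hs : s ∈ Aset F) : s ∈ Set.Icc (-1:ℝ) 1 := hs.choose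

noncomputable def sPlus (η : ℝ) (F : II → ℝ) : II :=
  @dite II (∃ s, s ∈ Aset F ∧ sSup (Aset F) - η < s) (Classical.dec _)
    (fun h => ⟨h.choose, h.choose_spec.1.choose⟩) (fun _ => ⟨0, by norm_num⟩)

lemma sPlus_spec {η : ℝ} (hη : 0 < η) {F : II → ℝ} (hne : (Aset F).Nonempty) :
    (sPlus η F : ℝ) ∈ Aset F ∧ sSup (Aset F) - η < (sPlus η F : ℝ) := by
  have h : ∃ s, s ∈ Aset F ∧ sSup (Aset F) - η < s := by
    obtain ⟨a, ha, hlt⟩ := exists_lt_of_lt_csSup hne (by linarith : sSup (Aset F) - η < sSup (Aset F))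
    exact ⟨a, ha, hlt⟩
  rw [sPlus, dif_pos h]
  exact h.choose_spec

noncomputable def sMinusV (η : ℝ) (F : II → ℝ) : II :=
  ⟨max (-1) (min (sSup (Aset F) + η) 1),
    ⟨le_max_left _ _, max_le (by norm_num) (min_le_right _ _)⟩⟩

lemma sMinusV_coe {η : ℝ} (hη : 0 < η) {F : II → ℝ} (hne : (Aset F).Nonempty) :
    (sMinusV η F : ℝ) = min (sSup (Aset F) + η) 1 := by
  obtain ⟨a, ha⟩ := hne
  have h1 : -1 ≤ a := (Aset_mem_Icc F ha).1
  have h2 : a ≤ sSup (Aset F) := le_csSup (Aset_bddAbove F) ha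
  exact max_eq_right (le_min (by linarith) (by norm_num))

lemma sMinus_notMem {η : ℝ} (hη : 0 < η) {F : II → ℝ} (hF : ∀ s, F s ≤ 1) :
    min (sSup (Aset F) + η) 1 ∉ Aset F := by
  intro hmem
  have hle := le_csSup (Aset_bddAbove F) hmem
  rcases le_or_gt (sSup (Aset F) + η) 1 with h | h
  · rw [min_eq_left h] at hle; linarith
  · rw [min_eq_right h.le] at hmem
    obtain ⟨hm, hlt⟩ := hmem
    exact absurd (hF ⟨1, hm⟩) (not_le.mpr hlt)

noncomputable def gval (η : ℝ) (F : II → ℝ) : II :=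
  ⟨max (-1) (min ((sPlus η F : ℝ) + η) 1),
    ⟨le_max_left _ _, max_le (by norm_num) (min_le_right _ _)⟩⟩

lemma gval_eq {η : ℝ} (hη : 0 < η) (F : II → ℝ) :
    (gval η F : ℝ) = min ((sPlus η F : ℝ) + η) 1 := by
  have h1 : -1 ≤ (sPlus η F : ℝ) := (sPlus η F).2.1
  exact max_eq_right (le_min (by linarith) (by norm_num))

noncomputable def buildAux {P : Type*} (step : (t : ℕ) → (Fin t → P) → Bool → P) :
    (t : ℕ) → (Fin t → Bool) → (Fin t → P)
  | 0, _ => fun i => i.elim0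
  | (t+1), σ => Fin.snoc (buildAux step t fun i => σ i.castSucc)
      (step t (buildAux step t fun i => σ i.castSucc) (σ (Fin.last t)))

lemma buildAux_prefix {P : Type*} (step : (t : ℕ) → (Fin t → P) → Bool → P) :
    ∀ (t' t : ℕ) (h : t ≤ t') (σ : Fin t' → Bool) (i : Fin t),
      buildAux step t' σ (Fin.castLE h i) =
        buildAux step t (fun j => σ (Fin.castLE h j)) i := by
  intro t'
  induction t' with
  | zero =>
    intro t h σ i
    have ht : t = 0 := Nat.le_zero.mp h
    subst ht
    exact i.elim0
  | succ t' ih =>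
    intro t h σ i
    rcases eq_or_lt_of_le h with he | hlt
    · subst he
      have hc : Fin.castLE h i = i := Fin.ext (by simp)
      rw [hc]
      have hσ : (fun j : Fin (t'+1) => σ (Fin.castLE h j)) = σ :=
        funext fun j => congrArg σ (Fin.ext (by simp))
      rw [hσ]
    · have h' : t ≤ t' := Nat.lt_succ_iff.mp hlt
      have hcast : Fin.castLE h i = Fin.castSucc (Fin.castLE h' i) := Fin.ext (by simp)
      have hunf : buildAux step (t'+1) σ = Fin.snoc (buildAux step t' fun j => σ j.castSucc)
          (step t' (buildAux step t' fun j => σ j.castSucc) (σ (Fin.last t'))) := rfl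
      rw [hunf, hcast, Fin.snoc_castSucc, ih t h' (fun j => σ j.castSucc) i]
      congr 1

lemma neg_one_mem_II : (-1 : ℝ) ∈ Set.Icc (-1 : ℝ) 1 := by norm_num

noncomputable def em1 : II := ⟨-1, neg_one_mem_II⟩

lemma branch_true {γ γ' η : ℝ} (hγ'0 : 0 < γ') (hγ'γ : γ' < γ) (hηdef : η = γ - γ')
    (F : II → ℝ) (hne : (Aset F).Nonempty) (v : ℝ)
    (hineq : |F (sPlus η F) - v| + γ ≤ |F (sPlus η F) - (sPlus η F : ℝ)|) :
    γ' ≤ 1 * (v - (gval η F : ℝ)) := by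
  have hη0 : 0 < η := by rw [hηdef]; linarith
  obtain ⟨hmem, hsup⟩ := sPlus_spec hη0 hne
  obtain ⟨hmI, hlt⟩ := hmem
  have heq : (⟨((sPlus η F : ℝ)), hmI⟩ : II) = sPlus η F := Subtype.ext rfl
  rw [heq] at hlt
  have e1 : F (sPlus η F) - v ≤ |F (sPlus η F) - v| := le_abs_self _
  have e2 : |F (sPlus η F) - (sPlus η F : ℝ)| = F (sPlus η F) - (sPlus η F : ℝ) :=
    abs_of_pos (by linarith)
  have e4 : (gval η F : ℝ) ≤ (sPlus η F : ℝ) + η := by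
    rw [gval_eq hη0]; exact min_le_left _ _
  rw [e2] at hineq
  linarith

lemma branch_false {γ γ' η : ℝ} (hγ'0 : 0 < γ') (hγ'γ : γ' < γ) (hγ1 : γ ≤ 1) (hηdef : η = γ - γ')
    (F : II → ℝ) (hF1 : ∀ s, F s ≤ 1) (hne : (Aset F).Nonempty) (v : ℝ)
    (hineq : |F (sMinusV η F) - v| + γ ≤ |F (sMinusV η F) - (sMinusV η F : ℝ)|) :
    γ' ≤ -1 * (v - (gval η F : ℝ)) := by
  have hη0 : 0 < η := by rw [hηdef]; linarith
  obtain ⟨hmem, hsup⟩ := sPlus_spec hη0 hne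
  have hnm := sMinus_notMem hη0 hF1
  have hcoe : (sMinusV η F : ℝ) = min (sSup (Aset F) + η) 1 := sMinusV_coe hη0 hne
  have hm : min (sSup (Aset F) + η) 1 ∈ Set.Icc (-1 : ℝ) 1 := hcoe ▸ (sMinusV η F).2
  have heq2 : (⟨min (sSup (Aset F) + η) 1, hm⟩ : II) = sMinusV η F := Subtype.ext hcoe.symm
  have hFle : F (sMinusV η F) ≤ (sMinusV η F : ℝ) := by
    by_contra hc
    push_neg at hc
    refine hnm ⟨hm, ?_⟩
    rw [heq2, ← hcoe]
    exact hc
  have e1 : v - F (sMinusV η F) ≤ |F (sMinusV η F) - v| := by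
    rw [abs_sub_comm]; exact le_abs_self _
  have e2 : |F (sMinusV η F) - (sMinusV η F : ℝ)| = (sMinusV η F : ℝ) - F (sMinusV η F) := by
    rw [abs_sub_comm]; exact abs_of_nonneg (by linarith)
  rw [e2] at hineq
  have hv : v ≤ (sMinusV η F : ℝ) - γ := by linarith
  have hsm1 : (sMinusV η F : ℝ) ≤ sSup (Aset F) + η := by rw [hcoe]; exact min_le_left _ _
  have hsm2 : (sMinusV η F : ℝ) ≤ 1 := by rw [hcoe]; exact min_le_right _ _
  rcases le_total ((sPlus η F : ℝ) + η) 1 with hle | hle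
  · have hg : (gval η F : ℝ) = (sPlus η F : ℝ) + η := by rw [gval_eq hη0, min_eq_left hle]
    linarith
  · have hg : (gval η F : ℝ) = 1 := by rw [gval_eq hη0, min_eq_right hle]
    linarith

noncomputable def stepD (d : ℕ)
    (f : (t : Fin d) → (Fin (t.1 + 1) → ProbabilityMeasure II) → II) (η : ℝ)
    (t : ℕ) (μpre : Fin t → ProbabilityMeasure II) (b : Bool) : ProbabilityMeasure II :=
  if h : t < d then
    (if b then Dm (sPlus η fun s => ((f ⟨t, h⟩ (Fin.snoc μpre (Dm s)) : II) : ℝ))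
     else Dm (sMinusV η fun s => ((f ⟨t, h⟩ (Fin.snoc μpre (Dm s)) : II) : ℝ)))
  else Dm em1

/-- for `Y = Z = [−1,1]` with the absolute value loss and `0 < γ' < γ ≤ 1`,
if `H` γ-shatters an SMdim tree of depth `d` then it γ'-shatters a sequential
fat-shattering tree of depth `d`; consequently `SMdim_γ(H) ≤ seq-fat_{γ'}(H)`. -/
theorem statement7 {X : Type*} [Nonempty X]
    (H : Set (X → Set.Icc (-1 : ℝ) 1)) (hH : H.Nonempty)
    (γ γ' : ℝ) (hγ'0 : 0 < γ') (hγ'γ : γ' < γ) (hγ : γ ≤ 1)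
    (d : ℕ)
    (hsm : SMShatter H (fun (y z : Set.Icc (-1 : ℝ) 1) => |(y : ℝ) - (z : ℝ)|) γ d) :
    FatShatter H γ' d ∧
      SMdim H (fun (y z : Set.Icc (-1 : ℝ) 1) => |(y : ℝ) - (z : ℝ)|) γ ≤ seqFatDim H γ' := by
  have key : ∀ d : ℕ, SMShatter H (fun (y z : Set.Icc (-1 : ℝ) 1) =>
      |(y : ℝ) - (z : ℝ)|) γ d → FatShatter H γ' d := by
    clear hsm d
    intro d hsm
    obtain ⟨Tt, f, hs⟩ := hsm
    have hη0 : 0 < γ - γ' := by linarith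
    -- each node's A-set contains -1
    have hA : ∀ (t : ℕ) (ht : t < d) (μpre : Fin t → ProbabilityMeasure II),
        (-1 : ℝ) ∈ Aset (fun s => ((f ⟨t, ht⟩ (Fin.snoc μpre (Dm s)) : II) : ℝ)) := by
      intro t ht μpre
      set μfull : Fin d → ProbabilityMeasure II := fun j =>
        if hj : j.1 < t + 1 then (Fin.snoc μpre (Dm em1) : Fin (t+1) → ProbabilityMeasure II) ⟨j.1, hj⟩ else Dm em1 with hμf
      obtain ⟨h, hhH, hh⟩ := hs μfull
      have hh' := hh ⟨t, ht⟩
      have hpre : (fun i : Fin (t + 1) => μfull (Fin.castLE ht i)) = Fin.snoc μpre (Dm em1) := by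
        funext i
        simp only [hμf]
        split
        · next hj => exact congrArg (Fin.snoc μpre (Dm em1)) (Fin.ext (by simp))
        · next hj => exact absurd i.isLt hj
      have hμt : μfull ⟨t, ht⟩ = Dm em1 := by
        simp only [hμf]
        split
        · next hj =>
            have he : (⟨t, hj⟩ : Fin (t + 1)) = Fin.last t := Fin.ext rfl
            rw [he, Fin.snoc_last]
        · next hj => exact absurd (Nat.lt_succ_self t) hj
      rw [hpre, hμt, integral_Dm] at hh'
      refine ⟨neg_one_mem_II, ?_⟩
      show (-1 : ℝ) < ((f ⟨t, ht⟩ (Fin.snoc μpre (Dm em1)) : II) : ℝ)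
      have hb := (f ⟨t, ht⟩ (Fin.snoc μpre (Dm em1))).2.1
      have habs : |((f ⟨t, ht⟩ (Fin.snoc μpre (Dm em1)) : II) : ℝ) - (em1 : ℝ)| =
          ((f ⟨t, ht⟩ (Fin.snoc μpre (Dm em1)) : II) : ℝ) + 1 := by
        have hc : (em1 : ℝ) = -1 := rfl
        rw [hc, sub_neg_eq_add]
        exact abs_of_nonneg (by linarith)
      have h0 : (0 : ℝ) ≤ |((f ⟨t, ht⟩ (Fin.snoc μpre (Dm em1)) : II) : ℝ) -
          ((h (Tt ⟨t, ht⟩ fun i => μfull (Fin.castLE (Nat.le_of_lt ht) i)) : II) : ℝ)| :=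
        abs_nonneg _
      rw [habs] at hh'
      linarith
    refine ⟨fun t σp => Tt t (buildAux (stepD d f (γ - γ')) t.1 σp),
      fun t σp => gval (γ - γ') (fun s => ((f t (Fin.snoc
        (buildAux (stepD d f (γ - γ')) t.1 (fun i => σp i.castSucc)) (Dm s)) : II) : ℝ)),
      ?_, ?_⟩
    · intro t σp
      have h1 : (fun i : Fin t.1 => (Fin.snoc σp false : Fin (t.1+1) → Bool) i.castSucc) =
          (fun i : Fin t.1 => (Fin.snoc σp true : Fin (t.1+1) → Bool) i.castSucc) := by
        funext i
        rw [Fin.snoc_castSucc, Fin.snoc_castSucc]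
      exact congrArg (fun c : Fin t.1 → Bool => gval (γ - γ')
        (fun s => ((f t (Fin.snoc (buildAux (stepD d f (γ - γ')) t.1 c) (Dm s)) : II) : ℝ))) h1
    · intro σ
      obtain ⟨h, hhH, hh⟩ := hs (buildAux (stepD d f (γ - γ')) d σ)
      refine ⟨h, hhH, ?_⟩
      intro t
      have hh' := hh t
      have e2 : (fun j : Fin t.1 => σ (Fin.castLE t.isLt (Fin.castSucc j))) =
          (fun i : Fin t.1 => σ (Fin.castLE t.isLt.le i)) :=
        funext fun j => congrArg σ (Fin.ext (by simp))
      have e3 : Fin.castLE t.isLt (Fin.last t.1) = t := Fin.ext (by simp)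
      have hpre1 : (fun i : Fin t.1 => buildAux (stepD d f (γ - γ')) d σ
            (Fin.castLE t.isLt.le i)) =
          buildAux (stepD d f (γ - γ')) t.1 (fun i => σ (Fin.castLE t.isLt.le i)) :=
        funext fun i => buildAux_prefix (stepD d f (γ - γ')) d t.1 t.isLt.le σ i
      have e1 : (fun i : Fin (t.1 + 1) => buildAux (stepD d f (γ - γ')) d σ
            (Fin.castLE t.isLt i)) =
          buildAux (stepD d f (γ - γ')) (t.1 + 1) (fun i => σ (Fin.castLE t.isLt i)) :=
        funext fun i => buildAux_prefix (stepD d f (γ - γ')) d (t.1 + 1) t.isLt σ i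
      have hunf : buildAux (stepD d f (γ - γ')) (t.1 + 1) (fun i => σ (Fin.castLE t.isLt i)) =
          Fin.snoc (buildAux (stepD d f (γ - γ')) t.1
              (fun j => σ (Fin.castLE t.isLt (Fin.castSucc j))))
            (stepD d f (γ - γ') t.1 (buildAux (stepD d f (γ - γ')) t.1
              (fun j => σ (Fin.castLE t.isLt (Fin.castSucc j))))
              (σ (Fin.castLE t.isLt (Fin.last t.1)))) := rfl
      have hpre2 : (fun i : Fin (t.1 + 1) => buildAux (stepD d f (γ - γ')) d σ
            (Fin.castLE t.isLt i)) =
          Fin.snoc (buildAux (stepD d f (γ - γ')) t.1 (fun i => σ (Fin.castLE t.isLt.le i)))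
            (stepD d f (γ - γ') t.1
              (buildAux (stepD d f (γ - γ')) t.1 (fun i => σ (Fin.castLE t.isLt.le i))) (σ t)) := by
        rw [e1, hunf, e2, e3]
      have hμt : buildAux (stepD d f (γ - γ')) d σ t =
          stepD d f (γ - γ') t.1
            (buildAux (stepD d f (γ - γ')) t.1 (fun i => σ (Fin.castLE t.isLt.le i))) (σ t) := by
        have h2 := buildAux_prefix (stepD d f (γ - γ')) d (t.1 + 1) t.isLt σ (Fin.last t.1)
        rw [e3] at h2
        rw [h2, hunf, Fin.snoc_last, e2, e3]
      rw [hpre2, hpre1, hμt] at hh'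
      have hne : (Aset (fun s => ((f t (Fin.snoc (buildAux (stepD d f (γ - γ')) t.1
          (fun i => σ (Fin.castLE t.isLt.le i))) (Dm s)) : II) : ℝ))).Nonempty :=
        ⟨-1, hA t.1 t.isLt (buildAux (stepD d f (γ - γ')) t.1
          (fun i => σ (Fin.castLE t.isLt.le i)))⟩
      cases hb2 : σ t with
      | true =>
        rw [hb2] at hh'
        have hsD : stepD d f (γ - γ') t.1 (buildAux (stepD d f (γ - γ')) t.1
            (fun i => σ (Fin.castLE t.isLt.le i))) true =
            Dm (sPlus (γ - γ') (fun s => ((f t (Fin.snoc (buildAux (stepD d f (γ - γ')) t.1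
              (fun i => σ (Fin.castLE t.isLt.le i))) (Dm s)) : II) : ℝ))) := dif_pos t.isLt
        rw [hsD, integral_Dm] at hh'
        rw [if_pos rfl]
        exact branch_true hγ'0 hγ'γ rfl _ hne _ hh'
      | false =>
        rw [hb2] at hh'
        have hsD : stepD d f (γ - γ') t.1 (buildAux (stepD d f (γ - γ')) t.1
            (fun i => σ (Fin.castLE t.isLt.le i))) false =
            Dm (sMinusV (γ - γ') (fun s => ((f t (Fin.snoc (buildAux (stepD d f (γ - γ')) t.1
              (fun i => σ (Fin.castLE t.isLt.le i))) (Dm s)) : II) : ℝ))) := dif_pos t.isLt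
        rw [hsD, integral_Dm] at hh'
        rw [if_neg (by simp)]
        exact branch_false hγ'0 hγ'γ hγ rfl _
          (fun s => (f t (Fin.snoc (buildAux (stepD d f (γ - γ')) t.1
            (fun i => σ (Fin.castLE t.isLt.le i))) (Dm s))).2.2) hne _ hh'
  refine ⟨key d hsm, ?_⟩
  apply sSup_le
  rintro n ⟨d', rfl, hsm'⟩
  exact le_sSup ⟨d', rfl, key d' hsm'⟩
end

section
/- Let k ≥ 1, let Z be the set of finite subsets of Y of cardinality at most k equipped with the discrete σ-algebra, let ℓ(y,z) = 1 if y ∉ z and 0 if y ∈ z, let H ⊆ Z^X, and fix γ ∈ (0,1]. If H γ-shatters an SMdim tree of depth d (with respect to ℓ), then H shatters a (k+1)-Littlestone tree of depth d. Consequently SMdim_γ(H) ≤ Ldim_{k+1}(H) for all γ ∈ (0,1]. -/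
open MeasureTheory

/-- The prediction space of list learning: finite subsets of `Y` of size at most `k`. -/
def ListPred (Y : Type*) (k : ℕ) : Type _ := {S : Finset Y // S.card ≤ k}

/-- `ListPred Y k` carries the discrete σ-algebra. -/
instance (Y : Type*) (k : ℕ) : MeasurableSpace (ListPred Y k) := ⊤

/-- `H` shatters a `(k+1)`-Littlestone tree of depth `d`. -/
def KLShatter {X Y : Type*} (k : ℕ) (H : Set (X → ListPred Y k)) (d : ℕ) : Prop :=
  ∃ (Tt : (t : Fin d) → (Fin t.1 → Fin (k + 1)) → X)
    (f : (t : Fin d) → (Fin (t.1 + 1) → Fin (k + 1)) → Y),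
    (∀ p : Fin d → Fin (k + 1), ∃ h ∈ H, ∀ t : Fin d,
      (f t fun i => p (Fin.castLE t.isLt i)) ∈
        (h (Tt t fun i => p (Fin.castLE t.isLt.le i))).1) ∧
    (∀ (t : Fin d) (p : Fin t.1 → Fin (k + 1)) (i j : Fin (k + 1)), i ≠ j →
      f t (Fin.snoc p i) ≠ f t (Fin.snoc p j))

/-- The `(k+1)`-Littlestone dimension of `H`, as an extended natural number. -/
noncomputable def kLdim {X Y : Type*} (k : ℕ) (H : Set (X → ListPred Y k)) : ℕ∞ :=
  sSup {n : ℕ∞ | ∃ d : ℕ, n = (d : ℕ∞) ∧ KLShatter k H d}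

namespace Stmt8

variable {Y : Type*} [DecidableEq Y]

instance (Y : Type*) (k : ℕ) : MeasurableSingletonClass (ListPred Y k) :=
  ⟨fun _ => MeasurableSpace.measurableSet_top⟩

def ltrunc (k : ℕ) (A : Finset Y) : ListPred Y k :=
  if h : A.card ≤ k then (⟨A, h⟩ : {S : Finset Y // S.card ≤ k})
  else (⟨∅, by simp⟩ : {S : Finset Y // S.card ≤ k})

lemma ltrunc_of_le {k : ℕ} {A : Finset Y} (h : A.card ≤ k) : (ltrunc k A).1 = A := by
  simp [ltrunc, h]

noncomputable def lpm (k : ℕ) (A : Finset Y) : ProbabilityMeasure (ListPred Y k) :=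
  ⟨Measure.dirac (ltrunc k A), Measure.dirac.isProbabilityMeasure⟩

lemma integral_loss (k : ℕ) (y : Y) (A : Finset Y) :
    ∫ z, (if y ∈ z.1 then (0:ℝ) else 1)
        ∂((lpm k A : ProbabilityMeasure (ListPred Y k)) : Measure (ListPred Y k)) =
      if y ∈ (ltrunc k A).1 then (0:ℝ) else 1 := by
  have : ((lpm k A : ProbabilityMeasure (ListPred Y k)) : Measure (ListPred Y k))
      = Measure.dirac (ltrunc k A) := rfl
  rw [this, integral_dirac]

noncomputable def nodeS (k : ℕ) (g : ProbabilityMeasure (ListPred Y k) → Y) : ℕ → Finset Y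
  | 0 => ∅
  | n+1 => insert (g (lpm k (nodeS k g n))) (nodeS k g n)

lemma nodeS_card (k : ℕ) (g : ProbabilityMeasure (ListPred Y k) → Y) (n : ℕ) :
    (nodeS k g n).card ≤ n := by
  induction n with
  | zero => simp [nodeS]
  | succ n IH =>
    calc (nodeS k g (n+1)).card ≤ (nodeS k g n).card + 1 := by
          simpa [nodeS] using Finset.card_insert_le _ _
      _ ≤ n + 1 := by omega

lemma nodeS_mono (k : ℕ) (g : ProbabilityMeasure (ListPred Y k) → Y) {m n : ℕ} (h : m ≤ n) :
    nodeS k g m ⊆ nodeS k g n := by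
  induction n with
  | zero => simpa [Nat.le_zero.mp h]
  | succ n IH =>
    rcases Nat.eq_or_lt_of_le h with rfl | hlt
    · exact subset_rfl
    · exact (IH (Nat.lt_succ_iff.mp hlt)).trans (by simp [nodeS, Finset.subset_insert])

lemma lab_ne (k : ℕ) (g : ProbabilityMeasure (ListPred Y k) → Y)
    (hg : ∀ A : Finset Y, A.card ≤ k → g (lpm k A) ∉ A)
    {i j : ℕ} (hi : i ≤ k) (hj : j ≤ k) (hij : i ≠ j) :
    g (lpm k (nodeS k g i)) ≠ g (lpm k (nodeS k g j)) := by
  wlog h : i < j generalizing i j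
  · exact (this hj hi hij.symm (by omega)).symm
  intro he
  have h1 : g (lpm k (nodeS k g i)) ∈ nodeS k g (i+1) := by simp [nodeS]
  have h2 : nodeS k g (i+1) ⊆ nodeS k g j := nodeS_mono k g h
  have h3 : g (lpm k (nodeS k g j)) ∉ nodeS k g j := hg _ ((nodeS_card k g j).trans hj)
  exact h3 (he ▸ h2 h1)

noncomputable def treeM (k d : ℕ)
    (f : (t : Fin d) → (Fin (t.1 + 1) → ProbabilityMeasure (ListPred Y k)) → Y) :
    (t : ℕ) → t ≤ d → (Fin t → Fin (k+1)) → Fin t → ProbabilityMeasure (ListPred Y k)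
  | 0, _, _ => Fin.elim0
  | t+1, ht, p =>
      Fin.snoc (treeM k d f t (Nat.le_of_succ_le ht) (fun i => p i.castSucc))
        (lpm k (nodeS k
          (fun μ => f ⟨t, ht⟩
            (Fin.snoc (treeM k d f t (Nat.le_of_succ_le ht) (fun i => p i.castSucc)) μ))
          (p (Fin.last t)).1))

lemma treeM_coh (k d : ℕ)
    (f : (t : Fin d) → (Fin (t.1 + 1) → ProbabilityMeasure (ListPred Y k)) → Y) :
    ∀ (t' : ℕ) (t : ℕ) (h : t ≤ t') (ht' : t' ≤ d) (p : Fin t' → Fin (k+1)) (j : Fin t),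
      treeM k d f t (h.trans ht') (fun i => p (Fin.castLE h i)) j
        = treeM k d f t' ht' p (Fin.castLE h j) := by
  intro t'
  induction t' with
  | zero => intro t h ht' p j; exact absurd j.2 (by omega)
  | succ t' IH =>
    intro t h ht' p j
    rcases Nat.eq_or_lt_of_le h with rfl | hlt
    · rfl
    · have h' : t ≤ t' := Nat.lt_succ_iff.mp hlt
      have e1 : treeM k d f (t'+1) ht' p (Fin.castLE h j)
          = treeM k d f t' (Nat.le_of_succ_le ht') (fun i => p i.castSucc)
              (Fin.castLE h' j) := by
        show treeM k d f (t'+1) ht' p ((Fin.castLE h' j).castSucc) = _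
        simp only [treeM]
        rw [Fin.snoc_castSucc]
      rw [e1]
      exact IH t h' (Nat.le_of_succ_le ht') (fun i => p i.castSucc) j

lemma treeM_dirac (k d : ℕ)
    (f : (t : Fin d) → (Fin (t.1 + 1) → ProbabilityMeasure (ListPred Y k)) → Y) :
    ∀ (t : ℕ) (ht : t ≤ d) (p : Fin t → Fin (k+1)) (j : Fin t),
      ∃ A : Finset Y, treeM k d f t ht p j = lpm k A := by
  intro t
  induction t with
  | zero => intro ht p j; exact absurd j.2 (by omega)
  | succ t IH =>
    intro ht p j
    induction j using Fin.lastCases with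
    | last =>
      have : treeM k d f (t+1) ht p (Fin.last t)
          = lpm k (nodeS k
              (fun μ => f ⟨t, ht⟩
                (Fin.snoc (treeM k d f t (Nat.le_of_succ_le ht) (fun i => p i.castSucc)) μ))
              (p (Fin.last t)).1) := by
        simp [treeM, Fin.snoc_last]
      exact ⟨_, this⟩
    | cast i =>
      obtain ⟨A, hA⟩ := IH (Nat.le_of_succ_le ht) (fun i => p i.castSucc) i
      exact ⟨A, by simp [treeM, Fin.snoc_castSucc, hA]⟩


section Main

variable {X : Type*} (k d : ℕ) (γ : ℝ) (H : Set (X → ListPred Y k))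
  (Tt : (t : Fin d) → (Fin t.1 → ProbabilityMeasure (ListPred Y k)) → X)
  (f : (t : Fin d) → (Fin (t.1 + 1) → ProbabilityMeasure (ListPred Y k)) → Y)

lemma key_not_mem (hγ0 : 0 < γ)
    (hP : ∀ μ : Fin d → ProbabilityMeasure (ListPred Y k), ∃ h ∈ H, ∀ t : Fin d,
      (if (f t fun i => μ (Fin.castLE t.isLt i))
          ∈ (h (Tt t fun i => μ (Fin.castLE t.isLt.le i))).1 then (0:ℝ) else 1) + γ ≤
        ∫ z, (if (f t fun i => μ (Fin.castLE t.isLt i)) ∈ z.1 then (0:ℝ) else 1)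
          ∂(μ t : Measure (ListPred Y k)))
    (t : Fin d) (ν : Fin t.1 → ProbabilityMeasure (ListPred Y k)) (A : Finset Y) :
    f t (Fin.snoc ν (lpm k A)) ∉ (ltrunc k A).1 := by
  classical
  set μ : Fin d → ProbabilityMeasure (ListPred Y k) :=
    fun j => if h : j.1 < t.1 + 1 then (Fin.snoc ν (lpm k A) : Fin (t.1+1) → ProbabilityMeasure (ListPred Y k)) ⟨j.1, h⟩ else lpm k ∅ with hμ
  obtain ⟨h, -, hineq⟩ := hP μ
  have hrestr : (fun i : Fin (t.1+1) => μ (Fin.castLE t.isLt i)) = Fin.snoc ν (lpm k A) := by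
    funext i
    simp only [hμ]
    rw [dif_pos (show (Fin.castLE t.isLt i).1 < t.1 + 1 from i.2)]
    exact congrArg _ (Fin.ext (by simp))
  have hμt : μ t = lpm k A := by
    simp only [hμ]
    rw [dif_pos (Nat.lt_succ_self t.1)]
    exact Fin.snoc_last _ _
  have key := hineq t
  rw [hrestr, hμt, integral_loss] at key
  intro hmem
  rw [if_pos hmem] at key
  have h0 : (0:ℝ) ≤ (if f t (Fin.snoc ν (lpm k A))
      ∈ (h (Tt t fun i => μ (Fin.castLE t.isLt.le i))).1 then (0:ℝ) else 1) := by
    split <;> norm_num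
  linarith

lemma main_aux (hγ0 : 0 < γ) (hγ1 : γ ≤ 1)
    (hsm : SMShatter H (fun (y : Y) (z : ListPred Y k) =>
      if y ∈ z.1 then (0 : ℝ) else 1) γ d) :
    KLShatter k H d := by
  classical
  obtain ⟨Tt, f, hP⟩ := hsm
  refine ⟨fun t p => Tt t (treeM k d f t.1 t.isLt.le p),
    fun t p => f t (treeM k d f (t.1 + 1) t.isLt p), ?_, ?_⟩
  · intro p
    obtain ⟨h, hhH, hineq⟩ := hP (treeM k d f d le_rfl p)
    refine ⟨h, hhH, fun t => ?_⟩
    show (f t (treeM k d f (t.1 + 1) t.isLt fun i => p (Fin.castLE t.isLt i))) ∈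
      (h (Tt t (treeM k d f t.1 t.isLt.le fun i => p (Fin.castLE t.isLt.le i)))).1
    have e1 : treeM k d f (t.1 + 1) t.isLt (fun i => p (Fin.castLE t.isLt i))
        = fun i => treeM k d f d le_rfl p (Fin.castLE t.isLt i) :=
      funext fun j => treeM_coh k d f d (t.1+1) t.isLt le_rfl p j
    have e2 : treeM k d f t.1 t.isLt.le (fun i => p (Fin.castLE t.isLt.le i))
        = fun i => treeM k d f d le_rfl p (Fin.castLE t.isLt.le i) :=
      funext fun j => treeM_coh k d f d t.1 t.isLt.le le_rfl p j
    rw [e1, e2]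
    have key := hineq t
    simp only at key
    obtain ⟨A, hA⟩ := treeM_dirac k d f d le_rfl p t
    rw [hA, integral_loss] at key
    by_contra hc
    rw [if_neg hc] at key
    have : (if (f t fun i => treeM k d f d le_rfl p (Fin.castLE t.isLt i))
        ∈ (ltrunc k A).1 then (0:ℝ) else 1) ≤ 1 := by split <;> norm_num
    linarith
  · intro t p i j hij
    have hne := lab_ne k
      (fun μ => f t (Fin.snoc (treeM k d f t.1 t.isLt.le p) μ))
      (fun A hA => by
        have := key_not_mem k d γ H Tt f hγ0 hP t (treeM k d f t.1 t.isLt.le p) A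
        rwa [ltrunc_of_le hA] at this)
      (i := i.1) (j := j.1) (Nat.lt_succ_iff.mp i.2) (Nat.lt_succ_iff.mp j.2)
      (fun hh => hij (Fin.ext hh))
    have eform : ∀ (i : Fin (k+1)),
        f t (treeM k d f (t.1 + 1) t.isLt (Fin.snoc p i))
          = f t (Fin.snoc (treeM k d f t.1 t.isLt.le p)
              (lpm k (nodeS k
                (fun μ => f t (Fin.snoc (treeM k d f t.1 t.isLt.le p) μ)) i.1))) := by
      intro i
      simp [treeM, Fin.snoc_last, Fin.snoc_castSucc]
    show f t (treeM k d f (t.1 + 1) t.isLt (Fin.snoc p i))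
      ≠ f t (treeM k d f (t.1 + 1) t.isLt (Fin.snoc p j))
    rw [eform i, eform j]
    exact hne

end Main

end Stmt8

/-- for list prediction with loss `1{y ∉ z}` and `γ ∈ (0,1]`, if `H`
γ-shatters an SMdim tree of depth `d` then it shatters a `(k+1)`-Littlestone tree of
depth `d`; consequently `SMdim_γ(H) ≤ Ldim_{k+1}(H)`. -/
theorem statement8 {X Y : Type*} [Nonempty X] [Nonempty Y] [DecidableEq Y]
    (k : ℕ) (hk : 1 ≤ k)
    (H : Set (X → ListPred Y k)) (hH : H.Nonempty)
    (γ : ℝ) (hγ0 : 0 < γ) (hγ : γ ≤ 1)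
    (d : ℕ)
    (hsm : SMShatter H (fun (y : Y) (z : ListPred Y k) =>
      if y ∈ z.1 then (0 : ℝ) else 1) γ d) :
    KLShatter k H d ∧
      SMdim H (fun (y : Y) (z : ListPred Y k) => if y ∈ z.1 then (0 : ℝ) else 1) γ ≤
        kLdim k H := by
  refine ⟨Stmt8.main_aux k d γ H hγ0 hγ hsm, ?_⟩
  apply sSup_le_sSup
  rintro n ⟨d', rfl, hsd'⟩
  exact ⟨d', rfl, Stmt8.main_aux k d' γ H hγ0 hγ hsd'⟩
end

section
/- Let k ≥ 1, let Z be the set of finite subsets of Y of cardinality at most k equipped with the discrete σ-algebra, let ℓ(y,z) = 1 if y ∉ z and 0 if y ∈ z, let H ⊆ Z^X, and fix γ ∈ (0, 1/(k+1)]. If H shatters a (k+1)-Littlestone tree of depth d, then H γ-shatters an SMdim tree of depth d (with respect to ℓ). Consequently Ldim_{k+1}(H) ≤ SMdim_γ(H) for all γ ∈ (0, 1/(k+1)]. -/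
open MeasureTheory

section Aux

variable {Y : Type*} [DecidableEq Y] {k : ℕ}

/-- An index maximising `g` over `Fin (k+1)`. -/
noncomputable def pickMax (g : Fin (k + 1) → ℝ) : Fin (k + 1) :=
  (Finset.univ.exists_max_image g ⟨0, Finset.mem_univ _⟩).choose

lemma pickMax_spec (g : Fin (k + 1) → ℝ) (j : Fin (k + 1)) : g j ≤ g (pickMax g) :=
  (Finset.univ.exists_max_image g ⟨0, Finset.mem_univ _⟩).choose_spec.2 j (Finset.mem_univ _)

lemma loss_integrable (y : Y) (μ : Measure (ListPred Y k)) [IsProbabilityMeasure μ] :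
    Integrable (fun z : ListPred Y k => if y ∈ z.1 then (0 : ℝ) else 1) μ := by
  refine (integrable_const (1 : ℝ)).mono' measurable_from_top.aestronglyMeasurable ?_
  refine ae_of_all _ fun z => ?_
  by_cases h : y ∈ z.1 <;> simp [h]

lemma one_le_sum_integral (y : Fin (k + 1) → Y) (hy : ∀ i j, i ≠ j → y i ≠ y j)
    (μ : Measure (ListPred Y k)) [IsProbabilityMeasure μ] :
    (1 : ℝ) ≤ ∑ i, ∫ z, (if y i ∈ z.1 then (0 : ℝ) else 1) ∂μ := by
  have h1 : ∀ z : ListPred Y k, (1 : ℝ) ≤ ∑ i, (if y i ∈ z.1 then (0 : ℝ) else 1) := by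
    intro z
    have hex : ∃ i, y i ∉ z.1 := by
      by_contra hc
      push_neg at hc
      have hcard : (Finset.univ : Finset (Fin (k + 1))).card ≤ z.1.card :=
        Finset.card_le_card_of_injOn y (fun i _ => hc i)
          (fun i _ j _ hij => by by_contra hne; exact hy i j hne hij)
      have hz := z.2
      simp [Finset.card_univ] at hcard
      omega
    obtain ⟨i, hi⟩ := hex
    calc (1 : ℝ) = (if y i ∈ z.1 then (0 : ℝ) else 1) := by simp [hi]
      _ ≤ ∑ j, (if y j ∈ z.1 then (0 : ℝ) else 1) :=
          Finset.single_le_sum (f := fun j => if y j ∈ z.1 then (0 : ℝ) else 1)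
            (fun j _ => by by_cases hc : y j ∈ z.1 <;> simp [hc]) (Finset.mem_univ i)
  calc (1 : ℝ) = ∫ _, (1 : ℝ) ∂μ := by simp
    _ ≤ ∫ z, (∑ i, if y i ∈ z.1 then (0 : ℝ) else 1) ∂μ :=
        integral_mono (integrable_const 1)
          (integrable_finset_sum _ fun i _ => loss_integrable (y i) μ) h1
    _ = ∑ i, ∫ z, (if y i ∈ z.1 then (0 : ℝ) else 1) ∂μ :=
        integral_finset_sum _ fun i _ => loss_integrable (y i) μ

lemma pickMax_ge (g : Fin (k + 1) → ℝ) (hg : (1 : ℝ) ≤ ∑ i, g i) :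
    (1 : ℝ) / (k + 1) ≤ g (pickMax g) := by
  have hsum : ∑ i, g i ≤ (k + 1 : ℕ) • g (pickMax g) := by
    have := Finset.sum_le_card_nsmul Finset.univ g (g (pickMax g))
      (fun j _ => pickMax_spec g j)
    simpa [Finset.card_univ] using this
  rw [nsmul_eq_mul] at hsum
  rw [div_le_iff₀ (by positivity)]
  calc (1 : ℝ) ≤ ∑ i, g i := hg
    _ ≤ (k + 1 : ℕ) * g (pickMax g) := hsum
    _ = g (pickMax g) * (k + 1) := by push_cast; ring

/-- The greedy path through the Littlestone tree, chosen to maximise expected loss. -/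
noncomputable def pathP (f : (t : ℕ) → (Fin (t + 1) → Fin (k + 1)) → Y) :
    (n : ℕ) → (Fin n → ProbabilityMeasure (ListPred Y k)) → Fin n → Fin (k + 1)
  | 0, _ => Fin.elim0
  | (n + 1), μ =>
    Fin.snoc (pathP f n fun i => μ i.castSucc)
      (pickMax fun i => ∫ z,
        (if f n (Fin.snoc (pathP f n fun i => μ i.castSucc) i) ∈ z.1 then (0 : ℝ) else 1)
          ∂(μ (Fin.last n) : Measure (ListPred Y k)))

lemma pathP_castSucc (f : (t : ℕ) → (Fin (t + 1) → Fin (k + 1)) → Y) (n : ℕ)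
    (μ : Fin (n + 1) → ProbabilityMeasure (ListPred Y k)) (j : Fin n) :
    pathP f (n + 1) μ j.castSucc = pathP f n (fun i => μ i.castSucc) j := by
  simp [pathP, Fin.snoc_castSucc]

lemma pathP_consist (f : (t : ℕ) → (Fin (t + 1) → Fin (k + 1)) → Y) :
    ∀ (n t : ℕ) (h : t ≤ n) (μ : Fin n → ProbabilityMeasure (ListPred Y k)) (i : Fin t),
      pathP f t (fun j => μ (Fin.castLE h j)) i = pathP f n μ (Fin.castLE h i) := by
  intro n
  induction n with
  | zero =>
    intro t h μ i
    interval_cases t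
    exact i.elim0
  | succ n ih =>
    intro t h μ i
    rcases eq_or_lt_of_le h with rfl | h'
    · have hid : ∀ j : Fin (n + 1), Fin.castLE h j = j := fun j => Fin.ext rfl
      simp [hid]
    · have h'' : t ≤ n := Nat.lt_succ_iff.mp h'
      have harg : (fun j : Fin t => μ (Fin.castLE h j))
          = (fun j => (fun s : Fin n => μ s.castSucc) (Fin.castLE h'' j)) :=
        funext fun j => congrArg μ (Fin.ext rfl)
      have hcast : (Fin.castLE h'' i).castSucc = Fin.castLE h i := Fin.ext rfl
      rw [harg, ih t h'' (fun s => μ s.castSucc) i, ← hcast, pathP_castSucc f n μ]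

end Aux

theorem klsm {X Y : Type*} [Nonempty Y] [DecidableEq Y]
    (k : ℕ) (H : Set (X → ListPred Y k))
    (γ : ℝ) (hγ : γ ≤ 1 / (k + 1))
    (d : ℕ) (hkl : KLShatter k H d) :
    SMShatter H (fun (y : Y) (z : ListPred Y k) => if y ∈ z.1 then (0 : ℝ) else 1) γ d := by
  obtain ⟨T, f, hpath, hdist⟩ := hkl
  classical
  set f' : (t : ℕ) → (Fin (t + 1) → Fin (k + 1)) → Y :=
    fun t => if h : t < d then fun p => f ⟨t, h⟩ p else fun _ => Classical.arbitrary Y with hf'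
  refine ⟨fun t ν => T t (pathP f' t.1 ν), fun t ν => f' t.1 (pathP f' (t.1 + 1) ν), ?_⟩
  intro μ
  set p := pathP f' d μ with hp
  obtain ⟨h, hhH, hh⟩ := hpath p
  refine ⟨h, hhH, fun t => ?_⟩
  have ht : t.1 < d := t.isLt
  have hfeq : ∀ q : Fin (t.1 + 1) → Fin (k + 1), f' t.1 q = f t q := by
    intro q
    obtain ⟨tv, htv⟩ := t
    simp only [hf']
    rw [dif_pos ht]
  -- restriction consistency
  have hres1 : pathP f' (t.1 + 1) (fun i => μ (Fin.castLE t.isLt i))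
      = fun i => p (Fin.castLE t.isLt i) :=
    funext fun i => pathP_consist f' d (t.1 + 1) t.isLt μ i
  have hres0 : pathP f' t.1 (fun i => μ (Fin.castLE t.isLt.le i))
      = fun i => p (Fin.castLE t.isLt.le i) :=
    funext fun i => pathP_consist f' d t.1 t.isLt.le μ i
  -- the left-hand loss is zero
  have hmem : f' t.1 (pathP f' (t.1 + 1) (fun i => μ (Fin.castLE t.isLt i))) ∈
      (h (T t (pathP f' t.1 (fun i => μ (Fin.castLE t.isLt.le i))))).1 := by
    rw [hres1, hres0, hfeq]
    exact hh t
  -- the right-hand integral structure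
  set ν : Fin (t.1 + 1) → ProbabilityMeasure (ListPred Y k) :=
    fun i => μ (Fin.castLE t.isLt i) with hν
  set pre := pathP f' t.1 (fun i => ν i.castSucc) with hpre
  set g : Fin (k + 1) → ℝ := fun i => ∫ z,
    (if f' t.1 (Fin.snoc pre i) ∈ z.1 then (0 : ℝ) else 1)
      ∂(ν (Fin.last t.1) : Measure (ListPred Y k)) with hg
  have hstruct : pathP f' (t.1 + 1) ν = Fin.snoc pre (pickMax g) := by
    simp [pathP, hpre, hg]
  have hlastν : ν (Fin.last t.1) = μ t := rfl
  have hy : ∀ i j : Fin (k + 1), i ≠ j →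
      f' t.1 (Fin.snoc pre i) ≠ f' t.1 (Fin.snoc pre j) := by
    intro i j hij
    rw [hfeq, hfeq]
    exact hdist t pre i j hij
  have hbound : (1 : ℝ) / (k + 1) ≤ g (pickMax g) := by
    refine pickMax_ge g ?_
    have := one_le_sum_integral (fun i => f' t.1 (Fin.snoc pre i)) hy
      (ν (Fin.last t.1) : Measure (ListPred Y k))
    exact this
  have hrhs : ∫ z, (if f' t.1 (pathP f' (t.1 + 1) (fun i => μ (Fin.castLE t.isLt i))) ∈ z.1
      then (0 : ℝ) else 1) ∂(μ t : Measure (ListPred Y k)) = g (pickMax g) := by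
    rw [← hlastν]
    rw [show (fun i => μ (Fin.castLE t.isLt i)) = ν from rfl, hstruct]
  simp only [hmem, if_pos hmem]
  rw [hrhs]
  calc (0 : ℝ) + γ = γ := zero_add γ
    _ ≤ 1 / (k + 1) := hγ
    _ ≤ g (pickMax g) := hbound

/-- for list prediction with loss `1{y ∉ z}` and `γ ∈ (0, 1/(k+1)]`, if `H`
shatters a `(k+1)`-Littlestone tree of depth `d` then it γ-shatters an SMdim tree of
depth `d`; consequently `Ldim_{k+1}(H) ≤ SMdim_γ(H)`. -/
theorem statement9 {X Y : Type*} [Nonempty X] [Nonempty Y] [DecidableEq Y]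
    (k : ℕ) (hk : 1 ≤ k)
    (H : Set (X → ListPred Y k)) (hH : H.Nonempty)
    (γ : ℝ) (hγ0 : 0 < γ) (hγ : γ ≤ 1 / (k + 1))
    (d : ℕ) (hkl : KLShatter k H d) :
    SMShatter H (fun (y : Y) (z : ListPred Y k) => if y ∈ z.1 then (0 : ℝ) else 1) γ d ∧
      kLdim k H ≤
        SMdim H (fun (y : Y) (z : ListPred Y k) => if y ∈ z.1 then (0 : ℝ) else 1) γ := by
  have main : ∀ d' : ℕ, KLShatter k H d' →
      SMShatter H (fun (y : Y) (z : ListPred Y k) => if y ∈ z.1 then (0 : ℝ) else 1) γ d' :=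
    fun d' h => klsm k H γ hγ d' h
  refine ⟨main d hkl, ?_⟩
  apply sSup_le_sSup
  rintro n ⟨d', rfl, hd'⟩
  exact ⟨d', rfl, main d' hd'⟩
end

section
/- Let V be a real normed vector space, let Y = Z = {v ∈ V : ‖v‖ ≤ 1} be the closed unit ball with the Borel σ-algebra, and let ℓ(y,z) = ‖y − z‖. Suppose there exist h_{-1}, h_{+1} ∈ H and x ∈ X with η := ‖h_{-1}(x) − h_{+1}(x)‖ > 0. Then for every online learner A and every T ≥ 1, there exists a stream (x_1,y_1),…,(x_T,y_T) (with x_t = x for all t and each y_t ∈ {h_{-1}(x), h_{+1}(x)}) on which the expected regret of A is at least η·√(T/8). -/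
open MeasureTheory

open Finset

section AuxNumeric

lemma aux_centralBinom_sq : ∀ m : ℕ, 1 ≤ m → 4^(2*m) ≤ 4*m*(Nat.centralBinom m)^2 := by
  intro m hm
  induction m with
  | zero => omega
  | succ m ih =>
    rcases Nat.eq_zero_or_pos m with h0 | h1
    · subst h0; simp [Nat.centralBinom]
    · have IH := ih h1
      have key := Nat.succ_mul_centralBinom_succ m
      have hpos : 0 < m + 1 := Nat.succ_pos m
      apply Nat.le_of_mul_le_mul_left _ hpos
      have e1 : (m+1) * (4*(m+1)*(Nat.centralBinom (m+1))^2)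
          = 4 * ((m+1) * Nat.centralBinom (m+1))^2 := by ring
      rw [e1, key]
      have e4 : (4:ℕ)^(2*(m+1)) = 16 * 4^(2*m) := by rw [Nat.mul_add, pow_add]; ring
      rw [e4]
      nlinarith [sq_nonneg (Nat.centralBinom m), Nat.centralBinom_pos m]

lemma aux_choose_bound : ∀ T : ℕ, 1 ≤ T → 4^T ≤ 8*T*(Nat.choose (T-1) (T/2))^2 := by
  intro T hT
  rcases Nat.even_or_odd T with ⟨m, hm⟩ | ⟨m, hm⟩
  · subst hm
    have hm1 : 1 ≤ m := by omega
    have h1 : (m + m) - 1 = 2*m - 1 := by omega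
    have h2 : (m + m)/2 = m := by omega
    rw [h1, h2]
    have hsymm : Nat.choose (2*m-1) (m-1) = Nat.choose (2*m-1) m := by
      rw [← Nat.choose_symm (by omega)]
      congr 1
      omega
    have hpascal : Nat.choose (2*m) m = Nat.choose (2*m-1) (m-1) + Nat.choose (2*m-1) m := by
      have h := Nat.choose_succ_succ (2*m-1) (m-1)
      simp only [Nat.succ_eq_add_one] at h
      have e : 2*m - 1 + 1 = 2*m := by omega
      have e2 : m - 1 + 1 = m := by omega
      rw [e, e2] at h
      exact h
    have hcb : Nat.centralBinom m = 2 * Nat.choose (2*m-1) m := by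
      rw [Nat.centralBinom, hpascal, hsymm]; ring
    have h5 := aux_centralBinom_sq m hm1
    rw [hcb] at h5
    have e3 : (4:ℕ)^(m+m) = 4^(2*m) := by ring_nf
    rw [e3]
    nlinarith
  · subst hm
    rcases Nat.eq_zero_or_pos m with h0 | h1
    · subst h0; simp
    · have h1' : (2*m+1) - 1 = 2*m := by omega
      have h2 : (2*m+1)/2 = m := by omega
      rw [h1', h2]
      have h5 := aux_centralBinom_sq m h1
      rw [Nat.centralBinom] at h5
      have e : (4:ℕ)^(2*m+1) = 4 * 4^(2*m) := by ring
      rw [e]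
      nlinarith

lemma aux_telescope (n : ℕ) (hn : 1 ≤ n) : ∀ K : ℕ,
    ∑ k ∈ range (K+1), (Nat.choose n k : ℤ) * ((n:ℤ) - 2*k) = n * Nat.choose (n-1) K := by
  intro K
  induction K with
  | zero => simp
  | succ K ih =>
    rw [Finset.sum_range_succ, ih]
    have e : n - 1 + 1 = n := by omega
    have h1 : (n:ℤ) * Nat.choose (n-1) K = Nat.choose n (K+1) * (K+1) := by
      have h := Nat.add_one_mul_choose_eq (n-1) K
      rw [e] at h
      exact_mod_cast congrArg (Nat.cast : ℕ → ℤ) h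
    have h2 : (Nat.choose n (K+1) : ℤ) = Nat.choose (n-1) K + Nat.choose (n-1) (K+1) := by
      have h := Nat.choose_succ_succ (n-1) K
      simp only [Nat.succ_eq_add_one] at h
      rw [e] at h
      exact_mod_cast congrArg (Nat.cast : ℕ → ℤ) h
    push_cast at h1 h2 ⊢
    linear_combination 2*h1 + (n:ℤ)*h2

lemma aux_abs_sum (n : ℕ) (hn : 1 ≤ n) :
    ∑ k ∈ range (n+1), (Nat.choose n k : ℤ) * |(n:ℤ) - 2*k|
      = 2 * n * Nat.choose (n-1) (n/2) := by
  have hsplit : range (n+1) = Finset.Ico 0 (n/2+1) ∪ Finset.Ico (n/2+1) (n+1) := by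
    rw [Finset.Ico_union_Ico_eq_Ico (by omega) (by omega)]
    rw [Finset.range_eq_Ico]
  have hdisj : Disjoint (Finset.Ico 0 (n/2+1)) (Finset.Ico (n/2+1) (n+1)) := by
    apply Finset.Ico_disjoint_Ico_consecutive
  rw [hsplit, Finset.sum_union hdisj]
  have h1 : ∑ k ∈ Finset.Ico 0 (n/2+1), (Nat.choose n k : ℤ) * |(n:ℤ) - 2*k|
      = ∑ k ∈ Finset.Ico 0 (n/2+1), (Nat.choose n k : ℤ) * ((n:ℤ) - 2*k) := by
    apply Finset.sum_congr rfl
    intro k hk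
    rw [Finset.mem_Ico] at hk
    rw [abs_of_nonneg]
    have h2k : 2*k ≤ n := by omega
    have : (2*(k:ℤ)) ≤ (n:ℤ) := by exact_mod_cast h2k
    linarith
  have h2 : ∑ k ∈ Finset.Ico (n/2+1) (n+1), (Nat.choose n k : ℤ) * |(n:ℤ) - 2*k|
      = - ∑ k ∈ Finset.Ico (n/2+1) (n+1), (Nat.choose n k : ℤ) * ((n:ℤ) - 2*k) := by
    rw [← Finset.sum_neg_distrib]
    apply Finset.sum_congr rfl
    intro k hk
    rw [Finset.mem_Ico] at hk
    rw [abs_of_nonpos]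
    · ring
    have h2k : n + 1 ≤ 2*k := by omega
    have : (n:ℤ) + 1 ≤ 2*(k:ℤ) := by exact_mod_cast h2k
    linarith
  rw [h1, h2]
  have hT1 : ∑ k ∈ Finset.Ico 0 (n/2+1), (Nat.choose n k : ℤ) * ((n:ℤ) - 2*k)
      = n * Nat.choose (n-1) (n/2) := by
    rw [← Finset.range_eq_Ico]
    exact aux_telescope n hn (n/2)
  have hT2 : ∑ k ∈ Finset.Ico 0 (n+1), (Nat.choose n k : ℤ) * ((n:ℤ) - 2*k)
      = n * Nat.choose (n-1) n := by
    rw [← Finset.range_eq_Ico]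
    exact aux_telescope n hn n
  have hzero : Nat.choose (n-1) n = 0 := Nat.choose_eq_zero_of_lt (by omega)
  rw [hzero] at hT2
  have hsum2 : ∑ k ∈ Finset.Ico (n/2+1) (n+1), (Nat.choose n k : ℤ) * ((n:ℤ) - 2*k)
      = - (n * Nat.choose (n-1) (n/2)) := by
    have hco := Finset.sum_Ico_consecutive (fun k => (Nat.choose n k : ℤ) * ((n:ℤ) - 2*k))
      (Nat.zero_le (n/2+1)) (by omega : n/2+1 ≤ n+1)
    rw [hT2] at hco
    rw [← Finset.range_eq_Ico] at hco
    rw [aux_telescope n hn (n/2)] at hco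
    push_cast at hco ⊢
    linarith
  rw [hsum2, hT1]
  ring

lemma aux_real_bound (T : ℕ) (hT : 1 ≤ T) :
    (2:ℝ)^T * Real.sqrt (T/2) ≤ ∑ k ∈ range (T+1), (Nat.choose T k : ℝ) * |(T:ℝ) - 2*k| := by
  set C : ℝ := (Nat.choose (T-1) (T/2) : ℝ) with hC
  have hCnn : 0 ≤ C := Nat.cast_nonneg _
  have hTnn : (0:ℝ) ≤ T := Nat.cast_nonneg _
  have hcast : ∑ k ∈ range (T+1), (Nat.choose T k : ℝ) * |(T:ℝ) - 2*k| = 2 * T * C := by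
    have h := aux_abs_sum T hT
    have h' := congrArg (fun z : ℤ => (z:ℝ)) h
    push_cast at h'
    convert h' using 2
  rw [hcast]
  have h4 : (4:ℝ)^T ≤ 8*T*C^2 := by
    rw [hC]; exact_mod_cast aux_choose_bound T hT
  have hsq : Real.sqrt (T/2) ≤ 2*T*C/2^T := by
    rw [show (2*T*C/2^T : ℝ) = Real.sqrt ((2*T*C/2^T)^2) from (Real.sqrt_sq (by positivity)).symm]
    apply Real.sqrt_le_sqrt
    rw [div_pow, le_div_iff₀ (by positivity)]
    have e : ((2:ℝ)^T)^2 = 4^T := by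
      rw [← pow_mul, mul_comm, pow_mul]; norm_num
    rw [e]
    nlinarith [mul_le_mul_of_nonneg_left h4 (by positivity : (0:ℝ) ≤ (T:ℝ)/2)]
  calc (2:ℝ)^T * Real.sqrt (T/2) ≤ (2:ℝ)^T * (2*T*C/2^T) :=
        mul_le_mul_of_nonneg_left hsq (by positivity)
    _ = 2*T*C := by field_simp

/-- The canonical bijection between boolean functions on `Fin T` and subsets of `Fin T`. -/
def boolFinsetEquiv (T : ℕ) : (Fin T → Bool) ≃ Finset (Fin T) where
  toFun σ := univ.filter (fun i => σ i = true)
  invFun A := fun i => decide (i ∈ A)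
  left_inv σ := by funext i; simp
  right_inv A := by ext i; simp

lemma aux_group (T : ℕ) (f : ℕ → ℝ) :
    ∑ σ : Fin T → Bool, f #(univ.filter (fun i => σ i = true))
      = ∑ k ∈ range (T+1), (Nat.choose T k : ℝ) * f k := by
  rw [Fintype.sum_equiv (boolFinsetEquiv T)
    (fun σ => f #(univ.filter (fun i => σ i = true))) (fun A => f #A) (fun σ => rfl)]
  rw [← Finset.powerset_univ, Finset.sum_powerset_apply_card]
  simp [nsmul_eq_mul]

end AuxNumeric

section AuxAnalytic

lemma aux_integral {V : Type*} [NormedAddCommGroup V] [NormedSpace ℝ V]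
    [MeasurableSpace V] [BorelSpace V]
    (μ : Measure ↥(Metric.closedBall (0:V) 1)) [IsProbabilityMeasure μ]
    (a b : ↥(Metric.closedBall (0:V) 1)) :
    ‖(a:V) - b‖ ≤ (∫ z, ‖(a:V) - z‖ ∂μ) + ∫ z, ‖(b:V) - z‖ ∂μ := by
  have hnorm : ∀ y : ↥(Metric.closedBall (0:V) 1), ‖(y:V)‖ ≤ 1 := by
    intro y
    have := y.2
    rwa [Metric.mem_closedBall, dist_zero_right] at this
  have hint : ∀ y : ↥(Metric.closedBall (0:V) 1),
      Integrable (fun z : ↥(Metric.closedBall (0:V) 1) => ‖(y:V) - z‖) μ := by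
    intro y
    apply (integrable_const (2:ℝ)).mono'
    · exact (Continuous.norm (continuous_const.sub continuous_subtype_val)).aestronglyMeasurable
    · filter_upwards with z
      rw [Real.norm_eq_abs, abs_of_nonneg (norm_nonneg _)]
      calc ‖(y:V) - z‖ ≤ ‖(y:V)‖ + ‖(z:V)‖ := norm_sub_le _ _
        _ ≤ 2 := by linarith [hnorm y, hnorm z]
  calc ‖(a:V) - b‖ = ∫ _z, ‖(a:V) - b‖ ∂μ := by simp
    _ ≤ ∫ z, (‖(a:V) - z‖ + ‖(b:V) - z‖) ∂μ := by
        apply integral_mono (integrable_const _) ((hint a).add (hint b))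
        intro z
        calc ‖(a:V) - b‖ = ‖((a:V) - z) + ((z:V) - b)‖ := by rw [sub_add_sub_cancel]
          _ ≤ ‖(a:V) - z‖ + ‖(z:V) - b‖ := norm_add_le _ _
          _ = ‖(a:V) - z‖ + ‖(b:V) - z‖ := by rw [norm_sub_rev (z:V)]
    _ = (∫ z, ‖(a:V) - z‖ ∂μ) + ∫ z, ‖(b:V) - z‖ ∂μ := integral_add (hint a) (hint b)

end AuxAnalytic

section AuxStream

/-- The stream supported on the single instance `x` with labels chosen among `a`, `b`
according to the sign pattern `σ`. -/
def bstr {X : Type*} {W : Type*} (x : X) (a b : W) {T : ℕ} (σ : Fin T → Bool) :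
    Fin T → X × W := fun t => (x, if σ t then a else b)

lemma flip_invol {T : ℕ} (t : Fin T) :
    Function.Involutive (fun σ : Fin T → Bool => Function.update σ t (!σ t)) := by
  intro σ
  funext i
  rcases eq_or_ne i t with rfl | h
  · simp
  · simp [Function.update_of_ne h]

lemma bstr_take {X W : Type*} (x : X) (a b : W) {T : ℕ} (σ : Fin T → Bool) (t : Fin T) :
    (List.ofFn (bstr x a b (Function.update σ t (!σ t)))).take t.1
      = (List.ofFn (bstr x a b σ)).take t.1 := by
  apply List.ext_getElem
  · simp
  · intro n h1 h2
    simp only [List.getElem_take, List.getElem_ofFn] at *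
    simp only [List.length_take, List.length_ofFn, lt_min_iff] at h1
    have hne : (⟨n, by omega⟩ : Fin T) ≠ t := by
      intro hcontra
      have := congrArg Fin.val hcontra
      simp at this
      omega
    simp only [bstr, Function.update_of_ne hne]

end AuxStream

/-- vector-valued regression lower bound. Let `Y = Z` be the closed unit
ball of a real normed space `V` with loss `ℓ(y,z) = ‖y − z‖`. If two hypotheses
`h₋₁, h₊₁ ∈ H` differ at some `x` with `η = ‖h₋₁(x) − h₊₁(x)‖ > 0`, then every online
learner suffers expected regret at least `η·√(T/8)` on some stream of length `T`
supported on `x` with labels among `{h₋₁(x), h₊₁(x)}`. -/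
theorem statement11 {X : Type*} [Nonempty X]
    {V : Type*} [NormedAddCommGroup V] [NormedSpace ℝ V]
    [MeasurableSpace V] [BorelSpace V]
    (H : Set (X → Metric.closedBall (0 : V) 1)) (hH : H.Nonempty)
    (hm hp : X → Metric.closedBall (0 : V) 1) (hmH : hm ∈ H) (hpH : hp ∈ H)
    (x : X) (hη : 0 < ‖(hm x : V) - (hp x : V)‖) :
    ∀ A : List (X × Metric.closedBall (0 : V) 1) → X →
        ProbabilityMeasure (Metric.closedBall (0 : V) 1),
      ∀ T : ℕ, 1 ≤ T →
        ∃ s : Fin T → X × Metric.closedBall (0 : V) 1,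
          (∀ t, (s t).1 = x ∧ ((s t).2 = hm x ∨ (s t).2 = hp x)) ∧
          ‖(hm x : V) - (hp x : V)‖ * Real.sqrt (T / 8) ≤
            expectedRegret H
              (fun (y z : Metric.closedBall (0 : V) 1) => ‖(y : V) - (z : V)‖) A s := by
  intro A T hT
  classical
  set a : ↥(Metric.closedBall (0 : V) 1) := hm x with ha
  set b : ↥(Metric.closedBall (0 : V) 1) := hp x with hb
  set η : ℝ := ‖(a : V) - (b : V)‖ with hηdef
  have hηnn : 0 ≤ η := norm_nonneg _
  -- the regret on the stream determined by sign pattern σ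
  set R : (Fin T → Bool) → ℝ := fun σ =>
    expectedRegret H (fun (y z : Metric.closedBall (0 : V) 1) => ‖(y : V) - (z : V)‖) A
      (bstr x a b σ) with hR
  set cnt : (Fin T → Bool) → ℕ := fun σ => #(univ.filter (fun i => σ i = true)) with hcnt
  set F : (Fin T → Bool) → Fin T → ℝ := fun σ t =>
    ∫ z, ‖(((bstr x a b σ t).2 : ↥(Metric.closedBall (0 : V) 1)) : V) - (z : V)‖
      ∂(A ((List.ofFn (bstr x a b σ)).take t.1) ((bstr x a b σ t).1) :
        Measure ↥(Metric.closedBall (0 : V) 1)) with hF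
  set I : (Fin T → Bool) → ℝ := fun σ =>
    ⨅ h : H, ∑ t : Fin T,
      ‖(((bstr x a b σ t).2 : ↥(Metric.closedBall (0 : V) 1)) : V)
        - (((h : X → ↥(Metric.closedBall (0 : V) 1)) ((bstr x a b σ t).1) :
            ↥(Metric.closedBall (0 : V) 1)) : V)‖ with hI
  have hreg : ∀ σ, R σ = (∑ t : Fin T, F σ t) - I σ := by
    intro σ
    simp only [hR, hF, hI, expectedRegret]
  have hcnt_le : ∀ σ, cnt σ ≤ T := by
    intro σ
    simpa using Finset.card_filter_le univ (fun i => σ i = true)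
  -- comparator bound
  have hInf : ∀ σ, I σ ≤ η / 2 * ((T:ℝ) - |(T:ℝ) - 2 * cnt σ|) := by
    intro σ
    have hbdd : BddBelow (Set.range fun h : H => ∑ t : Fin T,
        ‖(((bstr x a b σ t).2 : ↥(Metric.closedBall (0 : V) 1)) : V)
          - (((h : X → ↥(Metric.closedBall (0 : V) 1)) ((bstr x a b σ t).1) :
              ↥(Metric.closedBall (0 : V) 1)) : V)‖) := by
      refine ⟨0, ?_⟩
      rintro r ⟨h, rfl⟩
      positivity
    have hcard : #(univ.filter (fun i => ¬ σ i = true)) = T - cnt σ := by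
      rw [Finset.filter_not, Finset.card_sdiff_of_subset (Finset.filter_subset _ _)]
      simp [hcnt]
    have hm' : I σ ≤ ((T:ℝ) - cnt σ) * η := by
      refine le_trans (ciInf_le hbdd (⟨hm, hmH⟩ : H)) (le_of_eq ?_)
      have hterm : ∀ t : Fin T,
          ‖(((bstr x a b σ t).2 : ↥(Metric.closedBall (0 : V) 1)) : V)
            - (((hm : X → ↥(Metric.closedBall (0 : V) 1)) ((bstr x a b σ t).1) :
                ↥(Metric.closedBall (0 : V) 1)) : V)‖ = if σ t then 0 else η := by
        intro t
        have e1 : (bstr x a b σ t).1 = x := rfl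
        rcases Bool.eq_false_or_eq_true (σ t) with h | h
        · have e2 : (bstr x a b σ t).2 = a := by simp [bstr, h]
          rw [e1, e2, h]
          simp [ha]
        · have e2 : (bstr x a b σ t).2 = b := by simp [bstr, h]
          rw [e1, e2, h]
          show ‖(b : V) - ((hm x : ↥(Metric.closedBall (0 : V) 1)) : V)‖ = η
          rw [← ha, norm_sub_rev, ← hηdef]
      rw [Finset.sum_congr rfl (fun t _ => hterm t)]
      rw [Finset.sum_ite, Finset.sum_const, Finset.sum_const]
      rw [hcard]
      have : ((T - cnt σ : ℕ) : ℝ) = (T:ℝ) - cnt σ := by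
        rw [Nat.cast_sub (hcnt_le σ)]
      simp [this]
    have hp' : I σ ≤ (cnt σ : ℝ) * η := by
      refine le_trans (ciInf_le hbdd (⟨hp, hpH⟩ : H)) (le_of_eq ?_)
      have hterm : ∀ t : Fin T,
          ‖(((bstr x a b σ t).2 : ↥(Metric.closedBall (0 : V) 1)) : V)
            - (((hp : X → ↥(Metric.closedBall (0 : V) 1)) ((bstr x a b σ t).1) :
                ↥(Metric.closedBall (0 : V) 1)) : V)‖ = if σ t then η else 0 := by
        intro t
        have e1 : (bstr x a b σ t).1 = x := rfl
        rcases Bool.eq_false_or_eq_true (σ t) with h | h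
        · have e2 : (bstr x a b σ t).2 = a := by simp [bstr, h]
          rw [e1, e2, h]
          show ‖(a : V) - ((hp x : ↥(Metric.closedBall (0 : V) 1)) : V)‖ = η
          rw [← hb, ← hηdef]
        · have e2 : (bstr x a b σ t).2 = b := by simp [bstr, h]
          rw [e1, e2, h]
          simp [hb]
      rw [Finset.sum_congr rfl (fun t _ => hterm t)]
      rw [Finset.sum_ite, Finset.sum_const, Finset.sum_const]
      simp [hcnt, mul_comm]
    have hcle : (cnt σ : ℝ) ≤ (T:ℝ) := by exact_mod_cast hcnt_le σ
    rcases le_total (2*(cnt σ : ℝ)) (T:ℝ) with hh | hh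
    · rw [abs_of_nonneg (by linarith)]
      calc I σ ≤ (cnt σ : ℝ) * η := hp'
        _ = η / 2 * ((T:ℝ) - ((T:ℝ) - 2 * cnt σ)) := by ring
    · rw [abs_of_nonpos (by linarith)]
      calc I σ ≤ ((T:ℝ) - cnt σ) * η := hm'
        _ = η / 2 * ((T:ℝ) - -((T:ℝ) - 2 * cnt σ)) := by ring
  -- learner bound
  have hpair : ∀ (t : Fin T) (σ : Fin T → Bool),
      η ≤ F σ t + F (Function.update σ t (!σ t)) t := by
    intro t σ
    have hhist : (List.ofFn (bstr x a b (Function.update σ t (!σ t)))).take t.1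
        = (List.ofFn (bstr x a b σ)).take t.1 := bstr_take x a b σ t
    rcases Bool.eq_false_or_eq_true (σ t) with hcase | hcase
    · have h1 : F σ t = ∫ z, ‖(a : V) - (z : V)‖
          ∂(A ((List.ofFn (bstr x a b σ)).take t.1) x :
            Measure ↥(Metric.closedBall (0 : V) 1)) := by
        simp [hF, bstr, hcase]
      have h2 : F (Function.update σ t (!σ t)) t = ∫ z, ‖(b : V) - (z : V)‖
          ∂(A ((List.ofFn (bstr x a b σ)).take t.1) x :
            Measure ↥(Metric.closedBall (0 : V) 1)) := by
        simp only [hF]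
        rw [hhist]
        simp [bstr, Function.update_self, hcase]
      rw [h1, h2, hηdef]
      exact aux_integral _ a b
    · have h1 : F σ t = ∫ z, ‖(b : V) - (z : V)‖
          ∂(A ((List.ofFn (bstr x a b σ)).take t.1) x :
            Measure ↥(Metric.closedBall (0 : V) 1)) := by
        simp [hF, bstr, hcase]
      have h2 : F (Function.update σ t (!σ t)) t = ∫ z, ‖(a : V) - (z : V)‖
          ∂(A ((List.ofFn (bstr x a b σ)).take t.1) x :
            Measure ↥(Metric.closedBall (0 : V) 1)) := by
        simp only [hF]
        rw [hhist]
        simp [bstr, Function.update_self, hcase]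
      rw [h1, h2, hηdef, norm_sub_rev]
      exact aux_integral (A ((List.ofFn (bstr x a b σ)).take t.1) x :
        Measure ↥(Metric.closedBall (0 : V) 1)) b a
  have hL : ∀ t : Fin T, (2:ℝ)^T * η ≤ 2 * ∑ σ : Fin T → Bool, F σ t := by
    intro t
    have hre : ∑ σ : Fin T → Bool, F (Function.update σ t (!σ t)) t
        = ∑ σ : Fin T → Bool, F σ t :=
      Fintype.sum_bijective _ (flip_invol t).bijective _ _ (fun σ => rfl)
    have hcard : (Finset.univ : Finset (Fin T → Bool)).card = 2^T := by
      simp [Finset.card_univ]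
    calc (2:ℝ)^T * η = ∑ _σ : Fin T → Bool, η := by
          rw [Finset.sum_const, hcard]
          simp [nsmul_eq_mul]
      _ ≤ ∑ σ : Fin T → Bool, (F σ t + F (Function.update σ t (!σ t)) t) :=
          Finset.sum_le_sum (fun σ _ => hpair t σ)
      _ = 2 * ∑ σ : Fin T → Bool, F σ t := by
          rw [Finset.sum_add_distrib, hre]; ring
  -- total bound
  have hgroup : ∑ σ : Fin T → Bool, |(T:ℝ) - 2 * cnt σ|
      = ∑ k ∈ range (T+1), (Nat.choose T k : ℝ) * |(T:ℝ) - 2*k| := by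
    simpa [hcnt] using aux_group T (fun k => |(T:ℝ) - 2 * k|)
  have habs : (2:ℝ)^T * Real.sqrt ((T:ℝ)/2) ≤ ∑ σ : Fin T → Bool, |(T:ℝ) - 2 * cnt σ| := by
    rw [hgroup]
    exact aux_real_bound T hT
  have hs8 : Real.sqrt ((T:ℝ)/8) = Real.sqrt ((T:ℝ)/2) / 2 := by
    rw [show ((T:ℝ)/8) = ((T:ℝ)/2)/4 by ring]
    rw [show (4:ℝ) = 2^2 by norm_num]
    rw [Real.sqrt_div (by positivity)]
    rw [Real.sqrt_sq (by norm_num)]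
  have hcard2 : (Finset.univ : Finset (Fin T → Bool)).card = 2^T := by
    simp [Finset.card_univ]
  have hsum : (2:ℝ)^T * (η * Real.sqrt ((T:ℝ)/8)) ≤ ∑ σ : Fin T → Bool, R σ := by
    have hLsum : (T:ℝ) * ((2:ℝ)^T * η) / 2 ≤ ∑ σ : Fin T → Bool, ∑ t : Fin T, F σ t := by
      rw [Finset.sum_comm]
      have hone : ∀ t : Fin T, (2:ℝ)^T * η / 2 ≤ ∑ σ : Fin T → Bool, F σ t := by
        intro t
        have := hL t
        linarith
      calc (T:ℝ) * ((2:ℝ)^T * η) / 2 = ∑ _t : Fin T, (2:ℝ)^T * η / 2 := by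
            rw [Finset.sum_const]
            simp only [Finset.card_univ, Fintype.card_fin, nsmul_eq_mul]
            ring
        _ ≤ ∑ t : Fin T, ∑ σ : Fin T → Bool, F σ t := Finset.sum_le_sum (fun t _ => hone t)
    have hIsum : ∑ σ : Fin T → Bool, I σ
        ≤ η/2 * ((2:ℝ)^T * (T:ℝ)) - η/2 * ∑ σ : Fin T → Bool, |(T:ℝ) - 2 * cnt σ| := by
      calc ∑ σ : Fin T → Bool, I σ
          ≤ ∑ σ : Fin T → Bool, (η / 2 * ((T:ℝ) - |(T:ℝ) - 2 * cnt σ|)) :=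
            Finset.sum_le_sum (fun σ _ => hInf σ)
        _ = η/2 * ((2:ℝ)^T * (T:ℝ)) - η/2 * ∑ σ : Fin T → Bool, |(T:ℝ) - 2 * cnt σ| := by
            rw [← Finset.mul_sum, Finset.sum_sub_distrib, Finset.sum_const, hcard2]
            push_cast
            ring
    have heq : (T:ℝ) * ((2:ℝ)^T * η) / 2 = η/2 * ((2:ℝ)^T * (T:ℝ)) := by ring
    calc (2:ℝ)^T * (η * Real.sqrt ((T:ℝ)/8))
        = η/2 * ((2:ℝ)^T * Real.sqrt ((T:ℝ)/2)) := by rw [hs8]; ring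
      _ ≤ η/2 * ∑ σ : Fin T → Bool, |(T:ℝ) - 2 * cnt σ| := by
          apply mul_le_mul_of_nonneg_left habs (by positivity)
      _ ≤ (∑ σ : Fin T → Bool, ∑ t : Fin T, F σ t) - ∑ σ : Fin T → Bool, I σ := by
          linarith [hLsum, hIsum, heq]
      _ = ∑ σ : Fin T → Bool, R σ := by
          rw [← Finset.sum_sub_distrib]
          exact Finset.sum_congr rfl (fun σ _ => (hreg σ).symm)
  have hne : (Finset.univ : Finset (Fin T → Bool)).Nonempty := Finset.univ_nonempty
  have hconst : ∑ _σ : Fin T → Bool, (η * Real.sqrt ((T:ℝ)/8)) ≤ ∑ σ : Fin T → Bool, R σ := by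
    rw [Finset.sum_const, hcard2]
    refine le_trans (le_of_eq ?_) hsum
    push_cast
    ring
  obtain ⟨σ, _, hσ⟩ := Finset.exists_le_of_sum_le hne hconst
  refine ⟨bstr x a b σ, ?_, hσ⟩
  intro t
  refine ⟨rfl, ?_⟩
  rcases Bool.eq_false_or_eq_true (σ t) with h | h
  · left; simp [bstr, h, ha]
  · right; simp [bstr, h, hb]
end
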